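/- arXiv:2208.11528 — 3 statements merged into one kernel-verified Lean document; each statement's English description precedes it below -/
import Mathlib

section
/- Let f be an excursion and ε ∈ (0,1). Then sup_{s,t∈[0,1]} |d_L[f](s,t) − d_L[J^ε f](s,t)| ≤ 2·sup_{t∈[0,1]} |Jf(t) − J^ε f(t)|. -/
open Set Filter Topology
open scoped Classical

noncomputable section

/-- Left limit of `f` at `t`, with the convention `f(0−) = 0`. -/
def lm (f : ℝ → ℝ) (t : ℝ) : ℝ := if t = 0 then 0 else Function.leftLim f t

/-- The jump `Δ_t(f) = f t − f(t−)`. -/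
def jump (f : ℝ → ℝ) (t : ℝ) : ℝ := f t - lm f t

/-- `inf_{[s,t]} f`. -/
def infIcc (f : ℝ → ℝ) (s t : ℝ) : ℝ := sInf (f '' Icc s t)

/-- An excursion: a càdlàg function on `[0,1]`, nonnegative, vanishing at `1` (and
extended by `0` outside `[0,1]`), all of whose jumps are nonnegative. -/
structure IsExcursion (f : ℝ → ℝ) : Prop where
  nonneg : ∀ t ∈ Icc (0:ℝ) 1, 0 ≤ f t
  zero_outside : ∀ t, t ∉ Icc (0:ℝ) 1 → f t = 0
  rightCont : ∀ t ∈ Ico (0:ℝ) 1, Tendsto f (𝓝[>] t) (𝓝 (f t))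
  leftLimEx : ∀ t ∈ Ioc (0:ℝ) 1, Tendsto f (𝓝[<] t) (𝓝 (Function.leftLim f t))
  one : f 1 = 0
  jump_nonneg : ∀ t ∈ Icc (0:ℝ) 1, 0 ≤ jump f t

/-- The genealogical relation `s ⪯_f t` : `s ≤ t` and `f(s−) ≤ inf_{[s,t]} f`. -/
def pre (f : ℝ → ℝ) (s t : ℝ) : Prop := s ≤ t ∧ lm f s ≤ infIcc f s t

/-- `x_s^t(f) = 1_{s ≤ t} · max(inf_{[s,t]} f − f(s−), 0)`. -/
def xst (f : ℝ → ℝ) (s t : ℝ) : ℝ := if s ≤ t then max (infIcc f s t - lm f s) 0 else 0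

/-- The most recent common ancestor `s ∧_f t`. -/
def mrca (f : ℝ → ℝ) (s t : ℝ) : ℝ := sSup {r : ℝ | 0 ≤ r ∧ pre f r s ∧ pre f r t}

/-- `δ_t(a,b) = min(|a−b|, Δ_t(f) − |a−b|)`, the circle pseudo-distance on `[0, Δ_t(f)]`. -/
def cdel (f : ℝ → ℝ) (t a b : ℝ) : ℝ := min |a - b| (jump f t - |a - b|)

/-- `d_O(s,t) = ∑_{s ≺_f r ⪯_f t} δ_r(0, x_r^t)`. -/
def dO (f : ℝ → ℝ) (s t : ℝ) : ℝ :=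
  ∑' r : ℝ, if pre f s r ∧ s < r ∧ pre f r t then cdel f r 0 (xst f r t) else 0

/-- `d_T(s,t) = f t − inf_{[s,t]} f − ∑_{s ≺_f r ⪯_f t} x_r^t`, intended for `s ⪯_f t`. -/
def dTanc (f : ℝ → ℝ) (s t : ℝ) : ℝ :=
  f t - infIcc f s t - ∑' r : ℝ, if pre f s r ∧ s < r ∧ pre f r t then xst f r t else 0

/-- The looptree pseudo-distance `d_L[f]`. -/
def dL (f : ℝ → ℝ) (s t : ℝ) : ℝ :=
  cdel f (mrca f s t) (xst f (mrca f s t) s) (xst f (mrca f s t) t)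
    + dO f (mrca f s t) s + dO f (mrca f s t) t

/-- The tree pseudo-distance `d_T[f]`. -/
def dT (f : ℝ → ℝ) (s t : ℝ) : ℝ := dTanc f (mrca f s t) s + dTanc f (mrca f s t) t

/-- The vernation pseudo-distance `d_V[f] = d_T[f] + 2·d_L[f]`. -/
def dV (f : ℝ → ℝ) (s t : ℝ) : ℝ := dT f s t + 2 * dL f s t

/-- `Jf(t) = ∑_{r ⪯_f t} x_r^t(f)`. -/
def Jop (f : ℝ → ℝ) (t : ℝ) : ℝ := ∑' r : ℝ, if pre f r t then xst f r t else 0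

/-- `J^ε f(t) = ∑_{r ⪯_f t, Δ_r(f) ≥ ε} x_r^t(f)`. -/
def Jeps (f : ℝ → ℝ) (ε : ℝ) (t : ℝ) : ℝ :=
  ∑' r : ℝ, if pre f r t ∧ ε ≤ jump f r then xst f r t else 0

/-- Pure jump growth (PJG) excursion: `f(t) = ∑_{r ⪯_f t} x_r^t(f)` on `[0,1]`. -/
def IsPJG (f : ℝ → ℝ) : Prop := ∀ t ∈ Icc (0:ℝ) 1, f t = Jop f t

/-- An increasing bijection from `[0,1]` onto itself. -/
def IncBij (l : ℝ → ℝ) : Prop :=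
  StrictMonoOn l (Icc (0:ℝ) 1) ∧ Set.BijOn l (Icc (0:ℝ) 1) (Icc (0:ℝ) 1)

/-- The Skorokhod distance `ρ` on functions `[0,1] → ℝ`. -/
def skor (f g : ℝ → ℝ) : ℝ :=
  sInf {c : ℝ | 0 ≤ c ∧ ∃ l : ℝ → ℝ, IncBij l ∧
    ∀ x ∈ Icc (0:ℝ) 1, |l x - x| ≤ c ∧ |f x - g (l x)| ≤ c}

set_option linter.unusedSectionVars false
set_option linter.unusedVariables false
namespace S13

open Function

/-- `inf_{[s,t)} f`. -/
noncomputable def infIco (f : ℝ → ℝ) (s t : ℝ) : ℝ := sInf (f '' Ico s t)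

/-- A "regular" nonnegative function: what we need of both `f` and `Jeps f ε`. -/
structure Reg (φ : ℝ → ℝ) : Prop where
  nonneg : ∀ x, 0 ≤ φ x
  vanish : ∀ x, x ∉ Icc (0:ℝ) 1 → φ x = 0
  tendstoL : ∀ r : ℝ, r ≠ 0 → Tendsto φ (𝓝[<] r) (𝓝 (lm φ r))
  jumpnn : ∀ r, 0 ≤ jump φ r

section Generic

variable {φ : ℝ → ℝ} (h0 : ∀ x, 0 ≤ φ x)

include h0

lemma bddBelow_img (S : Set ℝ) : BddBelow (φ '' S) := by
  refine ⟨0, fun y hy => ?_⟩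
  rcases hy with ⟨x, -, rfl⟩
  exact h0 x

lemma infIcc_nonneg (a b : ℝ) : 0 ≤ infIcc φ a b := by
  rcases isEmpty_or_nonempty (Icc a b) with h | h
  · have : φ '' Icc a b = ∅ := by
      simp [Set.image_eq_empty, Set.isEmpty_coe_sort.mp h]
    simp [infIcc, this, Real.sInf_empty]
  · refine le_csInf ?_ ?_
    · exact (Set.nonempty_coe_sort.mp ⟨h.some⟩).image φ
    · rintro y ⟨x, -, rfl⟩; exact h0 x

lemma infIco_nonneg (a b : ℝ) : 0 ≤ infIco φ a b := by
  rcases (Ico a b).eq_empty_or_nonempty with h | h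
  · simp [infIco, h, Real.sInf_empty]
  · refine le_csInf (h.image φ) ?_
    rintro y ⟨x, -, rfl⟩; exact h0 x

lemma infIcc_le {a b y : ℝ} (hy : y ∈ Icc a b) : infIcc φ a b ≤ φ y :=
  csInf_le (bddBelow_img h0 _) ⟨y, hy, rfl⟩

lemma infIco_le {a b y : ℝ} (hy : y ∈ Ico a b) : infIco φ a b ≤ φ y :=
  csInf_le (bddBelow_img h0 _) ⟨y, hy, rfl⟩

lemma le_infIcc {a b c : ℝ} (hab : a ≤ b) (h : ∀ y ∈ Icc a b, c ≤ φ y) :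
    c ≤ infIcc φ a b :=
  le_csInf (((Set.nonempty_Icc).2 hab).image φ) (by rintro y ⟨x, hx, rfl⟩; exact h x hx)

lemma le_infIco {a b c : ℝ} (hab : a < b) (h : ∀ y ∈ Ico a b, c ≤ φ y) :
    c ≤ infIco φ a b :=
  le_csInf (((Set.nonempty_Ico).2 hab).image φ) (by rintro y ⟨x, hx, rfl⟩; exact h x hx)

lemma sInf_le_sInf_img {S T : Set ℝ} (hST : S ⊆ T) (hS : S.Nonempty) :
    sInf (φ '' T) ≤ sInf (φ '' S) :=
  csInf_le_csInf (bddBelow_img h0 _) (hS.image φ) (Set.image_mono hST)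

lemma infIcc_anti {a a' b b' : ℝ} (h1 : a' ≤ a) (h2 : b ≤ b') (hab : a ≤ b) :
    infIcc φ a' b' ≤ infIcc φ a b :=
  sInf_le_sInf_img h0 (Set.Icc_subset_Icc h1 h2) ((Set.nonempty_Icc).2 hab)

lemma infIcc_le_infIco {a b b' : ℝ} (h2 : b ≤ b') (hab : a < b) :
    infIcc φ a b' ≤ infIco φ a b :=
  sInf_le_sInf_img h0 (fun x hx => ⟨hx.1, (hx.2.trans_le h2).le⟩) ((Set.nonempty_Ico).2 hab)

lemma infIco_anti_right {a b b' : ℝ} (h2 : b ≤ b') (hab : a < b) :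
    infIco φ a b' ≤ infIco φ a b :=
  sInf_le_sInf_img h0 (fun x hx => ⟨hx.1, hx.2.trans_le h2⟩) ((Set.nonempty_Ico).2 hab)

lemma infIco_le_infIcc {a b b' : ℝ} (h2 : b' ≤ b) (hab : a ≤ b') (hbb : b' < b) :
    infIco φ a b ≤ infIcc φ a b' :=
  sInf_le_sInf_img h0 (fun x hx => ⟨hx.1, lt_of_le_of_lt hx.2 hbb⟩) ((Set.nonempty_Icc).2 hab)

lemma infIcc_union {a r b : ℝ} (har : a ≤ r) (hrb : r ≤ b) :
    infIcc φ a b = min (infIcc φ a r) (infIcc φ r b) := by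
  apply le_antisymm
  · rcases le_total (infIcc φ a r) (infIcc φ r b) with h | h
    · rw [min_eq_left h]
      exact sInf_le_sInf_img h0 (Set.Icc_subset_Icc le_rfl hrb) ((Set.nonempty_Icc).2 har)
    · rw [min_eq_right h]
      exact sInf_le_sInf_img h0 (Set.Icc_subset_Icc har le_rfl) ((Set.nonempty_Icc).2 hrb)
  · refine le_infIcc h0 (har.trans hrb) fun y hy => ?_
    rcases le_total y r with h | h
    · exact (min_le_left _ _).trans (infIcc_le h0 ⟨hy.1, h⟩)
    · exact (min_le_right _ _).trans (infIcc_le h0 ⟨h, hy.2⟩)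

/-- Left-limit of `w ↦ infIcc φ a w` at `b` is `infIco φ a b`. -/
lemma tendsto_infIcc_left {a b : ℝ} (hab : a < b) :
    Tendsto (fun w => infIcc φ a w) (𝓝[<] b) (𝓝 (infIco φ a b)) := by
  rw [tendsto_order]
  constructor
  · intro c hc
    filter_upwards [Ioo_mem_nhdsLT_of_mem (show b ∈ Ioc a b from ⟨hab, le_rfl⟩)] with w hw
    refine lt_of_lt_of_le hc (le_infIcc h0 (le_of_lt hw.1) fun y hy => ?_)
    exact infIco_le h0 ⟨hy.1, lt_of_le_of_lt hy.2 hw.2⟩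
  · intro c hc
    obtain ⟨y, ⟨x, hx, rfl⟩, hyc⟩ := exists_lt_of_csInf_lt
      (((Set.nonempty_Ico).2 hab).image φ) hc
    filter_upwards [Ioo_mem_nhdsLT_of_mem (show b ∈ Ioc x b from ⟨hx.2, le_rfl⟩)] with w hw
    exact lt_of_le_of_lt (infIcc_le h0 ⟨hx.1, hw.1.le⟩) hyc

end Generic

end S13
set_option linter.unusedSectionVars false
set_option linter.unusedVariables false
namespace S13

open Function

section RegLemmas

variable {φ : ℝ → ℝ} (hr : Reg φ)

lemma lm_zero (ψ : ℝ → ℝ) : lm ψ 0 = 0 := if_pos rfl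

lemma lm_eq_leftLim {ψ : ℝ → ℝ} {r : ℝ} (h : r ≠ 0) : lm ψ r = leftLim ψ r := if_neg h

lemma xst_nonneg' (ψ : ℝ → ℝ) (r u : ℝ) : 0 ≤ xst ψ r u := by
  unfold xst; split
  · exact le_max_right _ _
  · exact le_rfl

include hr

lemma lm_nonneg (r : ℝ) : 0 ≤ lm φ r := by
  rcases eq_or_ne r 0 with rfl | h
  · rw [lm_zero]
  · rw [lm_eq_leftLim h]
    have := hr.tendstoL r h
    rw [lm_eq_leftLim h] at this
    exact ge_of_tendsto this (Filter.Eventually.of_forall fun w => hr.nonneg w)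

lemma lm_le_self (r : ℝ) : lm φ r ≤ φ r := by
  have := hr.jumpnn r; unfold jump at this; linarith

lemma infIco_le_lm {a r : ℝ} (har : a < r) : infIco φ a r ≤ lm φ r := by
  rcases eq_or_ne r 0 with rfl | h
  · rw [lm_zero]
    have himg : φ '' Ico a 0 = {0} := by
      apply Set.Subset.antisymm
      · rintro y ⟨x, hx, rfl⟩
        simp [hr.vanish x (fun hc => absurd (hc.1.trans_lt hx.2) (lt_irrefl 0))]
      · rintro y rfl
        refine ⟨a, ⟨le_rfl, har⟩, hr.vanish a fun hc => absurd (hc.1.trans_lt har) (lt_irrefl 0)⟩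
    rw [infIco, himg, csInf_singleton]
  · rw [lm_eq_leftLim h]
    have ht := hr.tendstoL r h
    rw [lm_eq_leftLim h] at ht
    refine ge_of_tendsto ht ?_
    filter_upwards [Ioo_mem_nhdsLT_of_mem (show r ∈ Ioc a r from ⟨har, le_rfl⟩)] with w hw
    exact infIco_le hr.nonneg ⟨hw.1.le, hw.2⟩

lemma infIcc_le_lm {a b r : ℝ} (har : a < r) (hrb : r ≤ b) : infIcc φ a b ≤ lm φ r :=
  (infIcc_le_infIco hr.nonneg hrb har).trans (infIco_le_lm hr har)

lemma infIcc_eq_infIco {a r : ℝ} (har : a < r) : infIcc φ a r = infIco φ a r := by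
  apply le_antisymm
  · exact sInf_le_sInf_img hr.nonneg Set.Ico_subset_Icc_self ((Set.nonempty_Ico).2 har)
  · refine le_infIcc hr.nonneg har.le fun y hy => ?_
    rcases lt_or_eq_of_le hy.2 with h | h
    · exact infIco_le hr.nonneg ⟨hy.1, h⟩
    · subst h; exact (infIco_le_lm hr har).trans (lm_le_self hr y)

lemma infIcc_self (r : ℝ) : infIcc φ r r = φ r := by
  rw [infIcc, Set.Icc_self, Set.image_singleton, csInf_singleton]

lemma pre_self (r : ℝ) : pre φ r r :=
  ⟨le_rfl, by rw [infIcc_self hr]; exact lm_le_self hr r⟩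

lemma pre_zero {u : ℝ} (hu : 0 ≤ u) : pre φ 0 u :=
  ⟨hu, by rw [lm_zero]; exact infIcc_nonneg hr.nonneg _ _⟩

lemma pre_down {a r u : ℝ} (hau : pre φ a u) (hru : pre φ r u) (har : a ≤ r) : pre φ a r :=
  ⟨har, hau.2.trans (infIcc_anti hr.nonneg le_rfl hru.1 har)⟩

lemma pre_trans {q r u : ℝ} (h1 : pre φ q r) (h2 : pre φ r u) : pre φ q u := by
  refine ⟨h1.1.trans h2.1, ?_⟩
  rcases eq_or_lt_of_le h1.1 with rfl | hqr
  · exact h2.2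
  · rw [infIcc_union hr.nonneg h1.1 h2.1]
    refine le_min h1.2 (h1.2.trans ?_)
    calc infIcc φ q r ≤ lm φ r := infIcc_le_lm hr hqr le_rfl
    _ ≤ infIcc φ r u := h2.2

lemma xst_of_pre {r u : ℝ} (h : pre φ r u) : xst φ r u = infIcc φ r u - lm φ r := by
  rw [xst, if_pos h.1, max_eq_left (by linarith [h.2])]

lemma xst_le_jump {r u : ℝ} (h : pre φ r u) : xst φ r u ≤ jump φ r := by
  rw [xst_of_pre hr h, jump]
  have : infIcc φ r u ≤ φ r := infIcc_le hr.nonneg ⟨le_rfl, h.1⟩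
  linarith

/-- The supremum of a set of ancestors of `u` is an ancestor of `u`. -/
lemma pre_csSup {T : Set ℝ} {u : ℝ} (hne : T.Nonempty) (hb : BddAbove T)
    (hT : ∀ r ∈ T, 0 ≤ r ∧ pre φ r u) (hu : sSup T ≤ u) : pre φ (sSup T) u := by
  set m := sSup T with hm
  refine ⟨hu, ?_⟩
  by_contra hcon
  push_neg at hcon
  obtain ⟨r0, hr0⟩ := id hne
  have hm0 : 0 ≤ m := (hT r0 hr0).1.trans (le_csSup hb hr0)
  have hmpos : 0 < m := by
    rcases eq_or_lt_of_le hm0 with h | h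
    · exfalso
      rw [← h] at hcon
      exact absurd (by rw [lm_zero]; exact infIcc_nonneg hr.nonneg _ _) (not_le.2 hcon)
    · exact h
  set c := (infIcc φ m u + lm φ m)/2 with hc
  have hc1 : infIcc φ m u < c := by simp only [hc]; linarith
  have hc2 : c < lm φ m := by simp only [hc]; linarith
  have hev : ∀ᶠ w in 𝓝[<] m, c < φ w := by
    have ht := hr.tendstoL m (ne_of_gt hmpos)
    exact ht.eventually (eventually_gt_nhds hc2)
  have hev' : {w : ℝ | c < φ w} ∈ 𝓝[<] m := hev
  rw [mem_nhdsLT_iff_exists_Ioo_subset] at hev'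
  obtain ⟨l, hl, hsub⟩ := hev'
  set l' := max l 0 with hl'
  have hl'm : l' < m := max_lt hl hmpos
  have key : ∀ r ∈ T, r ≤ l' := by
    intro r hrT
    by_contra hcon2
    push_neg at hcon2
    have hrm : r ≤ m := le_csSup hb hrT
    have hpre := (hT r hrT).2
    rcases eq_or_lt_of_le hrm with rfl | hrltm
    · exact absurd hpre.2 (not_le.2 hcon)
    · have hrpos : 0 < r := lt_of_le_of_lt (le_max_right l 0) hcon2
      have h1 : c ≤ lm φ r := by
        rw [lm_eq_leftLim (ne_of_gt hrpos)]
        have ht := hr.tendstoL r (ne_of_gt hrpos)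
        rw [lm_eq_leftLim (ne_of_gt hrpos)] at ht
        refine ge_of_tendsto ht ?_
        filter_upwards [Ioo_mem_nhdsLT_of_mem (show r ∈ Ioc l' r from ⟨hcon2, le_rfl⟩)]
          with w hw
        exact (hsub ⟨lt_of_le_of_lt (le_max_left l 0) hw.1, hw.2.trans hrltm⟩).le
      have h2 : lm φ r ≤ infIcc φ r u := hpre.2
      have h3 : infIcc φ r u ≤ infIcc φ m u := infIcc_anti hr.nonneg hrm le_rfl hu
      linarith
  exact absurd (csSup_le hne key) (not_le.2 hl'm)

lemma sum_xst_le_aux {u : ℝ} (E : Finset ℝ) :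
    ∀ (hne : E.Nonempty), (∀ r ∈ E, pre φ r u) →
      ∑ r ∈ E, xst φ r u ≤ infIcc φ (E.max' hne) u := by
  classical
  induction E using Finset.induction_on_max with
  | empty => intro hne; exact absurd rfl hne.ne_empty
  | insert a E hlt ih =>
    intro hne hpre
    have haE : a ∉ E := fun h => lt_irrefl a (hlt a h)
    have hmax : (insert a E).max' hne = a := by
      apply le_antisymm
      · apply Finset.max'_le
        intro y hy
        rcases Finset.mem_insert.1 hy with rfl | hy
        · exact le_rfl
        · exact (hlt y hy).le
      · exact Finset.le_max' _ a (Finset.mem_insert_self a E)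
    rw [hmax, Finset.sum_insert haE]
    have hpa : pre φ a u := hpre a (Finset.mem_insert_self a E)
    rcases E.eq_empty_or_nonempty with rfl | hE
    · rw [Finset.sum_empty, add_zero, xst_of_pre hr hpa]
      linarith [lm_nonneg hr a]
    · have hihE := ih hE (fun r h => hpre r (Finset.mem_insert_of_mem h))
      set b := E.max' hE with hb
      have hbE : b ∈ E := E.max'_mem hE
      have hba : b < a := hlt b hbE
      have h1 : infIcc φ b u ≤ infIco φ b a :=
        infIcc_le_infIco hr.nonneg hpa.1 hba
      have h2 : infIco φ b a ≤ lm φ a := infIco_le_lm hr hba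
      rw [xst_of_pre hr hpa]
      linarith

lemma sum_ite_xst_le {u : ℝ} (hu : 0 ≤ φ u) (E : Finset ℝ) :
    ∑ r ∈ E, (if pre φ r u then xst φ r u else 0) ≤ φ u := by
  classical
  rw [Finset.sum_ite, Finset.sum_const_zero, add_zero]
  set E' := E.filter (fun r => pre φ r u) with hE'
  rcases E'.eq_empty_or_nonempty with h | hE'ne
  · rw [h, Finset.sum_empty]; exact hu
  · have hpre : ∀ r ∈ E', pre φ r u := fun r h => (Finset.mem_filter.1 h).2
    refine (sum_xst_le_aux hr E' hE'ne hpre).trans ?_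
    have hmem : u ∈ Icc (E'.max' hE'ne) u :=
      ⟨(hpre _ (E'.max'_mem hE'ne)).1, le_rfl⟩
    exact infIcc_le hr.nonneg hmem

lemma summable_pre_xst (u : ℝ) :
    Summable (fun r : ℝ => if pre φ r u then xst φ r u else 0) := by
  refine summable_of_sum_le (fun r => ?_) (sum_ite_xst_le hr (hr.nonneg u))
  dsimp only
  split
  · exact xst_nonneg' φ _ _
  · exact le_rfl

end RegLemmas

section RegF

variable {f : ℝ → ℝ} (hf : IsExcursion f)

include hf

lemma f_nonneg_all : ∀ x, 0 ≤ f x := by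
  intro x
  by_cases h : x ∈ Icc (0:ℝ) 1
  · exact hf.nonneg x h
  · rw [hf.zero_outside x h]

lemma f_tendsto_outside {r : ℝ} (h : r ∉ Icc (0:ℝ) 1) (h0 : r ≠ 0) :
    Tendsto f (𝓝[<] r) (𝓝 0) := by
  rcases lt_or_gt_of_ne (fun hc : r = 1 => h (by rw [hc]; exact ⟨zero_le_one, le_rfl⟩)) with h1 | h1
  · -- r < 1, so r < 0 since r ∉ [0,1]
    have hr0 : r < 0 := by
      by_contra hc
      push_neg at hc
      exact h ⟨hc, h1.le⟩
    refine Tendsto.congr' ?_ tendsto_const_nhds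
    filter_upwards [Ioo_mem_nhdsLT_of_mem (show r ∈ Ioc (r-1) r from ⟨by linarith, le_rfl⟩)]
      with w hw
    exact (hf.zero_outside w (fun hc => absurd (hc.1.trans_lt (hw.2.trans hr0)) (lt_irrefl 0))).symm
  · refine Tendsto.congr' ?_ tendsto_const_nhds
    filter_upwards [Ioo_mem_nhdsLT_of_mem (show r ∈ Ioc 1 r from ⟨h1, le_rfl⟩)] with w hw
    exact (hf.zero_outside w (fun hc => absurd (hw.1.trans_le hc.2) (lt_irrefl 1))).symm

lemma lm_f_outside {r : ℝ} (h : r ∉ Icc (0:ℝ) 1) : lm f r = 0 := by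
  rcases eq_or_ne r 0 with rfl | h0
  · exact lm_zero f
  · rw [lm_eq_leftLim h0]
    exact leftLim_eq_of_tendsto (f_tendsto_outside hf h h0)

lemma reg_f : Reg f := by
  constructor
  · exact f_nonneg_all hf
  · exact hf.zero_outside
  · intro r h0
    by_cases h : r ∈ Icc (0:ℝ) 1
    · have hr : r ∈ Ioc (0:ℝ) 1 := ⟨lt_of_le_of_ne h.1 (Ne.symm h0), h.2⟩
      rw [lm_eq_leftLim h0]
      exact hf.leftLimEx r hr
    · rw [lm_f_outside hf h]
      exact f_tendsto_outside hf h h0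
  · intro r
    by_cases h : r ∈ Icc (0:ℝ) 1
    · exact hf.jump_nonneg r h
    · rw [jump, lm_f_outside hf h, hf.zero_outside r h, sub_zero]

end RegF

end S13
set_option linter.unusedSectionVars false
set_option linter.unusedVariables false
namespace S13

open Function

section Finiteness

variable {f : ℝ → ℝ} (hf : IsExcursion f)

include hf

lemma jump_f_outside {q : ℝ} (h : q ∉ Icc (0:ℝ) 1) : jump f q = 0 := by
  rw [jump, lm_f_outside hf h, hf.zero_outside q h, sub_zero]

/-- Near any point, at most the point itself can carry a jump of size `≥ ε`. -/
lemma local_jump_small {ε : ℝ} (hε : 0 < ε) {z : ℝ} (hz : z ∈ Icc (0:ℝ) 1) :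
    ∃ δ > 0, ∀ q ∈ Ioo (z - δ) (z + δ), q ≠ z → jump f q < ε := by
  have hreg := reg_f hf
  -- right-side control
  have hR : ∃ δR > 0, ∀ q ∈ Ioo z (z + δR), jump f q < ε := by
    rcases eq_or_lt_of_le hz.2 with rfl | hz1
    · refine ⟨1, one_pos, fun q hq => ?_⟩
      have : q ∉ Icc (0:ℝ) 1 := fun hc => absurd (hq.1.trans_le hc.2) (lt_irrefl _)
      rw [jump_f_outside hf this]; exact hε
    · have hrc := hf.rightCont z ⟨hz.1, hz1⟩
      rw [Metric.tendsto_nhdsWithin_nhds] at hrc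
      obtain ⟨δ1, hδ1, hδ⟩ := hrc (ε/3) (by linarith)
      refine ⟨min δ1 (1 - z), lt_min hδ1 (by linarith), fun q hq => ?_⟩
      have hq1 : q < 1 := by
        have := hq.2.trans_le (by
          have : min δ1 (1-z) ≤ 1 - z := min_le_right _ _
          linarith : z + min δ1 (1-z) ≤ 1)
        linarith
      have hqz : z < q := hq.1
      have hq0 : 0 < q := lt_of_le_of_lt hz.1 hqz
      have hdistq : dist q z < δ1 := by
        rw [Real.dist_eq, abs_of_pos (by linarith : (0:ℝ) < q - z)]
        have := hq.2
        have h' : min δ1 (1-z) ≤ δ1 := min_le_left _ _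
        linarith
      have hfq : |f q - f z| < ε/3 := by
        have := hδ (Set.mem_Ioi.2 hqz) hdistq
        rwa [Real.dist_eq] at this
      -- bound the left limit of f at q
      have ht := hreg.tendstoL q (ne_of_gt hq0)
      have hub : lm f q ≤ f z + ε/3 := by
        refine le_of_tendsto ht ?_
        filter_upwards [Ioo_mem_nhdsLT_of_mem (show q ∈ Ioc z q from ⟨hqz, le_rfl⟩)] with w hw
        have hdw : dist w z < δ1 := by
          rw [Real.dist_eq, abs_of_pos (by linarith [hw.1] : (0:ℝ) < w - z)]
          have := hw.2
          have h' : min δ1 (1-z) ≤ δ1 := min_le_left _ _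
          have := hq.2
          linarith
        have := hδ (Set.mem_Ioi.2 hw.1) hdw
        rw [Real.dist_eq, abs_lt] at this
        linarith [this.2]
      have hlb : f z - ε/3 ≤ f q := by
        rw [abs_lt] at hfq; linarith [hfq.1]
      rw [jump]
      have hfq2 : f q ≤ f z + ε/3 := by rw [abs_lt] at hfq; linarith [hfq.2]
      have hlb2 : f z - ε/3 ≤ lm f q := by
        refine ge_of_tendsto ht ?_
        filter_upwards [Ioo_mem_nhdsLT_of_mem (show q ∈ Ioc z q from ⟨hqz, le_rfl⟩)] with w hw
        have hdw : dist w z < δ1 := by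
          rw [Real.dist_eq, abs_of_pos (by linarith [hw.1] : (0:ℝ) < w - z)]
          have := hw.2
          have h' : min δ1 (1-z) ≤ δ1 := min_le_left _ _
          have := hq.2
          linarith
        have := hδ (Set.mem_Ioi.2 hw.1) hdw
        rw [Real.dist_eq, abs_lt] at this
        linarith [this.1]
      linarith
  -- left-side control
  have hL : ∃ δL > 0, ∀ q ∈ Ioo (z - δL) z, jump f q < ε := by
    rcases eq_or_lt_of_le hz.1 with rfl | hz0
    · refine ⟨1, one_pos, fun q hq => ?_⟩
      have : q ∉ Icc (0:ℝ) 1 := fun hc => absurd (hc.1.trans_lt hq.2) (lt_irrefl _)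
      rw [jump_f_outside hf this]; exact hε
    · have hlc := hf.leftLimEx z ⟨hz0, hz.2⟩
      rw [Metric.tendsto_nhdsWithin_nhds] at hlc
      obtain ⟨δ2, hδ2, hδ⟩ := hlc (ε/3) (by linarith)
      set L := leftLim f z with hL
      refine ⟨min δ2 z, lt_min hδ2 hz0, fun q hq => ?_⟩
      have hq0 : 0 < q := by
        have h' : min δ2 z ≤ z := min_le_right _ _
        have := hq.1
        linarith
      have hqz : q < z := hq.2
      have hdistq : dist q z < δ2 := by
        rw [Real.dist_eq, abs_of_neg (by linarith : q - z < 0)]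
        have := hq.1
        have h' : min δ2 z ≤ δ2 := min_le_left _ _
        linarith
      have hfq : |f q - L| < ε/3 := by
        have := hδ (Set.mem_Iio.2 hqz) hdistq
        rwa [Real.dist_eq] at this
      have ht := hreg.tendstoL q (ne_of_gt hq0)
      have hub : lm f q ≤ L + ε/3 := by
        refine le_of_tendsto ht ?_
        filter_upwards [Ioo_mem_nhdsLT_of_mem
          (show q ∈ Ioc (z - min δ2 z) q from ⟨hq.1, le_rfl⟩)] with w hw
        have hdw : dist w z < δ2 := by
          rw [Real.dist_eq, abs_of_neg (by linarith [hw.2, hq.2] : w - z < 0)]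
          have := hw.1
          have h' : min δ2 z ≤ δ2 := min_le_left _ _
          linarith
        have := hδ (Set.mem_Iio.2 (hw.2.trans hqz)) hdw
        rw [Real.dist_eq, abs_lt] at this
        linarith [this.2]
      rw [jump]
      have hfq2 : f q ≤ L + ε/3 := by rw [abs_lt] at hfq; linarith [hfq.2]
      have hlb2 : L - ε/3 ≤ lm f q := by
        refine ge_of_tendsto ht ?_
        filter_upwards [Ioo_mem_nhdsLT_of_mem
          (show q ∈ Ioc (z - min δ2 z) q from ⟨hq.1, le_rfl⟩)] with w hw
        have hdw : dist w z < δ2 := by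
          rw [Real.dist_eq, abs_of_neg (by linarith [hw.2, hq.2] : w - z < 0)]
          have := hw.1
          have h' : min δ2 z ≤ δ2 := min_le_left _ _
          linarith
        have := hδ (Set.mem_Iio.2 (hw.2.trans hqz)) hdw
        rw [Real.dist_eq, abs_lt] at this
        linarith [this.1]
      linarith
  obtain ⟨δR, hδR, hR⟩ := hR
  obtain ⟨δL, hδL, hL⟩ := hL
  refine ⟨min δL δR, lt_min hδL hδR, fun q hq hqz => ?_⟩
  rcases lt_or_gt_of_ne hqz with h | h
  · refine hL q ⟨?_, h⟩
    have := hq.1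
    have h' : min δL δR ≤ δL := min_le_left _ _
    linarith
  · refine hR q ⟨h, ?_⟩
    have := hq.2
    have h' : min δL δR ≤ δR := min_le_right _ _
    linarith

lemma bigjumps_finite {ε : ℝ} (hε : 0 < ε) : {q : ℝ | ε ≤ jump f q}.Finite := by
  classical
  set S := {q : ℝ | ε ≤ jump f q} with hS
  have hsub : S ⊆ Icc (0:ℝ) 1 := by
    intro q hq
    by_contra h
    rw [hS, Set.mem_setOf_eq, jump_f_outside hf h] at hq
    exact absurd hq (not_le.2 hε)
  have hloc := fun z (hz : z ∈ Icc (0:ℝ) 1) => local_jump_small hf hε hz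
  choose! δfun hδpos hP using hloc
  have hcover : Icc (0:ℝ) 1 ⊆ ⋃ z ∈ Icc (0:ℝ) 1, Ioo (z - δfun z) (z + δfun z) := by
    intro x hx
    refine Set.mem_biUnion hx ?_
    have := hδpos x hx
    exact ⟨by linarith, by linarith⟩
  obtain ⟨b', hb'sub, hb'fin, hb'cov⟩ :=
    isCompact_Icc.elim_finite_subcover_image (fun z _ => isOpen_Ioo) hcover
  refine Set.Finite.subset hb'fin ?_
  intro q hq
  have hq1 : q ∈ Icc (0:ℝ) 1 := hsub hq
  have := hb'cov hq1
  rw [Set.mem_iUnion₂] at this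
  obtain ⟨z, hzb', hzq⟩ := this
  by_cases hqz : q = z
  · rw [hqz]; exact hzb'
  · exact absurd hq (not_le.2 (by
      have := hP z (hb'sub hzb') q hzq hqz
      exact this))

end Finiteness

end S13
set_option linter.unusedSectionVars false
set_option linter.unusedVariables false
namespace S13

open Function

section GStruct

variable {f : ℝ → ℝ} (hf : IsExcursion f) {ε : ℝ} (hε : 0 < ε)
  {Fs : Finset ℝ} (hFs : ∀ q : ℝ, q ∈ Fs ↔ ε ≤ jump f q)

omit hf hε in
lemma tendsto_left_of_vanish {ψ : ℝ → ℝ} (hv : ∀ x, x ∉ Icc (0:ℝ) 1 → ψ x = 0)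
    {r : ℝ} (h : r ∉ Icc (0:ℝ) 1) : Tendsto ψ (𝓝[<] r) (𝓝 0) := by
  have h1 : r ≠ 1 := fun hc => h (by rw [hc]; exact ⟨zero_le_one, le_rfl⟩)
  rcases lt_or_gt_of_ne h1 with h1 | h1
  · have hr0 : r < 0 := by
      by_contra hc
      push_neg at hc
      exact h ⟨hc, h1.le⟩
    refine Tendsto.congr' ?_ tendsto_const_nhds
    filter_upwards [Ioo_mem_nhdsLT_of_mem (show r ∈ Ioc (r-1) r from ⟨by linarith, le_rfl⟩)]
      with w hw
    exact (hv w (fun hc => absurd (hc.1.trans_lt (hw.2.trans hr0)) (lt_irrefl 0))).symm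
  · refine Tendsto.congr' ?_ tendsto_const_nhds
    filter_upwards [Ioo_mem_nhdsLT_of_mem (show r ∈ Ioc 1 r from ⟨h1, le_rfl⟩)] with w hw
    exact (hv w (fun hc => absurd (hw.1.trans_le hc.2) (lt_irrefl 1))).symm

include hf hε hFs

lemma memFs_range {q : ℝ} (hq : q ∈ Fs) : q ∈ Icc (0:ℝ) 1 := by
  by_contra h
  have := (hFs q).1 hq
  rw [jump_f_outside hf h] at this
  exact absurd this (not_le.2 hε)

omit hε in
lemma Jeps_eq_sum (u : ℝ) :
    Jeps f ε u = ∑ q ∈ Fs, (if pre f q u then xst f q u else 0) := by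
  rw [Jeps, tsum_eq_sum (s := Fs) (fun r hr => if_neg (fun hc => hr ((hFs r).2 hc.2)))]
  refine Finset.sum_congr rfl fun q hq => ?_
  have hbig := (hFs q).1 hq
  by_cases hp : pre f q u
  · rw [if_pos ⟨hp, hbig⟩, if_pos hp]
  · rw [if_neg (fun hc => hp hc.1), if_neg hp]

omit hf hε hFs in
lemma Jeps_nonneg (u : ℝ) : 0 ≤ Jeps f ε u := by
  rw [Jeps]
  refine tsum_nonneg fun r => ?_
  split
  · exact xst_nonneg' f _ _
  · exact le_rfl

lemma Jeps_outside {w : ℝ} (h : w ∉ Icc (0:ℝ) 1) : Jeps f ε w = 0 := by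
  have hreg := reg_f hf
  rw [Jeps_eq_sum hf hFs]
  refine Finset.sum_eq_zero fun q hq => ?_
  have hq01 := memFs_range hf hε hFs hq
  have h1 : w ≠ 1 := fun hc => h (by rw [hc]; exact ⟨zero_le_one, le_rfl⟩)
  rcases lt_or_gt_of_ne h1 with h1 | h1
  · have hw0 : w < 0 := by
      by_contra hc; push_neg at hc; exact h ⟨hc, h1.le⟩
    rw [if_neg]
    intro hp
    exact absurd (hq01.1.trans (hp.1.trans hw0.le)) (by linarith [hp.1.trans_lt hw0, hq01.1] ; )
  · split
    · rename_i hp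
      have hxle : infIcc f q w ≤ 0 := by
        have := infIcc_le (f_nonneg_all hf) (show w ∈ Icc q w from ⟨hp.1, le_rfl⟩)
        rw [hf.zero_outside w h] at this
        exact this
      have hlm : 0 ≤ lm f q := lm_nonneg hreg q
      rw [xst, if_pos hp.1, max_eq_right (by linarith)]
    · rfl

omit hε in
lemma pre_between {q r w u : ℝ} (h1 : pre f q r) (h2 : pre f q u) (hrw : r ≤ w) (hwu : w ≤ u) :
    pre f q w := by
  have h0 := f_nonneg_all hf
  refine ⟨h1.1.trans hrw, ?_⟩
  rw [infIcc_union h0 h1.1 hrw]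
  refine le_min h1.2 (h2.2.trans (infIcc_anti h0 h1.1 hwu hrw))

omit hε in
lemma xst_anti {q w u : ℝ} (hw : pre f q w) (hu : pre f q u) (hwu : w ≤ u) :
    xst f q u ≤ xst f q w := by
  have hreg := reg_f hf
  rw [xst_of_pre hreg hw, xst_of_pre hreg hu]
  have := infIcc_anti hreg.nonneg (le_refl q) hwu hw.1
  linarith

/-- The infimum of `Jeps f ε` over `[r,u]`. -/
lemma infIcc_Jeps {r u : ℝ} (hru : r ≤ u) (hr0 : 0 ≤ r) (hu1 : u ≤ 1) :
    infIcc (Jeps f ε) r u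
      = ∑ q ∈ Fs, (if pre f q r ∧ pre f q u then xst f q u else 0) := by
  classical
  have hreg := reg_f hf
  have h0 := hreg.nonneg
  have hg0 : ∀ x, 0 ≤ Jeps f ε x := Jeps_nonneg
  apply le_antisymm
  · refine le_of_forall_pos_le_add fun η hη => ?_
    set η' := η / (Fs.card + 1) with hη'
    have hη'pos : 0 < η' := by
      apply div_pos hη
      positivity
    set I := infIcc f r u with hI
    obtain ⟨y, ⟨x, hx, rfl⟩, hy⟩ := exists_lt_of_csInf_lt
      (((Set.nonempty_Icc).2 hru).image f) (show I < I + η' by linarith)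
    have hxr : r ≤ x := hx.1
    have hxu : x ≤ u := hx.2
    calc infIcc (Jeps f ε) r u ≤ Jeps f ε x := infIcc_le hg0 hx
      _ = ∑ q ∈ Fs, (if pre f q x then xst f q x else 0) := Jeps_eq_sum hf hFs x
      _ ≤ ∑ q ∈ Fs, ((if pre f q r ∧ pre f q u then xst f q u else 0) + η') := by
          refine Finset.sum_le_sum fun q hq => ?_
          have hTq : 0 ≤ (if pre f q r ∧ pre f q u then xst f q u else 0) := by
            split
            · exact xst_nonneg' f _ _
            · exact le_rfl
          by_cases hpx : pre f q x
          swap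
          · rw [if_neg hpx]; linarith
          rw [if_pos hpx]
          by_cases hqr : q ≤ r
          · have hpqr : pre f q r :=
              ⟨hqr, hpx.2.trans (infIcc_anti h0 le_rfl hxr hqr)⟩
            by_cases hqu : pre f q u
            · rw [if_pos ⟨hpqr, hqu⟩, xst_of_pre hreg hpx, xst_of_pre hreg hqu]
              have e1 : infIcc f q x ≤ infIcc f q r := infIcc_anti h0 le_rfl hxr hqr
              have e2 : infIcc f q x ≤ f x :=
                infIcc_le h0 (show x ∈ Icc q x from ⟨hpx.1, le_rfl⟩)
              have e3 : infIcc f q u = min (infIcc f q r) I := by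
                rw [hI, infIcc_union h0 hqr hru]
              rcases le_total (infIcc f q r) I with hmin | hmin
              · rw [e3, min_eq_left hmin]; linarith
              · rw [e3, min_eq_right hmin]; linarith
            · rw [if_neg (fun hc => hqu hc.2)]
              have e3 : infIcc f q u = min (infIcc f q r) I := by
                rw [hI, infIcc_union h0 hqr hru]
              have hlt : infIcc f q u < lm f q := by
                by_contra hc
                push_neg at hc
                exact hqu ⟨hqr.trans hru, hc⟩
              have hIlt : I < lm f q := by
                rcases le_total (infIcc f q r) I with hmin | hmin
                · rw [e3, min_eq_left hmin] at hlt; linarith [hpqr.2]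
                · rwa [e3, min_eq_right hmin] at hlt
              have e2 : infIcc f q x ≤ f x :=
                infIcc_le h0 (show x ∈ Icc q x from ⟨hpx.1, le_rfl⟩)
              rw [xst_of_pre hreg hpx]
              linarith
          · push_neg at hqr
            have hlm : I ≤ lm f q := by
              calc I ≤ infIco f r q := by
                    refine le_csInf (((Set.nonempty_Ico).2 hqr).image f) ?_
                    rintro y ⟨w, hw, rfl⟩
                    exact infIcc_le h0 ⟨hw.1, hw.2.le.trans (hpx.1.trans hxu)⟩
                _ ≤ lm f q := infIco_le_lm hreg hqr
            have e2 : infIcc f q x ≤ f x :=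
              infIcc_le h0 (show x ∈ Icc q x from ⟨hpx.1, le_rfl⟩)
            rw [xst_of_pre hreg hpx]
            linarith
      _ = (∑ q ∈ Fs, (if pre f q r ∧ pre f q u then xst f q u else 0)) + Fs.card * η' := by
          rw [Finset.sum_add_distrib, Finset.sum_const, nsmul_eq_mul]
      _ ≤ (∑ q ∈ Fs, (if pre f q r ∧ pre f q u then xst f q u else 0)) + η := by
          have hcard : (0:ℝ) < (Fs.card : ℝ) + 1 := by positivity
          have : (Fs.card : ℝ) * η' ≤ η := by
            rw [hη', mul_div_assoc', div_le_iff₀ hcard]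
            nlinarith [Nat.cast_nonneg (α := ℝ) Fs.card]
          linarith
  · refine le_infIcc hg0 hru fun w hw => ?_
    rw [Jeps_eq_sum hf hFs]
    refine Finset.sum_le_sum fun q hq => ?_
    by_cases hc : pre f q r ∧ pre f q u
    · rw [if_pos hc]
      have hpw : pre f q w := pre_between hf hFs hc.1 hc.2 hw.1 hw.2
      rw [if_pos hpw]
      exact xst_anti hf hFs hpw hc.2 hw.2
    · rw [if_neg hc]
      split
      · exact xst_nonneg' f _ _
      · exact le_rfl

end GStruct

end S13
set_option linter.unusedSectionVars false
set_option linter.unusedVariables false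
namespace S13

open Function

section GStruct2

variable {f : ℝ → ℝ} (hf : IsExcursion f) {ε : ℝ} (hε : 0 < ε)
  {Fs : Finset ℝ} (hFs : ∀ q : ℝ, q ∈ Fs ↔ ε ≤ jump f q)

include hf hε hFs

lemma tendsto_Jeps_left {ρ : ℝ} (hρ0 : 0 < ρ) :
    Tendsto (Jeps f ε) (𝓝[<] ρ)
      (𝓝 (∑ q ∈ Fs, if q < ρ ∧ pre f q ρ then infIco f q ρ - lm f q else 0)) := by
  have hreg := reg_f hf
  have h0 := hreg.nonneg
  refine Tendsto.congr (fun w => (Jeps_eq_sum hf hFs w).symm)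
    (tendsto_finset_sum _ fun q hq => ?_)
  by_cases h1 : ρ ≤ q
  · rw [if_neg (fun hc => absurd hc.1 (not_lt.2 h1))]
    refine Tendsto.congr' ?_ tendsto_const_nhds
    filter_upwards [self_mem_nhdsWithin] with w hw
    exact (if_neg (fun hp => absurd hp.1 (not_le.2 (lt_of_lt_of_le hw h1)))).symm
  · push_neg at h1
    by_cases h2 : pre f q ρ
    · rw [if_pos ⟨h1, h2⟩]
      have hts : Tendsto (fun w => infIcc f q w - lm f q) (𝓝[<] ρ)
          (𝓝 (infIco f q ρ - lm f q)) :=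
        (tendsto_infIcc_left h0 h1).sub tendsto_const_nhds
      refine Tendsto.congr' ?_ hts
      filter_upwards [Ioo_mem_nhdsLT_of_mem (show ρ ∈ Ioc q ρ from ⟨h1, le_rfl⟩)] with w hw
      have hpw : pre f q w := by
        refine ⟨hw.1.le, ?_⟩
        calc lm f q ≤ infIcc f q ρ := h2.2
          _ = infIco f q ρ := infIcc_eq_infIco hreg h1
          _ ≤ infIcc f q w := sInf_le_sInf_img h0
              (fun x hx => ⟨hx.1, lt_of_le_of_lt hx.2 hw.2⟩) ((Set.nonempty_Icc).2 hw.1.le)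
      rw [if_pos hpw, xst_of_pre hreg hpw]
    · rw [if_neg (fun hc => h2 hc.2)]
      have hlt : infIco f q ρ < lm f q := by
        have h3 : ¬ lm f q ≤ infIcc f q ρ := fun hc => h2 ⟨h1.le, hc⟩
        push_neg at h3
        rwa [infIcc_eq_infIco hreg h1] at h3
      have hev := (tendsto_infIcc_left h0 h1).eventually (eventually_lt_nhds hlt)
      refine Tendsto.congr' ?_ tendsto_const_nhds
      filter_upwards [hev] with w hw
      exact (if_neg (fun hp => absurd hp.2 (not_le.2 hw))).symm

lemma lm_Jeps {ρ : ℝ} (hρ0 : 0 < ρ) :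
    lm (Jeps f ε) ρ = ∑ q ∈ Fs, if q < ρ ∧ pre f q ρ then infIco f q ρ - lm f q else 0 := by
  rw [lm_eq_leftLim (ne_of_gt hρ0)]
  exact leftLim_eq_of_tendsto (tendsto_Jeps_left hf hε hFs hρ0)

lemma lm_Jeps_outside {ρ : ℝ} (h : ρ ∉ Icc (0:ℝ) 1) : lm (Jeps f ε) ρ = 0 := by
  rcases eq_or_ne ρ 0 with rfl | h0
  · exact lm_zero _
  · rw [lm_eq_leftLim h0]
    exact leftLim_eq_of_tendsto
      (tendsto_left_of_vanish (fun x hx => Jeps_outside hf hε hFs hx) h)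

lemma jump_side_zero {b ρ : ℝ} (hb : b ≠ ρ) :
    (if pre f b ρ then xst f b ρ else 0)
      - (if b < ρ ∧ pre f b ρ then infIco f b ρ - lm f b else 0) = 0 := by
  have hreg := reg_f hf
  rcases lt_or_gt_of_ne hb with h | h
  · by_cases hp : pre f b ρ
    · rw [if_pos hp, if_pos ⟨h, hp⟩, xst_of_pre hreg hp, infIcc_eq_infIco hreg h]
      ring
    · rw [if_neg hp, if_neg (fun hc => hp hc.2), sub_zero]
  · rw [if_neg (fun hp => absurd hp.1 (not_le.2 h)),
      if_neg (fun hc => absurd hc.1 (not_lt.2 h.le)), sub_zero]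

lemma xst_self_eq_jump (ρ : ℝ) : xst f ρ ρ = jump f ρ := by
  have hreg := reg_f hf
  rw [xst, if_pos le_rfl, infIcc_self hreg]
  have := hreg.jumpnn ρ
  rw [jump] at this ⊢
  exact max_eq_left this

lemma jump_Jeps {ρ : ℝ} (hρ0 : 0 < ρ) :
    jump (Jeps f ε) ρ = if ρ ∈ Fs then jump f ρ else 0 := by
  classical
  have hreg := reg_f hf
  rw [jump, Jeps_eq_sum hf hFs, lm_Jeps hf hε hFs hρ0, ← Finset.sum_sub_distrib]
  by_cases hmem : ρ ∈ Fs
  · rw [if_pos hmem, Finset.sum_eq_single_of_mem ρ hmem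
      (fun b hbF hb => jump_side_zero hf hε hFs hb)]
    rw [if_pos (pre_self hreg ρ), if_neg (fun hc => lt_irrefl ρ hc.1), sub_zero,
      xst_self_eq_jump hf hε hFs ρ]
  · rw [if_neg hmem]
    exact Finset.sum_eq_zero fun b hbF =>
      jump_side_zero hf hε hFs (fun hc => hmem (hc ▸ hbF))

lemma Jeps_zero_val : Jeps f ε 0 = if 0 ∈ Fs then jump f 0 else 0 := by
  classical
  have hreg := reg_f hf
  have hside : ∀ b ∈ Fs, b ≠ 0 → (if pre f b 0 then xst f b 0 else 0) = 0 := by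
    intro b hbF hb
    have hb01 := memFs_range hf hε hFs hbF
    have hbpos : 0 < b := lt_of_le_of_ne hb01.1 (Ne.symm hb)
    rw [if_neg (fun hp => absurd hp.1 (not_le.2 hbpos))]
  rw [Jeps_eq_sum hf hFs]
  by_cases hmem : 0 ∈ Fs
  · rw [if_pos hmem, Finset.sum_eq_single_of_mem 0 hmem hside,
      if_pos (pre_self hreg 0), xst_self_eq_jump hf hε hFs 0]
  · rw [if_neg hmem]
    exact Finset.sum_eq_zero fun b hbF => hside b hbF (fun hc => hmem (hc ▸ hbF))

lemma jump_Jeps_zero : jump (Jeps f ε) 0 = if 0 ∈ Fs then jump f 0 else 0 := by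
  rw [jump, lm_zero, sub_zero, Jeps_zero_val hf hε hFs]

lemma jump_Jeps_eq {ρ : ℝ} (hρ0 : 0 ≤ ρ) :
    jump (Jeps f ε) ρ = if ρ ∈ Fs then jump f ρ else 0 := by
  rcases eq_or_lt_of_le hρ0 with rfl | h
  · exact jump_Jeps_zero hf hε hFs
  · exact jump_Jeps hf hε hFs h

lemma reg_Jeps : Reg (Jeps f ε) := by
  have hreg := reg_f hf
  constructor
  · exact Jeps_nonneg
  · exact fun x hx => Jeps_outside hf hε hFs hx
  · intro r h0
    by_cases h : r ∈ Icc (0:ℝ) 1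
    · have hrpos : 0 < r := lt_of_le_of_ne h.1 (Ne.symm h0)
      rw [lm_Jeps hf hε hFs hrpos]
      exact tendsto_Jeps_left hf hε hFs hrpos
    · rw [lm_Jeps_outside hf hε hFs h]
      exact tendsto_left_of_vanish (fun x hx => Jeps_outside hf hε hFs hx) h
  · intro r
    by_cases h : r ∈ Icc (0:ℝ) 1
    · rw [jump_Jeps_eq hf hε hFs h.1]
      split
      · exact hreg.jumpnn r
      · exact le_rfl
    · rw [jump, lm_Jeps_outside hf hε hFs h, Jeps_outside hf hε hFs h, sub_zero]

end GStruct2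

end S13
set_option linter.unusedSectionVars false
set_option linter.unusedVariables false
namespace S13

open Function

section GChar

variable {f : ℝ → ℝ} (hf : IsExcursion f) {ε : ℝ} (hε : 0 < ε)
  {Fs : Finset ℝ} (hFs : ∀ q : ℝ, q ∈ Fs ↔ ε ≤ jump f q)

include hf hε hFs

/-- Correction term in the characterization of `pre (Jeps f ε)`. -/
lemma cterm_nonneg {r u : ℝ} (hru : r ≤ u) (q : ℝ) :
    0 ≤ (if q < r ∧ pre f q r
      then (infIco f q r - lm f q) - (if pre f q u then xst f q u else 0) else 0) := by
  have hreg := reg_f hf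
  have h0 := hreg.nonneg
  split
  · rename_i hq
    obtain ⟨hqr, hpqr⟩ := hq
    by_cases hpu : pre f q u
    · rw [if_pos hpu, xst_of_pre hreg hpu]
      have h1 : infIcc f q u ≤ infIco f q r :=
        sInf_le_sInf_img h0 (fun x hx => ⟨hx.1, hx.2.le.trans hru⟩)
          ((Set.nonempty_Ico).2 hqr)
      linarith
    · rw [if_neg hpu, sub_zero, ← infIcc_eq_infIco hreg hqr]
      linarith [hpqr.2]
  · exact le_rfl

lemma lm_Jeps' {r : ℝ} (hr0 : 0 ≤ r) :
    lm (Jeps f ε) r = ∑ q ∈ Fs, (if q < r ∧ pre f q r then infIco f q r - lm f q else 0) := by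
  rcases eq_or_lt_of_le hr0 with rfl | h
  · rw [lm_zero]
    symm
    refine Finset.sum_eq_zero fun q hq => ?_
    have := (memFs_range hf hε hFs hq).1
    rw [if_neg (fun hc => absurd (hc.1.trans_le this) (lt_irrefl q))]
  · exact lm_Jeps hf hε hFs h

/-- The characterization of `infIcc (Jeps f ε) r u - lm (Jeps f ε) r`. -/
lemma char_Jeps {r u : ℝ} (hr0 : 0 ≤ r) (hru : r ≤ u) (hu1 : u ≤ 1) :
    infIcc (Jeps f ε) r u - lm (Jeps f ε) r
      = (if r ∈ Fs ∧ pre f r u then xst f r u else 0)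
        - ∑ q ∈ Fs, (if q < r ∧ pre f q r
            then (infIco f q r - lm f q) - (if pre f q u then xst f q u else 0) else 0) := by
  classical
  have hreg := reg_f hf
  rw [infIcc_Jeps hf hε hFs hru hr0 hu1, lm_Jeps' hf hε hFs hr0, ← Finset.sum_sub_distrib]
  have key : ∀ q ∈ Fs, q ≠ r →
      (if pre f q r ∧ pre f q u then xst f q u else 0)
        - (if q < r ∧ pre f q r then infIco f q r - lm f q else 0)
      = - (if q < r ∧ pre f q r
            then (infIco f q r - lm f q) - (if pre f q u then xst f q u else 0) else 0) := by
    intro q hqF hqr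
    by_cases hp : pre f q r
    · have hql : q < r := lt_of_le_of_ne hp.1 hqr
      by_cases hpu : pre f q u
      · rw [if_pos (show pre f q r ∧ pre f q u from ⟨hp, hpu⟩),
          if_pos (show q < r ∧ pre f q r from ⟨hql, hp⟩),
          if_pos (show q < r ∧ pre f q r from ⟨hql, hp⟩), if_pos hpu]
        ring
      · rw [if_neg (show ¬(pre f q r ∧ pre f q u) from fun hc => hpu hc.2),
          if_pos (show q < r ∧ pre f q r from ⟨hql, hp⟩),
          if_pos (show q < r ∧ pre f q r from ⟨hql, hp⟩), if_neg hpu]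
        ring
    · rw [if_neg (show ¬(pre f q r ∧ pre f q u) from fun hc => hp hc.1),
        if_neg (show ¬(q < r ∧ pre f q r) from fun hc => hp hc.2),
        if_neg (show ¬(q < r ∧ pre f q r) from fun hc => hp hc.2), sub_zero, neg_zero]
  by_cases hmem : r ∈ Fs
  · have hsplit := Finset.add_sum_erase Fs (fun q =>
      (if pre f q r ∧ pre f q u then xst f q u else 0)
        - (if q < r ∧ pre f q r then infIco f q r - lm f q else 0)) hmem
    rw [← hsplit]
    beta_reduce
    have e1 : (if pre f r r ∧ pre f r u then xst f r u else 0)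
        - (if r < r ∧ pre f r r then infIco f r r - lm f r else 0)
        = (if r ∈ Fs ∧ pre f r u then xst f r u else 0) := by
      rw [if_neg (show ¬(r < r ∧ pre f r r) from fun hc => lt_irrefl r hc.1), sub_zero]
      by_cases hpu : pre f r u
      · rw [if_pos ⟨pre_self hreg r, hpu⟩, if_pos ⟨hmem, hpu⟩]
      · rw [if_neg (fun hc => hpu hc.2), if_neg (fun hc => hpu hc.2)]
    rw [e1]
    have e2 : ∑ q ∈ Fs.erase r, ((if pre f q r ∧ pre f q u then xst f q u else 0)
        - (if q < r ∧ pre f q r then infIco f q r - lm f q else 0))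
        = - ∑ q ∈ Fs.erase r, (if q < r ∧ pre f q r
            then (infIco f q r - lm f q) - (if pre f q u then xst f q u else 0) else 0) := by
      rw [← Finset.sum_neg_distrib]
      refine Finset.sum_congr rfl fun q hq => ?_
      exact key q (Finset.mem_of_mem_erase hq) (Finset.ne_of_mem_erase hq)
    rw [e2]
    have e3 : ∑ q ∈ Fs, (if q < r ∧ pre f q r
          then (infIco f q r - lm f q) - (if pre f q u then xst f q u else 0) else 0)
        = ∑ q ∈ Fs.erase r, (if q < r ∧ pre f q r
            then (infIco f q r - lm f q) - (if pre f q u then xst f q u else 0) else 0) := by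
      symm
      apply Finset.sum_erase
      rw [if_neg (show ¬(r < r ∧ pre f r r) from fun hc => lt_irrefl r hc.1)]
    rw [e3]
    ring
  · have e1 : (if r ∈ Fs ∧ pre f r u then xst f r u else 0) = 0 :=
      if_neg (fun hc => hmem hc.1)
    rw [e1, zero_sub, ← Finset.sum_neg_distrib]
    refine Finset.sum_congr rfl fun q hq => ?_
    exact key q hq (fun hc => hmem (hc ▸ hq))

lemma csum_nonneg {r u : ℝ} (hru : r ≤ u) :
    0 ≤ ∑ q ∈ Fs, (if q < r ∧ pre f q r
      then (infIco f q r - lm f q) - (if pre f q u then xst f q u else 0) else 0) :=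
  Finset.sum_nonneg fun q _ => cterm_nonneg hf hε hFs hru q

lemma cterm_zero_of_pre {r u : ℝ} (hpre : pre f r u) (q : ℝ) (hq : q < r) (hpqr : pre f q r) :
    infIco f q r - lm f q = (if pre f q u then xst f q u else 0) := by
  have hreg := reg_f hf
  have h0 := hreg.nonneg
  have hpu : pre f q u := pre_trans hreg hpqr hpre
  rw [if_pos hpu, xst_of_pre hreg hpu]
  have e1 : infIcc f q u = min (infIcc f q r) (infIcc f r u) :=
    infIcc_union h0 hpqr.1 hpre.1
  have e2 : infIcc f q r = infIco f q r := infIcc_eq_infIco hreg hq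
  have e3 : infIco f q r ≤ infIcc f r u := (infIco_le_lm hreg hq).trans hpre.2
  rw [e1, e2, min_eq_left e3]

lemma csum_zero_of_pre {r u : ℝ} (hpre : pre f r u) :
    ∑ q ∈ Fs, (if q < r ∧ pre f q r
      then (infIco f q r - lm f q) - (if pre f q u then xst f q u else 0) else 0) = 0 := by
  refine Finset.sum_eq_zero fun q hq => ?_
  split
  · rename_i h
    rw [cterm_zero_of_pre hf hε hFs hpre q h.1 h.2]; ring
  · rfl

/-- `pre f r u` transfers to `Jeps f ε`, with explicit `xst`. -/
lemma pre_Jeps_of_pre {r u : ℝ} (hpre : pre f r u) (hr0 : 0 ≤ r) (hu1 : u ≤ 1) :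
    pre (Jeps f ε) r u
      ∧ xst (Jeps f ε) r u = (if r ∈ Fs then xst f r u else 0) := by
  have hchar := char_Jeps hf hε hFs hr0 hpre.1 hu1
  rw [csum_zero_of_pre hf hε hFs hpre, sub_zero] at hchar
  have hval : (if r ∈ Fs ∧ pre f r u then xst f r u else 0)
      = (if r ∈ Fs then xst f r u else 0) := by
    by_cases h : r ∈ Fs
    · rw [if_pos ⟨h, hpre⟩, if_pos h]
    · rw [if_neg (fun hc => h hc.1), if_neg h]
  rw [hval] at hchar
  have hnn : 0 ≤ (if r ∈ Fs then xst f r u else 0) := by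
    split
    · exact xst_nonneg' f _ _
    · exact le_rfl
  have hpg : pre (Jeps f ε) r u := ⟨hpre.1, by linarith⟩
  refine ⟨hpg, ?_⟩
  rw [xst, if_pos hpre.1, hchar, max_eq_left hnn]

/-- If `r ∉ Fs` then `xst (Jeps f ε) r u = 0`, unconditionally. -/
lemma xst_Jeps_zero_of_notFs {r u : ℝ} (hr0 : 0 ≤ r) (hru : r ≤ u) (hu1 : u ≤ 1)
    (h : r ∉ Fs) : xst (Jeps f ε) r u = 0 := by
  have hchar := char_Jeps hf hε hFs hr0 hru hu1
  rw [if_neg (fun hc => h hc.1), zero_sub] at hchar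
  have := csum_nonneg hf hε hFs (u := u) (r := r) hru
  rw [xst, if_pos hru, max_eq_right (by linarith)]

/-- Master lemma: under `pre (Jeps f ε) r u` all correction terms vanish. -/
lemma pre_Jeps_force {r u : ℝ} (hr0 : 0 ≤ r) (hru : r ≤ u) (hu1 : u ≤ 1)
    (hpre : pre (Jeps f ε) r u) :
    (∀ q ∈ Fs, q < r → pre f q r →
        infIco f q r - lm f q = (if pre f q u then xst f q u else 0))
      ∧ xst (Jeps f ε) r u = (if r ∈ Fs ∧ pre f r u then xst f r u else 0) := by
  have hchar := char_Jeps hf hε hFs hr0 hru hu1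
  have hcz : ∑ q ∈ Fs, (if q < r ∧ pre f q r
      then (infIco f q r - lm f q) - (if pre f q u then xst f q u else 0) else 0) = 0 := by
    by_cases hc : r ∈ Fs ∧ pre f r u
    · exact csum_zero_of_pre hf hε hFs hc.2
    · rw [if_neg hc, zero_sub] at hchar
      have h1 := csum_nonneg hf hε hFs (u := u) (r := r) hru
      have h2 := hpre.2
      linarith
  constructor
  · intro q hqF hqr hpqr
    have hterms := (Finset.sum_eq_zero_iff_of_nonneg
      (fun q _ => cterm_nonneg hf hε hFs hru q)).1 hcz q hqF
    rw [if_pos ⟨hqr, hpqr⟩] at hterms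
    linarith
  · rw [hcz, sub_zero] at hchar
    have hnn : 0 ≤ (if r ∈ Fs ∧ pre f r u then xst f r u else 0) := by
      split
      · exact xst_nonneg' f _ _
      · exact le_rfl
    rw [xst, if_pos hru, hchar, max_eq_left hnn]

end GChar

end S13
set_option linter.unusedSectionVars false
set_option linter.unusedVariables false
namespace S13

open Function

section Mrca

lemma mrca_props {φ : ℝ → ℝ} (hreg : Reg φ) {s t : ℝ} (hs : s ∈ Icc (0:ℝ) 1)
    (ht : t ∈ Icc (0:ℝ) 1) :
    (0 ≤ mrca φ s t ∧ mrca φ s t ≤ s ∧ mrca φ s t ≤ t)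
      ∧ (pre φ (mrca φ s t) s ∧ pre φ (mrca φ s t) t)
      ∧ ∀ r, 0 ≤ r → pre φ r s → pre φ r t → r ≤ mrca φ s t := by
  have h0S : (0:ℝ) ∈ {r : ℝ | 0 ≤ r ∧ pre φ r s ∧ pre φ r t} :=
    ⟨le_rfl, pre_zero hreg hs.1, pre_zero hreg ht.1⟩
  have hne : {r : ℝ | 0 ≤ r ∧ pre φ r s ∧ pre φ r t}.Nonempty := ⟨0, h0S⟩
  have hbdd : BddAbove {r : ℝ | 0 ≤ r ∧ pre φ r s ∧ pre φ r t} :=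
    ⟨s, fun r hr => hr.2.1.1⟩
  have hm0 : 0 ≤ mrca φ s t := le_csSup hbdd h0S
  have hms : mrca φ s t ≤ s := csSup_le hne fun r hr => hr.2.1.1
  have hmt : mrca φ s t ≤ t := csSup_le hne fun r hr => hr.2.2.1
  refine ⟨⟨hm0, hms, hmt⟩, ⟨?_, ?_⟩, fun r h1 h2 h3 => le_csSup hbdd ⟨h1, h2, h3⟩⟩
  · exact pre_csSup hreg hne hbdd (fun r hr => ⟨hr.1, hr.2.1⟩) hms
  · exact pre_csSup hreg hne hbdd (fun r hr => ⟨hr.1, hr.2.2⟩) hmt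

end Mrca

section CLem

variable {f : ℝ → ℝ} (hf : IsExcursion f) {ε : ℝ} (hε : 0 < ε)
  {Fs : Finset ℝ} (hFs : ∀ q : ℝ, q ∈ Fs ↔ ε ≤ jump f q)
  {s t : ℝ} (hs : s ∈ Icc (0:ℝ) 1) (ht : t ∈ Icc (0:ℝ) 1)

include hf hε hFs hs ht

/-- `mrca f s t ≤ mrca (Jeps f ε) s t`. -/
lemma mrca_le_mrca : mrca f s t ≤ mrca (Jeps f ε) s t := by
  have hreg := reg_f hf
  have hregg := reg_Jeps hf hε hFs
  obtain ⟨⟨hm0, hms, hmt⟩, ⟨hps, hpt⟩, hmax⟩ := mrca_props hreg hs ht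
  obtain ⟨-, -, hmax'⟩ := mrca_props hregg hs ht
  exact hmax' _ hm0 (pre_Jeps_of_pre hf hε hFs hps hm0 hs.2).1
    (pre_Jeps_of_pre hf hε hFs hpt hm0 ht.2).1

/-- If `m ∈ Fs` and `m < m'` then the two `xst` at `m` agree (`C3`). -/
lemma xst_m_eq (hmF : mrca f s t ∈ Fs) (hlt : mrca f s t < mrca (Jeps f ε) s t) :
    xst f (mrca f s t) s = xst f (mrca f s t) t := by
  have hreg := reg_f hf
  have hregg := reg_Jeps hf hε hFs
  set m := mrca f s t
  set m' := mrca (Jeps f ε) s t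
  obtain ⟨⟨hm0, hms, hmt⟩, ⟨hps, hpt⟩, hmax⟩ := mrca_props hreg hs ht
  obtain ⟨⟨hm'0, hm's, hm't⟩, ⟨hp's, hp't⟩, hmax'⟩ := mrca_props hregg hs ht
  have hpm : pre f m m' := ⟨hlt.le, hps.2.trans (infIcc_anti hreg.nonneg le_rfl hm's hlt.le)⟩
  have h1 := (pre_Jeps_force hf hε hFs hm'0 hm's hs.2 hp's).1 m hmF hlt hpm
  have h2 := (pre_Jeps_force hf hε hFs hm'0 hm't ht.2 hp't).1 m hmF hlt hpm
  rw [if_pos hps] at h1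
  rw [if_pos hpt] at h2
  linarith

/-- Big jumps strictly between `m` and `m'` have vanishing `xst` (`C4`). -/
lemma xst_between_zero {r : ℝ} (hrF : r ∈ Fs) (hmr : mrca f s t < r)
    (hrm' : r < mrca (Jeps f ε) s t) {u : ℝ} (hu : u = s ∨ u = t) (hpru : pre f r u) :
    xst f r u = 0 := by
  have hreg := reg_f hf
  have hregg := reg_Jeps hf hε hFs
  set m := mrca f s t
  set m' := mrca (Jeps f ε) s t
  obtain ⟨⟨hm0, hms, hmt⟩, ⟨hps, hpt⟩, hmax⟩ := mrca_props hreg hs ht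
  obtain ⟨⟨hm'0, hm's, hm't⟩, ⟨hp's, hp't⟩, hmax'⟩ := mrca_props hregg hs ht
  have hr0 : 0 ≤ r := hm0.trans hmr.le
  have hu1 : u ≤ 1 := by rcases hu with rfl | rfl; exacts [hs.2, ht.2]
  have hm'u : m' ≤ u := by rcases hu with rfl | rfl; exacts [hm's, hm't]
  have hpm : pre f r m' := ⟨hrm'.le, hpru.2.trans (infIcc_anti hreg.nonneg le_rfl
    (hm'u) hrm'.le)⟩
  have h1 := (pre_Jeps_force hf hε hFs hm'0 hm's hs.2 hp's).1 r hrF hrm' hpm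
  have h2 := (pre_Jeps_force hf hε hFs hm'0 hm't ht.2 hp't).1 r hrF hrm' hpm
  rcases hu with rfl | rfl
  · -- u = s; show r is not an ancestor of t
    have hnt : ¬ pre f r t := fun hc => absurd (hmax r hr0 hpru hc) (not_le.2 hmr)
    rw [if_pos hpru] at h1
    rw [if_neg hnt] at h2
    linarith
  · have hns : ¬ pre f r s := fun hc => absurd (hmax r hr0 hc hpru) (not_le.2 hmr)
    rw [if_neg hns] at h1
    rw [if_pos hpru] at h2
    linarith

end CLem

end S13
set_option linter.unusedSectionVars false
set_option linter.unusedVariables false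
namespace S13

open Function

section TsumEval

variable {f : ℝ → ℝ} (hf : IsExcursion f) {ε : ℝ} (hε : 0 < ε)
  {Fs : Finset ℝ} (hFs : ∀ q : ℝ, q ∈ Fs ↔ ε ≤ jump f q)

omit hf hε in
lemma cdel_zero_eq {φ : ℝ → ℝ} {r u : ℝ} (h : 0 ≤ xst φ r u) :
    cdel φ r 0 (xst φ r u) = min (xst φ r u) (jump φ r - xst φ r u) := by
  rw [cdel, zero_sub, abs_neg, abs_of_nonneg h]

include hf hε hFs

omit hε hFs in
lemma summable_w (u : ℝ) :
    Summable (fun r : ℝ => if pre f r u ∧ jump f r < ε then xst f r u else 0) := by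
  refine Summable.of_nonneg_of_le (fun r => ?_) (fun r => ?_)
    (summable_pre_xst (reg_f hf) u)
  · split
    · exact xst_nonneg' f _ _
    · exact le_rfl
  · split
    · rename_i h; rw [if_pos h.1]
    · split
      · exact xst_nonneg' f _ _
      · exact le_rfl

omit hε hFs in
lemma summable_pbig (u : ℝ) :
    Summable (fun r : ℝ => if pre f r u ∧ ε ≤ jump f r then xst f r u else 0) := by
  refine Summable.of_nonneg_of_le (fun r => ?_) (fun r => ?_)
    (summable_pre_xst (reg_f hf) u)
  · split
    · exact xst_nonneg' f _ _
    · exact le_rfl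
  · split
    · rename_i h; rw [if_pos h.1]
    · split
      · exact xst_nonneg' f _ _
      · exact le_rfl

omit hε hFs in
lemma Jdiff (u : ℝ) :
    Jop f u - Jeps f ε u
      = ∑' r : ℝ, (if pre f r u ∧ jump f r < ε then xst f r u else 0) := by
  have hpt : ∀ r : ℝ, (if pre f r u then xst f r u else 0)
      = (if pre f r u ∧ ε ≤ jump f r then xst f r u else 0)
        + (if pre f r u ∧ jump f r < ε then xst f r u else 0) := by
    intro r
    by_cases hp : pre f r u
    · rcases le_or_gt ε (jump f r) with hb | hb
      · rw [if_pos hp, if_pos (show pre f r u ∧ ε ≤ jump f r from ⟨hp, hb⟩),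
          if_neg (show ¬(pre f r u ∧ jump f r < ε) from fun hc => absurd hc.2 (not_lt.2 hb)),
          add_zero]
      · rw [if_pos hp,
          if_neg (show ¬(pre f r u ∧ ε ≤ jump f r) from fun hc => absurd hc.2 (not_le.2 hb)),
          if_pos (show pre f r u ∧ jump f r < ε from ⟨hp, hb⟩), zero_add]
    · rw [if_neg hp, if_neg (fun hc => hp hc.1), if_neg (fun hc => hp hc.1), add_zero]
  have h1 : Jop f u = Jeps f ε u + ∑' r : ℝ, (if pre f r u ∧ jump f r < ε then xst f r u else 0) := by
    rw [Jop, Jeps, tsum_congr hpt]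
    exact Summable.tsum_add (summable_pbig hf u) (summable_w hf u)
  linarith

omit hε hFs in
lemma hsmall_nonneg {a u : ℝ} (r : ℝ) :
    0 ≤ (if pre f r u ∧ a < r ∧ jump f r < ε
      then min (xst f r u) (jump f r - xst f r u) else 0) := by
  split
  · rename_i h
    refine le_min (xst_nonneg' f _ _) ?_
    have := xst_le_jump (reg_f hf) h.1
    linarith
  · exact le_rfl

omit hε hFs in
lemma summable_hsmall (a u : ℝ) :
    Summable (fun r : ℝ => if pre f r u ∧ a < r ∧ jump f r < ε
      then min (xst f r u) (jump f r - xst f r u) else 0) := by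
  refine Summable.of_nonneg_of_le (fun r => hsmall_nonneg hf r) (fun r => ?_)
    (summable_w hf (ε := ε) u)
  split
  · rename_i h
    rw [if_pos (show pre f r u ∧ jump f r < ε from ⟨h.1, h.2.2⟩)]
    exact (min_le_left _ _)
  · split
    · exact xst_nonneg' f _ _
    · exact le_rfl

/-- Splitting `dO f a u` into big-jump and small-jump parts. -/
lemma dO_f_split {a u : ℝ} (hpa : pre f a u) :
    dO f a u = (∑ r ∈ Fs, (if pre f r u ∧ a < r
        then min (xst f r u) (jump f r - xst f r u) else 0))
      + ∑' r : ℝ, (if pre f r u ∧ a < r ∧ jump f r < ε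
          then min (xst f r u) (jump f r - xst f r u) else 0) := by
  classical
  have hreg := reg_f hf
  have hpt : ∀ r : ℝ, (if pre f a r ∧ a < r ∧ pre f r u then cdel f r 0 (xst f r u) else 0)
      = (if (pre f r u ∧ a < r) ∧ ε ≤ jump f r
          then min (xst f r u) (jump f r - xst f r u) else 0)
        + (if pre f r u ∧ a < r ∧ jump f r < ε
          then min (xst f r u) (jump f r - xst f r u) else 0) := by
    intro r
    by_cases hcon : pre f r u ∧ a < r
    · have hpar : pre f a r := pre_down hreg hpa hcon.1 hcon.2.le
      rw [if_pos ⟨hpar, hcon.2, hcon.1⟩, cdel_zero_eq (xst_nonneg' f r u)]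
      rcases le_or_gt ε (jump f r) with hb | hb
      · rw [if_pos (show (pre f r u ∧ a < r) ∧ ε ≤ jump f r from ⟨hcon, hb⟩),
          if_neg (show ¬(pre f r u ∧ a < r ∧ jump f r < ε) from
            fun hc => absurd hc.2.2 (not_lt.2 hb)), add_zero]
      · rw [if_neg (show ¬((pre f r u ∧ a < r) ∧ ε ≤ jump f r) from
            fun hc => absurd hc.2 (not_le.2 hb)),
          if_pos (show pre f r u ∧ a < r ∧ jump f r < ε from ⟨hcon.1, hcon.2, hb⟩), zero_add]
    · rw [if_neg (fun hc => hcon ⟨hc.2.2, hc.2.1⟩), if_neg (fun hc => hcon hc.1),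
        if_neg (fun hc => hcon ⟨hc.1, hc.2.1⟩), add_zero]
  have hsumbig : Summable (fun r : ℝ => if (pre f r u ∧ a < r) ∧ ε ≤ jump f r
      then min (xst f r u) (jump f r - xst f r u) else 0) := by
    refine summable_of_ne_finset_zero (s := Fs) fun r hr => ?_
    exact if_neg (fun hc => hr ((hFs r).2 hc.2))
  have e1 : (∑' r : ℝ, (if (pre f r u ∧ a < r) ∧ ε ≤ jump f r
      then min (xst f r u) (jump f r - xst f r u) else 0))
      = ∑ r ∈ Fs, (if pre f r u ∧ a < r
        then min (xst f r u) (jump f r - xst f r u) else 0) := by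
    rw [tsum_eq_sum (s := Fs) (fun r hr => if_neg (fun hc => hr ((hFs r).2 hc.2)))]
    refine Finset.sum_congr rfl fun r hrF => ?_
    have hb := (hFs r).1 hrF
    by_cases hc : pre f r u ∧ a < r
    · rw [if_pos ⟨hc, hb⟩, if_pos hc]
    · rw [if_neg (fun hcc => hc hcc.1), if_neg hc]
  rw [dO, tsum_congr hpt, Summable.tsum_add hsumbig (summable_hsmall hf a u), e1]

/-- Evaluation of `dO (Jeps f ε) a u` for an ancestor `a` in the `Jeps`-sense. -/
lemma dO_g_eval {a u : ℝ} (ha0 : 0 ≤ a) (hu1 : u ≤ 1) (hpau : pre (Jeps f ε) a u) :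
    dO (Jeps f ε) a u = ∑ r ∈ Fs, (if pre f r u ∧ a < r
      then min (xst f r u) (jump f r - xst f r u) else 0) := by
  classical
  have hreg := reg_f hf
  have hregg := reg_Jeps hf hε hFs
  have habs : |(0:ℝ) - 0| = 0 := by norm_num
  rw [dO, tsum_eq_sum (s := Fs) ?hoff]
  case hoff =>
    intro r hrF
    by_cases hcond : pre (Jeps f ε) a r ∧ a < r ∧ pre (Jeps f ε) r u
    · rw [if_pos hcond]
      have hr0 : 0 ≤ r := ha0.trans hcond.2.1.le
      rw [xst_Jeps_zero_of_notFs hf hε hFs hr0 hcond.2.2.1 hu1 hrF, cdel, habs, sub_zero]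
      exact min_eq_left (hregg.jumpnn r)
    · exact if_neg hcond
  refine Finset.sum_congr rfl fun r hrF => ?_
  by_cases htar : pre f r u ∧ a < r
  · have hr0 : 0 ≤ r := ha0.trans htar.2.le
    have hpgru := pre_Jeps_of_pre hf hε hFs htar.1 hr0 hu1
    have hpgar : pre (Jeps f ε) a r := pre_down hregg hpau hpgru.1 htar.2.le
    rw [if_pos ⟨hpgar, htar.2, hpgru.1⟩, if_pos htar, hpgru.2, if_pos hrF, cdel,
      jump_Jeps_eq hf hε hFs hr0, if_pos hrF, zero_sub, abs_neg,
      abs_of_nonneg (xst_nonneg' f r u)]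
  · rw [if_neg htar]
    by_cases hcond : pre (Jeps f ε) a r ∧ a < r ∧ pre (Jeps f ε) r u
    · have hnp : ¬ pre f r u := fun hc => htar ⟨hc, hcond.2.1⟩
      have hr0 : 0 ≤ r := ha0.trans hcond.2.1.le
      have hx := (pre_Jeps_force hf hε hFs hr0 hcond.2.2.1 hu1 hcond.2.2).2
      rw [if_pos hcond, hx, if_neg (fun hc => hnp hc.2), cdel, habs, sub_zero]
      exact min_eq_left (hregg.jumpnn r)
    · exact if_neg hcond

/-- The difference of the two big-jump branch sums collapses to the `m'` term. -/
lemma Bdiff_eval {m m' u : ℝ} (hmm' : m ≤ m')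
    (hC4 : ∀ r ∈ Fs, m < r → r < m' → pre f r u → xst f r u = 0) :
    (∑ r ∈ Fs, (if pre f r u ∧ m < r then min (xst f r u) (jump f r - xst f r u) else 0))
      - (∑ r ∈ Fs, (if pre f r u ∧ m' < r then min (xst f r u) (jump f r - xst f r u) else 0))
    = if m' ∈ Fs ∧ pre f m' u ∧ m < m'
        then min (xst f m' u) (jump f m' - xst f m' u) else 0 := by
  classical
  rw [← Finset.sum_sub_distrib]
  have key : ∀ r ∈ Fs, r ≠ m' →
      (if pre f r u ∧ m < r then min (xst f r u) (jump f r - xst f r u) else 0)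
        - (if pre f r u ∧ m' < r then min (xst f r u) (jump f r - xst f r u) else 0) = 0 := by
    intro r hrF hrm'
    by_cases hp : pre f r u
    · rcases le_or_gt r m with h1 | h1
      · rw [if_neg (fun hc => absurd hc.2 (not_lt.2 h1)),
          if_neg (fun hc => absurd hc.2 (not_lt.2 (h1.trans hmm'))), sub_zero]
      · rcases lt_or_ge r m' with h2 | h2
        · rw [if_pos ⟨hp, h1⟩, if_neg (fun hc => absurd hc.2 (not_lt.2 h2.le)), sub_zero,
            hC4 r hrF h1 h2 hp]
          have hj : 0 ≤ jump f r := le_trans hε.le ((hFs r).1 hrF)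
          rw [min_eq_left (by linarith)]
        · have h2' : m' < r := lt_of_le_of_ne h2 (Ne.symm hrm')
          rw [if_pos (show pre f r u ∧ m < r from ⟨hp, hmm'.trans_lt h2'⟩),
            if_pos (show pre f r u ∧ m' < r from ⟨hp, h2'⟩), sub_self]
    · rw [if_neg (fun hc => hp hc.1), if_neg (fun hc => hp hc.1), sub_zero]
  by_cases hmem : m' ∈ Fs
  · rw [Finset.sum_eq_single_of_mem m' hmem (fun b hbF hb => key b hbF hb)]
    by_cases hc : pre f m' u ∧ m < m'
    · rw [if_pos (show pre f m' u ∧ m < m' from hc),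
        if_neg (show ¬(pre f m' u ∧ m' < m') from fun hcc => lt_irrefl m' hcc.2), sub_zero,
        if_pos (show m' ∈ Fs ∧ pre f m' u ∧ m < m' from ⟨hmem, hc.1, hc.2⟩)]
    · rw [if_neg hc,
        if_neg (show ¬(pre f m' u ∧ m' < m') from fun hcc => lt_irrefl m' hcc.2), sub_zero,
        if_neg (show ¬(m' ∈ Fs ∧ pre f m' u ∧ m < m') from fun hcc => hc ⟨hcc.2.1, hcc.2.2⟩)]
  · rw [if_neg (fun hc => hmem hc.1)]
    exact Finset.sum_eq_zero fun b hbF => key b hbF (fun hc => hmem (hc ▸ hbF))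

/-- Budget: small-jump branch sum plus possibly the `m`-term is at most `Jop - Jeps`. -/
lemma small_budget {m u : ℝ} (hpm : pre f m u) :
    (∑' r : ℝ, (if pre f r u ∧ m < r ∧ jump f r < ε
        then min (xst f r u) (jump f r - xst f r u) else 0))
      + (if jump f m < ε then xst f m u else 0)
    ≤ Jop f u - Jeps f ε u := by
  classical
  rw [Jdiff hf u]
  have hptsum : Summable (fun r : ℝ => if r = m then (if jump f m < ε then xst f m u else 0) else 0) := by
    refine summable_of_ne_finset_zero (s := {m}) fun r hr => ?_
    exact if_neg (fun hc => hr (by simp [hc]))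
  have hv : ∀ r : ℝ, (if pre f r u ∧ m < r ∧ jump f r < ε
        then min (xst f r u) (jump f r - xst f r u) else 0)
      + (if r = m then (if jump f m < ε then xst f m u else 0) else 0)
      ≤ (if pre f r u ∧ jump f r < ε then xst f r u else 0) := by
    intro r
    rcases eq_or_ne r m with rfl | hrm
    · rw [if_neg (fun hc => lt_irrefl r hc.2.1), if_pos rfl, zero_add]
      by_cases hb : jump f r < ε
      · rw [if_pos hb, if_pos ⟨hpm, hb⟩]
      · rw [if_neg hb, if_neg (fun hc => hb hc.2)]
    · rw [if_neg hrm, add_zero]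
      split
      · rename_i h
        rw [if_pos ⟨h.1, h.2.2⟩]
        exact min_le_left _ _
      · split
        · exact xst_nonneg' f _ _
        · exact le_rfl
  calc (∑' r : ℝ, (if pre f r u ∧ m < r ∧ jump f r < ε
          then min (xst f r u) (jump f r - xst f r u) else 0))
        + (if jump f m < ε then xst f m u else 0)
      = ∑' r : ℝ, ((if pre f r u ∧ m < r ∧ jump f r < ε
          then min (xst f r u) (jump f r - xst f r u) else 0)
        + (if r = m then (if jump f m < ε then xst f m u else 0) else 0)) := by
        rw [Summable.tsum_add (summable_hsmall hf m u) hptsum, tsum_ite_eq m _]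
    _ ≤ ∑' r : ℝ, (if pre f r u ∧ jump f r < ε then xst f r u else 0) :=
        Summable.tsum_le_tsum hv ((summable_hsmall hf m u).add hptsum) (summable_w hf u)

end TsumEval

end S13
set_option maxHeartbeats 1000000 in
theorem statement13 (f : ℝ → ℝ) (hf : IsExcursion f) (ε : ℝ) (hε : ε ∈ Ioo (0:ℝ) 1)
    (C : ℝ) (hC : ∀ u ∈ Icc (0:ℝ) 1, |Jop f u - Jeps f ε u| ≤ C) :
    ∀ s ∈ Icc (0:ℝ) 1, ∀ t ∈ Icc (0:ℝ) 1,
      |dL f s t - dL (Jeps f ε) s t| ≤ 2 * C := by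
  classical
  intro s hs t ht
  obtain ⟨hε0, hε1⟩ := hε
  have hfin := S13.bigjumps_finite hf hε0
  have hFs : ∀ q : ℝ, q ∈ hfin.toFinset ↔ ε ≤ jump f q := fun q => hfin.mem_toFinset
  have hreg := S13.reg_f hf
  have hregg := S13.reg_Jeps hf hε0 hFs
  obtain ⟨⟨hm0, hms, hmt⟩, ⟨hps, hpt⟩, hmax⟩ := S13.mrca_props hreg hs ht
  obtain ⟨⟨hm'0, hm's, hm't⟩, ⟨hp's, hp't⟩, hmax'⟩ := S13.mrca_props hregg hs ht
  have hmm' : mrca f s t ≤ mrca (Jeps f ε) s t := S13.mrca_le_mrca hf hε0 hFs hs ht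
  -- branch-sum evaluations
  have hBs := S13.dO_f_split hf hε0 hFs hps
  have hBt := S13.dO_f_split hf hε0 hFs hpt
  have hB's := S13.dO_g_eval hf hε0 hFs hm'0 hs.2 hp's
  have hB't := S13.dO_g_eval hf hε0 hFs hm'0 ht.2 hp't
  have hC4s : ∀ r ∈ hfin.toFinset, mrca f s t < r → r < mrca (Jeps f ε) s t →
      pre f r s → xst f r s = 0 :=
    fun r hrF h1 h2 hp => S13.xst_between_zero hf hε0 hFs hs ht hrF h1 h2 (Or.inl rfl) hp
  have hC4t : ∀ r ∈ hfin.toFinset, mrca f s t < r → r < mrca (Jeps f ε) s t →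
      pre f r t → xst f r t = 0 :=
    fun r hrF h1 h2 hp => S13.xst_between_zero hf hε0 hFs hs ht hrF h1 h2 (Or.inr rfl) hp
  have hDs := S13.Bdiff_eval hf hε0 hFs hmm' hC4s
  have hDt := S13.Bdiff_eval hf hε0 hFs hmm' hC4t
  -- xst of Jeps at the mrca
  have hXs := (S13.pre_Jeps_force hf hε0 hFs hm'0 hm's hs.2 hp's).2
  have hXt := (S13.pre_Jeps_force hf hε0 hFs hm'0 hm't ht.2 hp't).2
  -- budgets
  have hbud_s := S13.small_budget hf hε0 hFs hps
  have hbud_t := S13.small_budget hf hε0 hFs hpt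
  have hSs0 : 0 ≤ ∑' r : ℝ, (if pre f r s ∧ mrca f s t < r ∧ jump f r < ε
      then min (xst f r s) (jump f r - xst f r s) else 0) :=
    tsum_nonneg (fun r => S13.hsmall_nonneg hf r)
  have hSt0 : 0 ≤ ∑' r : ℝ, (if pre f r t ∧ mrca f s t < r ∧ jump f r < ε
      then min (xst f r t) (jump f r - xst f r t) else 0) :=
    tsum_nonneg (fun r => S13.hsmall_nonneg hf r)
  have hites0 : 0 ≤ (if jump f (mrca f s t) < ε then xst f (mrca f s t) s else 0) := by
    split
    · exact S13.xst_nonneg' f _ _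
    · exact le_rfl
  have hitet0 : 0 ≤ (if jump f (mrca f s t) < ε then xst f (mrca f s t) t else 0) := by
    split
    · exact S13.xst_nonneg' f _ _
    · exact le_rfl
  -- Jop - Jeps ∈ [0, C]
  have hdiffs0 : 0 ≤ Jop f s - Jeps f ε s := by
    rw [S13.Jdiff hf s]
    refine tsum_nonneg fun r => ?_
    split
    · exact S13.xst_nonneg' f _ _
    · exact le_rfl
  have hdifft0 : 0 ≤ Jop f t - Jeps f ε t := by
    rw [S13.Jdiff hf t]
    refine tsum_nonneg fun r => ?_
    split
    · exact S13.xst_nonneg' f _ _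
    · exact le_rfl
  have hDsC : Jop f s - Jeps f ε s ≤ C := by
    have h1 := hC s hs
    rwa [abs_of_nonneg hdiffs0] at h1
  have hDtC : Jop f t - Jeps f ε t ≤ C := by
    have h1 := hC t ht
    rwa [abs_of_nonneg hdifft0] at h1
  have hC0 : 0 ≤ C := hdiffs0.trans hDsC
  -- basic bounds at m
  have hxs0 : 0 ≤ xst f (mrca f s t) s := S13.xst_nonneg' f _ _
  have hxt0 : 0 ≤ xst f (mrca f s t) t := S13.xst_nonneg' f _ _
  have hxsj : xst f (mrca f s t) s ≤ jump f (mrca f s t) := S13.xst_le_jump hreg hps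
  have hxtj : xst f (mrca f s t) t ≤ jump f (mrca f s t) := S13.xst_le_jump hreg hpt
  have hjm0 : 0 ≤ jump f (mrca f s t) := hreg.jumpnn _
  have habs : |xst f (mrca f s t) s - xst f (mrca f s t) t| ≤ jump f (mrca f s t) :=
    abs_le.2 ⟨by linarith, by linarith⟩
  have hA0 : 0 ≤ cdel f (mrca f s t) (xst f (mrca f s t) s) (xst f (mrca f s t) t) := by
    rw [cdel]
    exact le_min (abs_nonneg _) (by linarith)
  have hAle : cdel f (mrca f s t) (xst f (mrca f s t) s) (xst f (mrca f s t) t)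
      ≤ xst f (mrca f s t) s + xst f (mrca f s t) t := by
    rw [cdel]
    exact (min_le_left _ _).trans (abs_le.2 ⟨by linarith, by linarith⟩)
  -- unfold and rewrite
  simp only [dL]
  rw [hBs, hBt, hB's, hB't, hXs, hXt]
  rw [abs_le]
  rcases em (mrca (Jeps f ε) s t ∈ hfin.toFinset
      ∧ pre f (mrca (Jeps f ε) s t) s ∧ pre f (mrca (Jeps f ε) s t) t) with hcase1 | hcase2
  · -- case 1 : m' = m carries a big jump and is a common f-ancestor
    have hmeq : mrca (Jeps f ε) s t = mrca f s t :=
      le_antisymm (hmax _ hm'0 hcase1.2.1 hcase1.2.2) hmm'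
    have hmF : mrca f s t ∈ hfin.toFinset := hmeq ▸ hcase1.1
    have hEs0 : (if mrca (Jeps f ε) s t ∈ hfin.toFinset ∧ pre f (mrca (Jeps f ε) s t) s
        ∧ mrca f s t < mrca (Jeps f ε) s t
        then min (xst f (mrca (Jeps f ε) s t) s)
          (jump f (mrca (Jeps f ε) s t) - xst f (mrca (Jeps f ε) s t) s) else 0) = 0 :=
      if_neg (fun hc => absurd (hmeq ▸ hc.2.2) (lt_irrefl _))
    have hEt0 : (if mrca (Jeps f ε) s t ∈ hfin.toFinset ∧ pre f (mrca (Jeps f ε) s t) t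
        ∧ mrca f s t < mrca (Jeps f ε) s t
        then min (xst f (mrca (Jeps f ε) s t) t)
          (jump f (mrca (Jeps f ε) s t) - xst f (mrca (Jeps f ε) s t) t) else 0) = 0 :=
      if_neg (fun hc => absurd (hmeq ▸ hc.2.2) (lt_irrefl _))
    have hA'A : cdel (Jeps f ε) (mrca (Jeps f ε) s t)
        (if mrca (Jeps f ε) s t ∈ hfin.toFinset ∧ pre f (mrca (Jeps f ε) s t) s
          then xst f (mrca (Jeps f ε) s t) s else 0)
        (if mrca (Jeps f ε) s t ∈ hfin.toFinset ∧ pre f (mrca (Jeps f ε) s t) t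
          then xst f (mrca (Jeps f ε) s t) t else 0)
        = cdel f (mrca f s t) (xst f (mrca f s t) s) (xst f (mrca f s t) t) := by
      rw [hmeq, if_pos ⟨hmF, hps⟩, if_pos ⟨hmF, hpt⟩, cdel, cdel,
        S13.jump_Jeps_eq hf hε0 hFs hm0, if_pos hmF]
    rw [hEs0] at hDs
    rw [hEt0] at hDt
    constructor
    · linarith [hA'A, hDs, hDt, hSs0, hSt0, hC0]
    · linarith [hA'A, hDs, hDt, hbud_s, hbud_t, hDsC, hDtC, hites0, hitet0, hSs0, hSt0]
  · -- case 2
    have hZ : cdel (Jeps f ε) (mrca (Jeps f ε) s t)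
        (if mrca (Jeps f ε) s t ∈ hfin.toFinset ∧ pre f (mrca (Jeps f ε) s t) s
          then xst f (mrca (Jeps f ε) s t) s else 0)
        (if mrca (Jeps f ε) s t ∈ hfin.toFinset ∧ pre f (mrca (Jeps f ε) s t) t
          then xst f (mrca (Jeps f ε) s t) t else 0)
        = (if mrca (Jeps f ε) s t ∈ hfin.toFinset ∧ pre f (mrca (Jeps f ε) s t) s
            ∧ mrca f s t < mrca (Jeps f ε) s t
            then min (xst f (mrca (Jeps f ε) s t) s)
              (jump f (mrca (Jeps f ε) s t) - xst f (mrca (Jeps f ε) s t) s) else 0)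
          + (if mrca (Jeps f ε) s t ∈ hfin.toFinset ∧ pre f (mrca (Jeps f ε) s t) t
            ∧ mrca f s t < mrca (Jeps f ε) s t
            then min (xst f (mrca (Jeps f ε) s t) t)
              (jump f (mrca (Jeps f ε) s t) - xst f (mrca (Jeps f ε) s t) t) else 0) := by
      by_cases hmem : mrca (Jeps f ε) s t ∈ hfin.toFinset
      · have hlt : mrca f s t < mrca (Jeps f ε) s t := by
          rcases eq_or_lt_of_le hmm' with heq | h
          · exact absurd ⟨hmem, heq ▸ hps, heq ▸ hpt⟩ hcase2
          · exact h
        by_cases hpms : pre f (mrca (Jeps f ε) s t) s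
        · have hpmt : ¬ pre f (mrca (Jeps f ε) s t) t := fun hc => hcase2 ⟨hmem, hpms, hc⟩
          rw [if_pos ⟨hmem, hpms⟩, if_neg (fun hc => hpmt hc.2), cdel,
            S13.jump_Jeps_eq hf hε0 hFs hm'0, if_pos hmem, sub_zero,
            abs_of_nonneg (S13.xst_nonneg' f _ _), if_pos ⟨hmem, hpms, hlt⟩,
            if_neg (fun hc => hpmt hc.2.1), add_zero]
        · by_cases hpmt : pre f (mrca (Jeps f ε) s t) t
          · rw [if_neg (fun hc => hpms hc.2), if_pos ⟨hmem, hpmt⟩, cdel,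
              S13.jump_Jeps_eq hf hε0 hFs hm'0, if_pos hmem, zero_sub, abs_neg,
              abs_of_nonneg (S13.xst_nonneg' f _ _), if_neg (fun hc => hpms hc.2.1),
              if_pos ⟨hmem, hpmt, hlt⟩, zero_add]
          · rw [if_neg (fun hc => hpms hc.2), if_neg (fun hc => hpmt hc.2), cdel, sub_self,
              abs_zero, sub_zero, if_neg (fun hc => hpms hc.2.1),
              if_neg (fun hc => hpmt hc.2.1), add_zero]
            exact min_eq_left (hregg.jumpnn _)
      · rw [if_neg (fun hc => hmem hc.1), if_neg (fun hc => hmem hc.1), cdel, sub_self,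
          abs_zero, sub_zero, if_neg (fun hc => hmem hc.1), if_neg (fun hc => hmem hc.1),
          add_zero]
        exact min_eq_left (hregg.jumpnn _)
    by_cases hmF : mrca f s t ∈ hfin.toFinset
    · -- m itself is a big jump : the δ-term of f vanishes
      have hlt2 : mrca f s t < mrca (Jeps f ε) s t := by
        rcases eq_or_lt_of_le hmm' with heq | h
        · exact absurd ⟨heq ▸ hmF, heq ▸ hps, heq ▸ hpt⟩ hcase2
        · exact h
      have hxeq := S13.xst_m_eq hf hε0 hFs hs ht hmF hlt2
      have hAeq : cdel f (mrca f s t) (xst f (mrca f s t) s) (xst f (mrca f s t) t) = 0 := by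
        rw [cdel, hxeq, sub_self, abs_zero, sub_zero]
        exact min_eq_left (hreg.jumpnn _)
      constructor
      · linarith [hZ, hDs, hDt, hSs0, hSt0, hC0, hAeq]
      · linarith [hZ, hDs, hDt, hbud_s, hbud_t, hDsC, hDtC, hites0, hitet0, hAeq, hSs0, hSt0]
    · -- m is a small jump : use the budget at m
      have hjm : jump f (mrca f s t) < ε :=
        lt_of_not_ge (fun hc => hmF ((hFs (mrca f s t)).2 hc))
      rw [if_pos hjm] at hbud_s hbud_t
      constructor
      · linarith [hZ, hDs, hDt, hSs0, hSt0, hC0, hA0]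
      · linarith [hZ, hDs, hDt, hbud_s, hbud_t, hDsC, hDtC, hA0, hAle, hSs0, hSt0,
          hxs0, hxt0]
end
end

section
/- Let f be an excursion and ε > 0. (a) If ε ∉ {Δ_t(f) : t ∈ [0,1]}, then J^ε is continuous at f with respect to the topology of uniform convergence: for every ν > 0 there is η > 0 such that every excursion g with ‖f − g‖_∞ < η satisfies ‖J^ε f − J^ε g‖_∞ ≤ ν. (b) ‖Jf − J^ε f‖_∞ → 0 as ε → 0+. -/
open Set Filter Topology
open scoped Classical

noncomputable section

variable {f g : ℝ → ℝ}

lemma IsExcursion.zero_of_neg (hf : IsExcursion f) {s : ℝ} (h : s < 0) : f s = 0 :=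
  hf.zero_outside s (fun hm => absurd hm.1 (not_le.2 h))

lemma IsExcursion.zero_of_gt_one (hf : IsExcursion f) {s : ℝ} (h : 1 < s) : f s = 0 :=
  hf.zero_outside s (fun hm => absurd hm.2 (not_le.2 h))

lemma IsExcursion.nonneg_all (hf : IsExcursion f) (t : ℝ) : 0 ≤ f t := by
  by_cases ht : t ∈ Icc (0:ℝ) 1
  · exact hf.nonneg t ht
  · rw [hf.zero_outside t ht]

lemma IsExcursion.lm_tendsto (hf : IsExcursion f) (t : ℝ) :
    Tendsto f (𝓝[<] t) (𝓝 (lm f t)) := by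
  rcases le_or_gt t 0 with h0 | h0
  · have hz : ∀ᶠ s in 𝓝[<] t, f s = 0 := by
      filter_upwards [self_mem_nhdsWithin] with s hs
      exact hf.zero_of_neg (lt_of_lt_of_le hs h0)
    have htt : Tendsto f (𝓝[<] t) (𝓝 0) := by
      refine Tendsto.congr' ?_ tendsto_const_nhds
      filter_upwards [hz] with s hs using hs.symm
    have : lm f t = 0 := by
      rcases eq_or_lt_of_le h0 with h | h
      · simp [lm, h.symm]
      · rw [lm, if_neg (ne_of_lt h)]
        exact leftLim_eq_of_tendsto htt
    rw [this]; exact htt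
  · rcases le_or_gt t 1 with h1 | h1
    · rw [lm, if_neg (ne_of_gt h0)]
      exact hf.leftLimEx t ⟨h0, h1⟩
    · have hz : ∀ᶠ s in 𝓝[<] t, f s = 0 := by
        filter_upwards [Ioo_mem_nhdsLT h1] with s hs
        exact hf.zero_of_gt_one hs.1
      have htt : Tendsto f (𝓝[<] t) (𝓝 0) := by
        refine Tendsto.congr' ?_ tendsto_const_nhds
        filter_upwards [hz] with s hs using hs.symm
      have : lm f t = 0 := by
        rw [lm, if_neg (by positivity)]
        exact leftLim_eq_of_tendsto htt
      rw [this]; exact htt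

lemma IsExcursion.lm_nonneg (hf : IsExcursion f) (t : ℝ) : 0 ≤ lm f t :=
  ge_of_tendsto' (hf.lm_tendsto t) (fun c => hf.nonneg_all c)

lemma IsExcursion.lm_zero_outside (hf : IsExcursion f) {t : ℝ} (ht : t ∉ Icc (0:ℝ) 1) :
    lm f t = 0 := by
  simp only [mem_Icc, not_and_or, not_le] at ht
  rcases ht with h | h
  · have := hf.lm_tendsto t
    refine tendsto_nhds_unique this ?_
    refine Tendsto.congr' ?_ tendsto_const_nhds
    filter_upwards [self_mem_nhdsWithin] with s hs
    exact (hf.zero_of_neg (hs.trans h)).symm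
  · have := hf.lm_tendsto t
    refine tendsto_nhds_unique this ?_
    refine Tendsto.congr' ?_ tendsto_const_nhds
    filter_upwards [Ioo_mem_nhdsLT h] with s hs
    exact (hf.zero_of_gt_one hs.1).symm

lemma IsExcursion.jump_nonneg_all (hf : IsExcursion f) (t : ℝ) : 0 ≤ jump f t := by
  by_cases ht : t ∈ Icc (0:ℝ) 1
  · exact hf.jump_nonneg t ht
  · simp [jump, hf.zero_outside t ht, hf.lm_zero_outside ht]

lemma IsExcursion.bddBelow_image (hf : IsExcursion f) (s t : ℝ) :
    BddBelow (f '' Icc s t) :=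
  ⟨0, by rintro y ⟨x, -, rfl⟩; exact hf.nonneg_all x⟩

lemma IsExcursion.infIcc_le (hf : IsExcursion f) {s x t : ℝ} (h1 : s ≤ x) (h2 : x ≤ t) :
    infIcc f s t ≤ f x :=
  csInf_le (hf.bddBelow_image s t) ⟨x, ⟨h1, h2⟩, rfl⟩

lemma le_infIcc {c s t : ℝ} (hst : s ≤ t) (h : ∀ x ∈ Icc s t, c ≤ f x) :
    c ≤ infIcc f s t :=
  le_csInf (by exact ⟨f s, ⟨s, left_mem_Icc.2 hst, rfl⟩⟩) (by rintro y ⟨x, hx, rfl⟩; exact h x hx)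

lemma IsExcursion.infIcc_nonneg (hf : IsExcursion f) {s t : ℝ} (hst : s ≤ t) :
    0 ≤ infIcc f s t :=
  le_infIcc hst (fun x _ => hf.nonneg_all x)

lemma IsExcursion.infIcc_mono (hf : IsExcursion f) {s t t' : ℝ} (hst : s ≤ t) (h : t ≤ t') :
    infIcc f s t' ≤ infIcc f s t :=
  csInf_le_csInf (hf.bddBelow_image s t') (by exact ⟨f s, ⟨s, left_mem_Icc.2 hst, rfl⟩⟩)
    (image_mono (Icc_subset_Icc le_rfl h))

lemma IsExcursion.inf_le_lm (hf : IsExcursion f) {a r : ℝ} (h : a < r) :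
    infIcc f a r ≤ lm f r := by
  refine ge_of_tendsto (hf.lm_tendsto r) ?_
  filter_upwards [Ioo_mem_nhdsLT h] with s hs
  exact hf.infIcc_le hs.1.le hs.2.le

lemma xst_nonneg (f : ℝ → ℝ) (r t : ℝ) : 0 ≤ xst f r t := by
  unfold xst; split_ifs
  · exact le_max_right _ _
  · exact le_refl 0

lemma xst_eq_of_pre {r t : ℝ} (h : pre f r t) : xst f r t = infIcc f r t - lm f r := by
  rw [xst, if_pos h.1, max_eq_left (sub_nonneg.2 h.2)]

lemma IsExcursion.xst_le_jump (hf : IsExcursion f) {r t : ℝ} (h : r ≤ t) :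
    xst f r t ≤ jump f r := by
  rw [xst, if_pos h]
  refine max_le ?_ (hf.jump_nonneg_all r)
  have := hf.infIcc_le (le_refl r) h
  simp only [jump]; linarith

lemma IsExcursion.pre_mono (hf : IsExcursion f) {r c t : ℝ} (h : pre f r t) (h1 : r ≤ c)
    (h2 : c ≤ t) : pre f r c :=
  ⟨h1, h.2.trans (hf.infIcc_mono h1 h2)⟩

lemma IsExcursion.xst_anti (hf : IsExcursion f) {r c t : ℝ} (h1 : r ≤ c) (h2 : c ≤ t) :
    xst f r t ≤ xst f r c := by
  rw [xst, xst, if_pos (h1.trans h2), if_pos h1]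
  exact max_le_max (by have := hf.infIcc_mono h1 h2; linarith) le_rfl


lemma IsExcursion.telAux (hf : IsExcursion f) {t : ℝ} (n : ℕ) :
    ∀ (R : Finset ℝ), R.card ≤ n → ∀ (hne : R.Nonempty), (∀ r ∈ R, pre f r t) →
      ∑ r ∈ R, xst f r t ≤ infIcc f (R.max' hne) t - lm f (R.min' hne) := by
  induction n with
  | zero =>
    intro R hcard hne hR
    exact absurd (Finset.card_eq_zero.1 (Nat.le_zero.1 hcard)) (Finset.nonempty_iff_ne_empty.1 hne)
  | succ n ih =>
    intro R hcard hne hR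
    
    set r₀ := R.min' hne with hr₀
    have hr₀R : r₀ ∈ R := R.min'_mem hne
    rcases (R.erase r₀).eq_empty_or_nonempty with he | hne'
    · have hall : ∀ x ∈ R, x = r₀ := by
        intro x hx
        by_contra hne2
        exact (Finset.ne_empty_of_mem (Finset.mem_erase.2 ⟨hne2, hx⟩)) he
      have hmax0 : R.max' hne = r₀ := hall _ (R.max'_mem hne)
      have hsum : ∑ r ∈ R, xst f r t = xst f r₀ t :=
        Finset.sum_eq_single_of_mem r₀ hr₀R (fun b hb hb' => absurd (hall b hb) hb')
      rw [hsum, hmax0, xst_eq_of_pre (hR _ hr₀R)]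
    · have hsub : R.erase r₀ ⊂ R := Finset.erase_ssubset hr₀R
      have hR' : ∀ r ∈ R.erase r₀, pre f r t := fun r hr => hR r (Finset.mem_of_mem_erase hr)
      have hcard' : (R.erase r₀).card ≤ n := by
        have := Finset.card_erase_of_mem hr₀R
        omega
      have IH := ih _ hcard' hne' hR'
      have hsum : ∑ r ∈ R, xst f r t = xst f r₀ t + ∑ r ∈ R.erase r₀, xst f r t :=
        (Finset.add_sum_erase R _ hr₀R).symm
      have hmin' : r₀ < (R.erase r₀).min' hne' := by
        have hmem := (R.erase r₀).min'_mem hne'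
        have h1 : (R.erase r₀).min' hne' ∈ R := Finset.mem_of_mem_erase hmem
        have h2 : (R.erase r₀).min' hne' ≠ r₀ := (Finset.mem_erase.1 hmem).1
        exact lt_of_le_of_ne (R.min'_le _ h1) (Ne.symm h2)
      have hlm : infIcc f r₀ t ≤ lm f ((R.erase r₀).min' hne') := by
        refine le_trans ?_ (hf.inf_le_lm hmin')
        exact hf.infIcc_mono hmin'.le (hR' _ ((R.erase r₀).min'_mem hne')).1
      have hmax : (R.erase r₀).max' hne' = R.max' hne := by
        apply le_antisymm
        · exact R.le_max' _ (Finset.mem_of_mem_erase ((R.erase r₀).max'_mem hne'))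
        · apply (R.erase r₀).le_max'
          refine Finset.mem_erase.2 ⟨?_, R.max'_mem hne⟩
          have hcard : 1 < R.card := Finset.one_lt_card.2
            ⟨_, Finset.mem_of_mem_erase ((R.erase r₀).min'_mem hne'), r₀, hr₀R, (Finset.mem_erase.1 ((R.erase r₀).min'_mem hne')).1⟩
          exact ne_of_gt (R.min'_lt_max'_of_card hcard)
      rw [hsum, xst_eq_of_pre (hR _ hr₀R)]
      rw [hmax] at IH
      linarith

lemma IsExcursion.tel (hf : IsExcursion f) {t : ℝ} (R : Finset ℝ) (hne : R.Nonempty)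
    (hR : ∀ r ∈ R, pre f r t) :
    ∑ r ∈ R, xst f r t ≤ infIcc f (R.max' hne) t - lm f (R.min' hne) :=
  hf.telAux R.card R le_rfl hne hR

lemma IsExcursion.finsum_piece_le (hf : IsExcursion f) {t M m : ℝ} (h0 : 0 ≤ M - m)
    (k : ℝ → ℝ) (hknn : ∀ r, 0 ≤ k r)
    (hk : ∀ r, k r ≠ 0 → k r ≤ xst f r t ∧ pre f r t ∧ infIcc f r t ≤ M ∧ m ≤ lm f r) :
    ∀ F : Finset ℝ, ∑ r ∈ F, k r ≤ M - m := by
  intro F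
  classical
  have hfil : ∑ r ∈ F, k r = ∑ r ∈ F.filter (fun r => k r ≠ 0), k r :=
    (Finset.sum_filter_ne_zero F).symm
  rw [hfil]
  rcases (F.filter (fun r => k r ≠ 0)).eq_empty_or_nonempty with he | hne
  · rw [he, Finset.sum_empty]; exact h0
  · set F' := F.filter (fun r => k r ≠ 0)
    have hmem : ∀ r ∈ F', k r ≠ 0 := fun r hr => (Finset.mem_filter.1 hr).2
    have h1 : ∑ r ∈ F', k r ≤ ∑ r ∈ F', xst f r t :=
      Finset.sum_le_sum (fun r hr => (hk r (hmem r hr)).1)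
    have h2 := hf.tel F' hne (fun r hr => (hk r (hmem r hr)).2.1)
    have h3 : infIcc f (F'.max' hne) t ≤ M := (hk _ (hmem _ (F'.max'_mem hne))).2.2.1
    have h4 : m ≤ lm f (F'.min' hne) := (hk _ (hmem _ (F'.min'_mem hne))).2.2.2
    linarith

lemma IsExcursion.summable_piece (hf : IsExcursion f) {t : ℝ} (k : ℝ → ℝ)
    (hknn : ∀ r, 0 ≤ k r) (hk : ∀ r, k r ≠ 0 → k r ≤ xst f r t ∧ pre f r t) :
    Summable k := by
  refine summable_of_sum_le hknn (c := f t - 0) ?_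
  refine hf.finsum_piece_le (t := t) (by simpa using hf.nonneg_all t) k hknn ?_
  intro r hr
  obtain ⟨h1, h2⟩ := hk r hr
  exact ⟨h1, h2, hf.infIcc_le h2.1 le_rfl, hf.lm_nonneg r⟩

lemma IsExcursion.tsum_piece_le (hf : IsExcursion f) {t M m : ℝ} (h0 : 0 ≤ M - m)
    (k : ℝ → ℝ) (hknn : ∀ r, 0 ≤ k r)
    (hk : ∀ r, k r ≠ 0 → k r ≤ xst f r t ∧ pre f r t ∧ infIcc f r t ≤ M ∧ m ≤ lm f r) :
    ∑' r, k r ≤ M - m := by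
  refine Summable.tsum_le_of_sum_le (hf.summable_piece (t := t) k hknn (fun r hr => ⟨(hk r hr).1, (hk r hr).2.1⟩)) ?_
  exact hf.finsum_piece_le h0 k hknn hk

lemma IsExcursion.finite_big_jumps (hf : IsExcursion f) {c : ℝ} (hc : 0 < c) :
    {t : ℝ | c ≤ jump f t}.Finite := by
  set A := {t : ℝ | c ≤ jump f t} with hA
  have hsub : A ⊆ Icc (0:ℝ) 1 := by
    intro t ht
    by_contra hout
    have : jump f t = 0 := by
      simp [jump, hf.zero_outside t hout, hf.lm_zero_outside hout]
    rw [hA, mem_setOf_eq, this] at ht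
    linarith
  -- each point has a neighborhood meeting A in at most itself
  have key : ∀ x ∈ Icc (0:ℝ) 1, ∃ U ∈ 𝓝 x, ∀ s ∈ A ∩ U, s = x := by
    intro x hx
    -- right side
    have hright : ∃ δR > 0, ∀ s, x < s → s < x + δR → jump f s < c := by
      rcases lt_or_ge x 1 with hx1 | hx1
      · have hrc := hf.rightCont x ⟨hx.1, hx1⟩
        have hev : ∀ᶠ s in 𝓝[>] x, |f s - f x| < c / 3 := by
          have := Metric.tendsto_nhds.1 hrc (c/3) (by linarith)
          simpa [Real.dist_eq] using this
        rcases (mem_nhdsGT_iff_exists_Ioo_subset).1 hev with ⟨u, hu, hsub'⟩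
        refine ⟨u - x, sub_pos.2 hu, ?_⟩
        intro s hs1 hs2
        have hs' : s ∈ Ioo x u := ⟨hs1, by linarith⟩
        have h1 : |f s - f x| < c / 3 := hsub' hs'
        have h2 : |lm f s - f x| ≤ c / 3 := by
          have := hf.lm_tendsto s
          have hev2 : ∀ᶠ u' in 𝓝[<] s, |f u' - f x| ≤ c / 3 := by
            filter_upwards [Ioo_mem_nhdsLT hs1] with u' hu'
            exact le_of_lt (hsub' ⟨hu'.1, hu'.2.trans hs'.2⟩)
          have ht' : Tendsto (fun u' => |f u' - f x|) (𝓝[<] s) (𝓝 (|lm f s - f x|)) :=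
            ((this.sub tendsto_const_nhds).abs)
          exact le_of_tendsto ht' hev2
        have : |jump f s| < c := by
          have : jump f s = (f s - f x) - (lm f s - f x) := by unfold jump; ring
          rw [this]
          calc |(f s - f x) - (lm f s - f x)| ≤ |f s - f x| + |lm f s - f x| := abs_sub _ _
          _ < c := by linarith
        calc jump f s ≤ |jump f s| := le_abs_self _
        _ < c := this
      · refine ⟨1, one_pos, ?_⟩
        intro s hs1 _
        have hs2 : (1:ℝ) < s := lt_of_le_of_lt hx1 hs1
        have : jump f s = 0 := by
          have hlm : lm f s = 0 := hf.lm_zero_outside (fun hm => absurd hm.2 (not_le.2 hs2))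
          simp [jump, hf.zero_of_gt_one hs2, hlm]
        linarith
    -- left side
    have hleft : ∃ δL > 0, ∀ s, x - δL < s → s < x → jump f s < c := by
      rcases le_or_gt x 0 with hx0 | hx0
      · refine ⟨1, one_pos, ?_⟩
        intro s _ hs2
        have hs' : s < 0 := lt_of_lt_of_le hs2 hx0
        have : jump f s = 0 := by
          have hlm : lm f s = 0 := hf.lm_zero_outside (fun hm => absurd hm.1 (not_le.2 hs'))
          simp [jump, hf.zero_of_neg hs', hlm]
        linarith
      · have hlc := hf.lm_tendsto x
        have hev : ∀ᶠ s in 𝓝[<] x, |f s - lm f x| < c / 3 := by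
          have := Metric.tendsto_nhds.1 hlc (c/3) (by linarith)
          simpa [Real.dist_eq] using this
        rcases (mem_nhdsLT_iff_exists_Ioo_subset).1 hev with ⟨u, hu, hsub'⟩
        refine ⟨x - u, sub_pos.2 hu, ?_⟩
        intro s hs1 hs2
        have hs' : s ∈ Ioo u x := ⟨by linarith, hs2⟩
        have h1 : |f s - lm f x| < c / 3 := hsub' hs'
        have h2 : |lm f s - lm f x| ≤ c / 3 := by
          have := hf.lm_tendsto s
          have hev2 : ∀ᶠ u' in 𝓝[<] s, |f u' - lm f x| ≤ c / 3 := by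
            filter_upwards [Ioo_mem_nhdsLT hs'.1] with u' hu'
            exact le_of_lt (hsub' ⟨hu'.1, hu'.2.trans hs'.2⟩)
          have ht' : Tendsto (fun u' => |f u' - lm f x|) (𝓝[<] s) (𝓝 (|lm f s - lm f x|)) :=
            ((this.sub tendsto_const_nhds).abs)
          exact le_of_tendsto ht' hev2
        have heq : jump f s = (f s - lm f x) - (lm f s - lm f x) := by unfold jump; ring
        have : |jump f s| < c := by
          rw [heq]
          calc |(f s - lm f x) - (lm f s - lm f x)| ≤ |f s - lm f x| + |lm f s - lm f x| :=
            abs_sub _ _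
          _ < c := by linarith
        calc jump f s ≤ |jump f s| := le_abs_self _
        _ < c := this
    obtain ⟨δR, hδR, hR⟩ := hright
    obtain ⟨δL, hδL, hL⟩ := hleft
    refine ⟨Ioo (x - δL) (x + δR), Ioo_mem_nhds (by linarith) (by linarith), ?_⟩
    rintro s ⟨hsA, hsU⟩
    by_contra hne
    rcases lt_or_gt_of_ne hne with h | h
    · exact absurd hsA (by simp only [hA, mem_setOf_eq, not_le]; exact hL s hsU.1 h)
    · exact absurd hsA (by simp only [hA, mem_setOf_eq, not_le]; exact hR s h hsU.2)
  choose U hU hUA using key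
  obtain ⟨s, hcov⟩ := isCompact_Icc.elim_nhds_subcover' (fun x hx => U x hx) hU
  refine Set.Finite.subset (Set.Finite.image (fun y : ↥(Icc (0:ℝ) 1) => (y : ℝ)) s.finite_toSet) ?_
  intro a ha
  have haI : a ∈ Icc (0:ℝ) 1 := hsub ha
  have hmem := hcov haI
  simp only [mem_iUnion, exists_prop] at hmem
  obtain ⟨x, hxs, hxU⟩ := hmem
  have hax : a = (x : ℝ) := hUA x x.2 a ⟨ha, hxU⟩
  rw [hax]
  exact Set.mem_image_of_mem _ (Finset.mem_coe.2 hxs)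

section Close

variable {η : ℝ}

lemma close_all (hf : IsExcursion f) (hg : IsExcursion g) (hη : 0 ≤ η)
    (h : ∀ t ∈ Icc (0:ℝ) 1, |f t - g t| ≤ η) : ∀ t, |f t - g t| ≤ η := by
  intro t
  by_cases ht : t ∈ Icc (0:ℝ) 1
  · exact h t ht
  · simp [hf.zero_outside t ht, hg.zero_outside t ht, hη]

lemma lm_close (hf : IsExcursion f) (hg : IsExcursion g)
    (h : ∀ t, |f t - g t| ≤ η) : ∀ t, |lm f t - lm g t| ≤ η := by
  intro t
  have hft := hf.lm_tendsto t
  have hgt := hg.lm_tendsto t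
  have : Tendsto (fun s => |f s - g s|) (𝓝[<] t) (𝓝 (|lm f t - lm g t|)) :=
    ((hft.sub hgt).abs)
  exact le_of_tendsto this (Eventually.of_forall h)

lemma jump_close (hf : IsExcursion f) (hg : IsExcursion g)
    (h : ∀ t, |f t - g t| ≤ η) : ∀ t, |jump f t - jump g t| ≤ 2 * η := by
  intro t
  have h1 := h t
  have h2 := lm_close hf hg h t
  have : jump f t - jump g t = (f t - g t) - (lm f t - lm g t) := by unfold jump; ring
  rw [this]
  calc |(f t - g t) - (lm f t - lm g t)| ≤ |f t - g t| + |lm f t - lm g t| := abs_sub _ _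
  _ ≤ 2 * η := by linarith

lemma infIcc_close (hf : IsExcursion f) (hg : IsExcursion g)
    (h : ∀ t, |f t - g t| ≤ η) {s t : ℝ} (hst : s ≤ t) :
    |infIcc f s t - infIcc g s t| ≤ η := by
  rw [abs_le]
  constructor
  · have : infIcc g s t - η ≤ infIcc f s t := by
      refine le_infIcc hst (fun x hx => ?_)
      have := abs_le.1 (h x)
      have := hg.infIcc_le hx.1 hx.2
      linarith
    linarith
  · have : infIcc f s t - η ≤ infIcc g s t := by
      refine le_infIcc hst (fun x hx => ?_)
      have := abs_le.1 (h x)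
      have := hf.infIcc_le hx.1 hx.2
      linarith
    linarith

lemma xst_close (hf : IsExcursion f) (hg : IsExcursion g)
    (h : ∀ t, |f t - g t| ≤ η) {r t : ℝ} (hrt : r ≤ t) :
    |xst f r t - xst g r t| ≤ 2 * η := by
  rw [xst, xst, if_pos hrt, if_pos hrt]
  calc |max (infIcc f r t - lm f r) 0 - max (infIcc g r t - lm g r) 0|
      ≤ |(infIcc f r t - lm f r) - (infIcc g r t - lm g r)| := abs_max_sub_max_le_abs _ _ _
  _ = |(infIcc f r t - infIcc g r t) - (lm f r - lm g r)| := by ring_nf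
  _ ≤ |infIcc f r t - infIcc g r t| + |lm f r - lm g r| := abs_sub _ _
  _ ≤ 2 * η := by
      have := infIcc_close hf hg h hrt
      have := lm_close hf hg h r
      linarith

end Close

set_option maxHeartbeats 1000000 in
lemma partA (hf : IsExcursion f) {ε : ℝ} (hε : 0 < ε)
    (hne : ∀ t ∈ Icc (0:ℝ) 1, jump f t ≠ ε) :
    ∀ ν > 0, ∃ η > 0, ∀ g : ℝ → ℝ, IsExcursion g →
      (∀ t ∈ Icc (0:ℝ) 1, |f t - g t| < η) →
      ∀ t ∈ Icc (0:ℝ) 1, |Jeps f ε t - Jeps g ε t| ≤ ν := by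
  intro ν hν
  have hfin := hf.finite_big_jumps (half_pos hε)
  set Kf := hfin.toFinset with hKf
  have hKmem : ∀ r : ℝ, r ∈ Kf ↔ ε / 2 ≤ jump f r := by
    intro r; rw [hKf, Set.Finite.mem_toFinset]; rfl
  -- the gap δ
  set T := Kf.image (fun r => |jump f r - ε|) with hT
  have hTpos : ∀ x ∈ T, 0 < x := by
    intro x hx
    rw [hT, Finset.mem_image] at hx
    obtain ⟨r, hr, rfl⟩ := hx
    have hrI : r ∈ Icc (0:ℝ) 1 := by
      by_contra hout
      have h0 : jump f r = 0 := by
        simp [jump, hf.zero_outside r hout, hf.lm_zero_outside hout]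
      have := (hKmem r).1 hr
      rw [h0] at this; linarith
    have := hne r hrI
    simpa [sub_eq_zero, abs_pos] using this
  have hδ0 : ∃ δ₀ > 0, ∀ r ∈ Kf, δ₀ ≤ |jump f r - ε| := by
    rcases T.eq_empty_or_nonempty with he | hTne
    · refine ⟨1, one_pos, fun r hr => ?_⟩
      exact absurd (Finset.mem_image_of_mem _ hr) (by rw [← hT, he]; simp)
    · refine ⟨T.min' hTne, hTpos _ (T.min'_mem hTne), fun r hr => ?_⟩
      exact T.min'_le _ (by rw [hT]; exact Finset.mem_image_of_mem _ hr)
  obtain ⟨δ₀, hδ₀pos, hδ₀⟩ := hδ0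
  set δ := min δ₀ (ε / 2) with hδdef
  have hδpos : 0 < δ := lt_min hδ₀pos (half_pos hε)
  have hgap : ∀ r : ℝ, δ ≤ |jump f r - ε| := by
    intro r
    by_cases hr : r ∈ Kf
    · exact le_trans (min_le_left _ _) (hδ₀ r hr)
    · have : jump f r < ε / 2 := by
        by_contra hge
        exact hr ((hKmem r).2 (not_lt.1 hge))
      have := hf.jump_nonneg_all r
      rw [abs_sub_comm, abs_of_pos (by linarith)]
      calc δ ≤ ε / 2 := min_le_right _ _
      _ ≤ ε - jump f r := by linarith
  set k := Kf.card with hk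
  set η := min (δ / 3) (ν / (2 * (k + 1))) with hη
  have hηpos : 0 < η := lt_min (by linarith) (by positivity)
  refine ⟨η, hηpos, ?_⟩
  intro g hg hclose t ht
  have hle : ∀ s, |f s - g s| ≤ η :=
    close_all hf hg hηpos.le (fun s hs => (hclose s hs).le)
  set F := fun r => if pre f r t ∧ ε ≤ jump f r then xst f r t else 0 with hF
  set G := fun r => if pre g r t ∧ ε ≤ jump g r then xst g r t else 0 with hG
  have hFnn : ∀ r, 0 ≤ F r := by
    intro r; rw [hF]; dsimp only; split_ifs
    · exact xst_nonneg f r t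
    · exact le_rfl
  have hGnn : ∀ r, 0 ≤ G r := by
    intro r; rw [hG]; dsimp only; split_ifs
    · exact xst_nonneg g r t
    · exact le_rfl
  have hFs : Summable F := by
    refine hf.summable_piece (t := t) F hFnn ?_
    intro r hr
    by_cases hcond : pre f r t ∧ ε ≤ jump f r
    · rw [hF]; dsimp only; rw [if_pos hcond]; exact ⟨le_rfl, hcond.1⟩
    · exact absurd (by rw [hF]; dsimp only; rw [if_neg hcond]) hr
  have hGs : Summable G := by
    refine hg.summable_piece (t := t) G hGnn ?_
    intro r hr
    by_cases hcond : pre g r t ∧ ε ≤ jump g r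
    · rw [hG]; dsimp only; rw [if_pos hcond]; exact ⟨le_rfl, hcond.1⟩
    · exact absurd (by rw [hG]; dsimp only; rw [if_neg hcond]) hr
  -- pointwise bound
  set B := fun r => if r ∈ Kf then 2 * η else 0 with hB
  have hbound : ∀ r, |F r - G r| ≤ B r := by
    intro r
    have hjc := jump_close hf hg hle r
    have hjca := abs_le.1 hjc
    by_cases hjf : ε ≤ jump f r
    · have hrK : r ∈ Kf := (hKmem r).2 (by linarith)
      rw [hB]; dsimp only; rw [if_pos hrK]
      by_cases hjg : ε ≤ jump g r
      · -- both large
        rw [hF, hG]; dsimp only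
        by_cases hpf : pre f r t
        · by_cases hpg : pre g r t
          · rw [if_pos ⟨hpf, hjf⟩, if_pos ⟨hpg, hjg⟩]
            exact xst_close hf hg hle hpf.1
          · rw [if_pos ⟨hpf, hjf⟩, if_neg (fun hc => hpg hc.1), sub_zero]
            rw [abs_of_nonneg (xst_nonneg f r t)]
            have hnpg : infIcc g r t < lm g r := by
              by_contra hcon
              exact hpg ⟨hpf.1, not_lt.1 hcon⟩
            have h1 := abs_le.1 (infIcc_close hf hg hle hpf.1)
            have h2 := abs_le.1 (lm_close hf hg hle r)
            rw [xst, if_pos hpf.1]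
            refine max_le (by linarith) (by linarith)
        · by_cases hpg : pre g r t
          · rw [if_neg (fun hc => hpf hc.1), if_pos ⟨hpg, hjg⟩, zero_sub, abs_neg]
            rw [abs_of_nonneg (xst_nonneg g r t)]
            have hnpf : infIcc f r t < lm f r := by
              by_contra hcon
              exact hpf ⟨hpg.1, not_lt.1 hcon⟩
            have h1 := abs_le.1 (infIcc_close hf hg hle hpg.1)
            have h2 := abs_le.1 (lm_close hf hg hle r)
            rw [xst, if_pos hpg.1]
            refine max_le (by linarith) (by linarith)
          · rw [if_neg (fun hc => hpf hc.1), if_neg (fun hc => hpg hc.1)]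
            simp [hηpos.le]
      · -- jump f ≥ ε but jump g < ε : impossible by the gap
        exfalso
        have h1 : jump f r - ε < δ := by
          have : jump f r ≤ jump g r + 2 * η := by linarith
          have hη3 : η ≤ δ / 3 := min_le_left _ _
          have : jump f r < ε + 2 * η := by linarith [not_le.1 hjg]
          linarith
        have := hgap r
        rw [abs_of_nonneg (by linarith)] at this
        linarith
    · by_cases hjg : ε ≤ jump g r
      · exfalso
        have hη3 : η ≤ δ / 3 := min_le_left _ _
        have h1 : ε - jump f r < δ := by linarith [not_le.1 hjf]
        have := hgap r
        rw [abs_sub_comm, abs_of_nonneg (by linarith [not_le.1 hjf])] at this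
        linarith
      · rw [hF, hG]; dsimp only
        rw [if_neg (fun hc => hjf hc.2), if_neg (fun hc => hjg hc.2)]
        rw [hB]; dsimp only
        split_ifs
        · simp [hηpos.le]
        · simp
  have hBs : Summable B := by
    refine summable_of_ne_finset_zero (s := Kf) ?_
    intro r hr
    rw [hB]; dsimp only; rw [if_neg hr]
  have hFGs : Summable (fun r => F r - G r) := hFs.sub hGs
  have heq : Jeps f ε t - Jeps g ε t = ∑' r, (F r - G r) := by
    rw [Jeps, Jeps, ← hF, ← hG]
    exact (Summable.tsum_sub hFs hGs).symm
  rw [heq]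
  calc |∑' r, (F r - G r)| ≤ ∑' r, |F r - G r| := by
        have := norm_tsum_le_tsum_norm (f := fun r => F r - G r)
          (by simpa [Real.norm_eq_abs] using hFGs.abs)
        simpa [Real.norm_eq_abs] using this
  _ ≤ ∑' r, B r := Summable.tsum_le_tsum hbound hFGs.abs hBs
  _ = ∑ r ∈ Kf, B r := tsum_eq_sum (fun r hr => by rw [hB]; dsimp only; rw [if_neg hr])
  _ = ∑ _r ∈ Kf, 2 * η := Finset.sum_congr rfl (fun r hr => by rw [hB]; dsimp only; rw [if_pos hr])
  _ = k * (2 * η) := by rw [Finset.sum_const, hk, nsmul_eq_mul]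
  _ ≤ ν := by
      have hη2 : η ≤ ν / (2 * (k + 1)) := min_le_right _ _
      have hk1 : (0:ℝ) < 2 * ((k:ℝ) + 1) := by positivity
      rw [le_div_iff₀ hk1] at hη2
      have hk0 : (0:ℝ) ≤ (k:ℝ) := Nat.cast_nonneg k
      nlinarith [hηpos.le]

def Df (f : ℝ → ℝ) (θ t r : ℝ) : ℝ := if pre f r t ∧ jump f r < θ then xst f r t else 0
def Sθ (f : ℝ → ℝ) (θ t : ℝ) : ℝ := ∑' r, Df f θ t r

lemma ite_xst_nonneg (f : ℝ → ℝ) (P : Prop) [Decidable P] (r t : ℝ) :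
    0 ≤ if P then xst f r t else 0 := by
  split_ifs
  · exact xst_nonneg f r t
  · exact le_rfl

lemma Df_nonneg (f : ℝ → ℝ) (θ t r : ℝ) : 0 ≤ Df f θ t r := by
  rw [Df]; split_ifs
  · exact xst_nonneg f r t
  · exact le_rfl

lemma IsExcursion.summable_Df (hf : IsExcursion f) (θ t : ℝ) : Summable (Df f θ t) := by
  refine hf.summable_piece (t := t) _ (Df_nonneg f θ t) ?_
  intro r hr
  by_cases hcond : pre f r t ∧ jump f r < θ
  · rw [Df, if_pos hcond]; exact ⟨le_rfl, hcond.1⟩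
  · exact absurd (by rw [Df, if_neg hcond]) hr

lemma IsExcursion.summable_Jop (hf : IsExcursion f) (t : ℝ) :
    Summable (fun r => if pre f r t then xst f r t else 0) := by
  refine hf.summable_piece (t := t) _ (fun r => ite_xst_nonneg f _ r t) ?_
  intro r hr
  by_cases hcond : pre f r t
  · rw [if_pos hcond]; exact ⟨le_rfl, hcond⟩
  · exact absurd (if_neg hcond) hr

lemma IsExcursion.summable_Jeps (hf : IsExcursion f) (θ t : ℝ) :
    Summable (fun r => if pre f r t ∧ θ ≤ jump f r then xst f r t else 0) := by
  refine hf.summable_piece (t := t) _ (fun r => ite_xst_nonneg f _ r t) ?_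
  intro r hr
  by_cases hcond : pre f r t ∧ θ ≤ jump f r
  · rw [if_pos hcond]; exact ⟨le_rfl, hcond.1⟩
  · exact absurd (if_neg hcond) hr

lemma IsExcursion.Jop_sub_Jeps (hf : IsExcursion f) (θ t : ℝ) :
    Jop f t - Jeps f θ t = Sθ f θ t := by
  have hdecomp : (fun r => if pre f r t then xst f r t else 0)
      = fun r => (if pre f r t ∧ θ ≤ jump f r then xst f r t else 0) + Df f θ t r := by
    funext r
    rw [Df]
    by_cases hpre : pre f r t
    · rcases le_or_gt θ (jump f r) with hj | hj
      · rw [if_pos hpre, if_pos ⟨hpre, hj⟩, if_neg (fun hc => absurd hc.2 (not_lt.2 hj))]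
        ring
      · rw [if_pos hpre, if_neg (fun hc : _ ∧ _ => absurd hc.2 (not_le.2 hj)),
          if_pos ⟨hpre, hj⟩]
        ring
    · rw [if_neg hpre, if_neg (fun hc : _ ∧ _ => hpre hc.1),
        if_neg (fun hc : _ ∧ _ => hpre hc.1)]
      ring
  rw [Jop, Jeps, Sθ]
  have := Summable.tsum_add (hf.summable_Jeps θ t) (hf.summable_Df θ t)
  rw [show (∑' r, if pre f r t then xst f r t else 0)
      = ∑' r, ((if pre f r t ∧ θ ≤ jump f r then xst f r t else 0) + Df f θ t r) from by
    rw [← hdecomp]]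
  rw [this]; ring

lemma IsExcursion.Sθ_nonneg (hf : IsExcursion f) (θ t : ℝ) : 0 ≤ Sθ f θ t :=
  tsum_nonneg (Df_nonneg f θ t)

lemma IsExcursion.Sθ_mono (hf : IsExcursion f) {θ θ' : ℝ} (h : θ' ≤ θ) (t : ℝ) :
    Sθ f θ' t ≤ Sθ f θ t := by
  refine Summable.tsum_le_tsum (fun r => ?_) (hf.summable_Df θ' t) (hf.summable_Df θ t)
  rw [Df, Df]
  by_cases hcond : pre f r t ∧ jump f r < θ'
  · rw [if_pos hcond, if_pos ⟨hcond.1, lt_of_lt_of_le hcond.2 h⟩]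
  · rw [if_neg hcond]
    split_ifs
    · exact xst_nonneg f r t
    · exact le_rfl

lemma IsExcursion.tendsto_S (hf : IsExcursion f) (c : ℝ) :
    Tendsto (fun n : ℕ => Sθ f (1 / (n + 1)) c) atTop (𝓝 0) := by
  have key : Tendsto (fun n : ℕ => ∑' r, Df f (1 / (n + 1)) c r) atTop
      (𝓝 (∑' _r : ℝ, (0:ℝ))) := by
    refine tendsto_tsum_of_dominated_convergence (hf.summable_Jop c) ?_ ?_
    · intro r
      by_cases hpre : pre f r c
      · rcases lt_or_ge 0 (jump f r) with hj | hj
        · have hev : ∀ᶠ n : ℕ in atTop, Df f (1 / (n + 1)) c r = 0 := by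
            have h2 : Tendsto (fun n : ℕ => 1 / ((n:ℝ) + 1)) atTop (𝓝 0) :=
              tendsto_one_div_add_atTop_nhds_zero_nat
            filter_upwards [h2.eventually (eventually_le_nhds hj)] with n hn
            rw [Df, if_neg (fun hcon => absurd hcon.2 (not_lt.2 hn))]
          exact Tendsto.congr' (hev.mono (fun n hn => hn.symm)) tendsto_const_nhds
        · have hx0 : xst f r c = 0 :=
            le_antisymm ((hf.xst_le_jump hpre.1).trans hj) (xst_nonneg f r c)
          have hz : ∀ n : ℕ, Df f (1 / (n + 1)) c r = 0 := by
            intro n; rw [Df]; split_ifs <;> simp [hx0]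
          exact (tendsto_congr (fun n => (hz n).symm)).1 tendsto_const_nhds
      · have hz : ∀ n : ℕ, Df f (1 / (n + 1)) c r = 0 := by
          intro n; rw [Df, if_neg (fun hcon => hpre hcon.1)]
        exact (tendsto_congr (fun n => (hz n).symm)).1 tendsto_const_nhds
    · refine Eventually.of_forall (fun n => fun r => ?_)
      rw [Real.norm_eq_abs, abs_of_nonneg (Df_nonneg f _ c r), Df]
      by_cases hcond : pre f r c ∧ jump f r < 1 / (n + 1)
      · rw [if_pos hcond, if_pos hcond.1]
      · rw [if_neg hcond]
        split_ifs
        · exact xst_nonneg f r c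
        · exact le_rfl
  simpa [tsum_zero, Sθ] using key

set_option maxHeartbeats 1000000 in
lemma IsExcursion.Sθ_est (hf : IsExcursion f) {θ t L γ ν : ℝ} (hγ : 0 < γ) (hθ : 0 ≤ θ)
    (hν : 0 ≤ ν)
    (hLleft : ∀ s, L - γ < s → s < L → |f s - lm f L| < ν / 8)
    (hLright : ∀ s, L ≤ s → s < L + γ → |f s - f L| < ν / 8)
    (ht : |t - L| < γ / 2) :
    Sθ f θ t ≤ Sθ f θ (L - γ / 2) + θ + ν / 2 := by
  set c := L - γ / 2 with hc
  have hcL : c < L := by rw [hc]; linarith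
  have htc : c ≤ t := by
    have := abs_lt.1 ht
    rw [hc]; linarith
  have htL : t < L + γ / 2 := by have := abs_lt.1 ht; linarith
  set D := Df f θ t with hD
  set kA := fun r => if r ≤ c then D r else 0 with hkA
  set kB1 := fun r => if c < r ∧ r < L then D r else 0 with hkB1
  set kL := fun r => if r = L then D r else 0 with hkL
  set kB2 := fun r => if L < r then D r else 0 with hkB2
  have hDnn : ∀ r, 0 ≤ D r := Df_nonneg f θ t
  have hkAnn : ∀ r, 0 ≤ kA r := by
    intro r; rw [hkA]; dsimp only; split_ifs; exacts [hDnn r, le_rfl]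
  have hkB1nn : ∀ r, 0 ≤ kB1 r := by
    intro r; rw [hkB1]; dsimp only; split_ifs; exacts [hDnn r, le_rfl]
  have hkLnn : ∀ r, 0 ≤ kL r := by
    intro r; rw [hkL]; dsimp only; split_ifs; exacts [hDnn r, le_rfl]
  have hkB2nn : ∀ r, 0 ≤ kB2 r := by
    intro r; rw [hkB2]; dsimp only; split_ifs; exacts [hDnn r, le_rfl]
  have hDfacts : ∀ r, D r ≠ 0 → D r ≤ xst f r t ∧ pre f r t ∧ jump f r < θ := by
    intro r hr
    by_cases hcond : pre f r t ∧ jump f r < θ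
    · rw [hD, Df, if_pos hcond]; exact ⟨le_rfl, hcond⟩
    · exact absurd (by rw [hD, Df, if_neg hcond]) hr
  have hsum_piece : ∀ k : ℝ → ℝ, (∀ r, k r = D r ∨ k r = 0) → Summable k := by
    intro k hk
    refine hf.summable_piece (t := t) k (fun r => ?_) ?_
    · rcases hk r with h | h
      · rw [h]; exact hDnn r
      · rw [h]
    intro r hr
    rcases hk r with h | h
    · rw [h]
      obtain ⟨h1, h2, _⟩ := hDfacts r (by rw [← h]; exact hr)
      exact ⟨h1, h2⟩
    · exact absurd h hr
  have hkAs : Summable kA := hsum_piece kA (fun r => by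
    rw [hkA]; dsimp only; split_ifs; exacts [Or.inl rfl, Or.inr rfl])
  have hkB1s : Summable kB1 := hsum_piece kB1 (fun r => by
    rw [hkB1]; dsimp only; split_ifs; exacts [Or.inl rfl, Or.inr rfl])
  have hkLs : Summable kL := hsum_piece kL (fun r => by
    rw [hkL]; dsimp only; split_ifs; exacts [Or.inl rfl, Or.inr rfl])
  have hkB2s : Summable kB2 := hsum_piece kB2 (fun r => by
    rw [hkB2]; dsimp only; split_ifs; exacts [Or.inl rfl, Or.inr rfl])
  have hdecomp : ∀ r, D r = kA r + kB1 r + kL r + kB2 r := by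
    intro r
    rw [hkA, hkB1, hkL, hkB2]; dsimp only
    rcases le_or_gt r c with h1 | h1
    · rw [if_pos h1, if_neg (fun hcon => absurd h1 (not_le.2 hcon.1)),
        if_neg (by rintro rfl; exact absurd h1 (not_le.2 hcL)),
        if_neg (fun hcon => absurd (h1.trans hcL.le) (not_le.2 hcon))]
      ring
    · rcases lt_trichotomy r L with h2 | h2 | h2
      · rw [if_neg (not_le.2 h1), if_pos ⟨h1, h2⟩, if_neg (ne_of_lt h2),
          if_neg (not_lt.2 h2.le)]
        ring
      · rw [if_neg (not_le.2 h1), if_neg (fun hcon => absurd h2 (ne_of_lt hcon.2)),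
          if_pos h2, if_neg (not_lt.2 h2.le)]
        ring
      · rw [if_neg (not_le.2 h1), if_neg (fun hcon => absurd h2 (not_lt.2 hcon.2.le)),
          if_neg (ne_of_gt h2), if_pos h2]
        ring
  have htsum : Sθ f θ t = (∑' r, kA r) + (∑' r, kB1 r) + (∑' r, kL r) + (∑' r, kB2 r) := by
    rw [Sθ]
    rw [show (fun r => Df f θ t r) = fun r => kA r + kB1 r + kL r + kB2 r from
      funext (fun r => hdecomp r)]
    rw [Summable.tsum_add ((hkAs.add hkB1s).add hkLs) hkB2s, Summable.tsum_add (hkAs.add hkB1s) hkLs,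
      Summable.tsum_add hkAs hkB1s]
  -- piece A
  have hA : (∑' r, kA r) ≤ Sθ f θ c := by
    refine Summable.tsum_le_tsum (fun r => ?_) hkAs (hf.summable_Df θ c)
    rw [hkA]; dsimp only
    by_cases h1 : r ≤ c
    · rw [if_pos h1]
      by_cases h2 : D r = 0
      · rw [h2]; exact Df_nonneg f θ c r
      · obtain ⟨_, hpre, hjump⟩ := hDfacts r h2
        have hprec : pre f r c := hf.pre_mono hpre h1 htc
        have hxx : D r ≤ xst f r c := by
          rw [hD, Df, if_pos ⟨hpre, hjump⟩]
          exact hf.xst_anti h1 htc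
        rw [Df, if_pos ⟨hprec, hjump⟩]
        exact hxx
    · rw [if_neg h1]; exact Df_nonneg f θ c r
  -- piece B1
  have hB1 : (∑' r, kB1 r) ≤ ν / 4 := by
    have := hf.tsum_piece_le (t := t) (M := lm f L + ν / 8) (m := lm f L - ν / 8)
      (by linarith) kB1 hkB1nn ?_
    · linarith
    · intro r hr
      have hrB : c < r ∧ r < L := by
        by_contra hcon
        exact hr (by rw [hkB1]; dsimp only; rw [if_neg hcon])
      have hDr : D r ≠ 0 := by
        intro h0
        exact hr (by rw [hkB1]; dsimp only; rw [if_pos hrB, h0])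
      obtain ⟨hle, hpre, _⟩ := hDfacts r hDr
      have hkeq : kB1 r = D r := by rw [hkB1]; dsimp only; rw [if_pos hrB]
      refine ⟨hkeq ▸ hle, hpre, ?_, ?_⟩
      · have h1 : infIcc f r t ≤ f r := hf.infIcc_le le_rfl hpre.1
        have h2 := abs_lt.1 (hLleft r (by rw [hc] at hrB; linarith [hrB.1]) hrB.2)
        linarith
      · have h1 : infIcc f c r ≤ lm f r := hf.inf_le_lm hrB.1
        have h2 : lm f L - ν / 8 ≤ infIcc f c r := by
          refine le_infIcc hrB.1.le (fun x hx => ?_)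
          have hx1 : L - γ < x := by rw [hc] at hx; linarith [hx.1]
          have hx2 : x < L := lt_of_le_of_lt hx.2 hrB.2
          have := abs_lt.1 (hLleft x hx1 hx2)
          linarith
        linarith
  -- piece L
  have hL : (∑' r, kL r) ≤ θ := by
    have heval : (∑' r, kL r) = kL L := by
      refine tsum_eq_single L (fun b hb => ?_)
      rw [hkL]; dsimp only; rw [if_neg hb]
    rw [heval, hkL]; dsimp only; rw [if_pos rfl]
    by_cases h2 : D L = 0
    · rw [h2]; exact hθ
    · obtain ⟨_, hpre, hjump⟩ := hDfacts L h2
      have : D L ≤ xst f L t := by rw [hD, Df, if_pos ⟨hpre, hjump⟩]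
      exact this.trans ((hf.xst_le_jump hpre.1).trans hjump.le)
  -- piece B2
  have hB2 : (∑' r, kB2 r) ≤ ν / 4 := by
    have := hf.tsum_piece_le (t := t) (M := f L + ν / 8) (m := f L - ν / 8)
      (by linarith) kB2 hkB2nn ?_
    · linarith
    · intro r hr
      have hrB : L < r := by
        by_contra hcon
        exact hr (by rw [hkB2]; dsimp only; rw [if_neg hcon])
      have hDr : D r ≠ 0 := by
        intro h0
        exact hr (by rw [hkB2]; dsimp only; rw [if_pos hrB, h0])
      obtain ⟨hle, hpre, _⟩ := hDfacts r hDr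
      have hkeq : kB2 r = D r := by rw [hkB2]; dsimp only; rw [if_pos hrB]
      have hrt : r ≤ t := hpre.1
      refine ⟨hkeq ▸ hle, hpre, ?_, ?_⟩
      · have h1 : infIcc f r t ≤ f r := hf.infIcc_le le_rfl hpre.1
        have h2 := abs_lt.1 (hLright r hrB.le (by linarith [hγ]))
        linarith
      · have h1 : infIcc f L r ≤ lm f r := hf.inf_le_lm hrB
        have h2 : f L - ν / 8 ≤ infIcc f L r := by
          refine le_infIcc hrB.le (fun x hx => ?_)
          have := abs_lt.1 (hLright x hx.1 (by linarith [hx.2, hγ]))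
          linarith
        linarith
  rw [htsum]
  linarith

lemma IsExcursion.partB (hf : IsExcursion f) :
    ∀ ν > 0, ∃ ε₀ > 0, ∀ ε' : ℝ, 0 < ε' → ε' ≤ ε₀ →
      ∀ t ∈ Icc (0:ℝ) 1, |Jop f t - Jeps f ε' t| ≤ ν := by
  intro ν hν
  suffices h : ∃ ε₀ > 0, ∀ t ∈ Icc (0:ℝ) 1, Sθ f ε₀ t ≤ ν by
    obtain ⟨ε₀, hε₀, hS⟩ := h
    refine ⟨ε₀, hε₀, fun ε' h1 h2 t ht => ?_⟩
    rw [hf.Jop_sub_Jeps ε' t, abs_of_nonneg (hf.Sθ_nonneg ε' t)]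
    exact (hf.Sθ_mono h2 t).trans (hS t ht)
  by_contra hcon
  push_neg at hcon
  have hsel : ∀ n : ℕ, ∃ t ∈ Icc (0:ℝ) 1, ν < Sθ f (1 / ((n:ℝ) + 1)) t := by
    intro n
    obtain ⟨t, ht, hlt⟩ := hcon (1 / ((n:ℝ) + 1)) (by positivity)
    exact ⟨t, ht, hlt⟩
  choose tn htnI htnS using hsel
  obtain ⟨L, hLI, φ, hφ, hφt⟩ := isCompact_Icc.tendsto_subseq htnI
  have hleft : ∃ γ₁ > 0, ∀ s, L - γ₁ < s → s < L → |f s - lm f L| < ν / 8 := by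
    have hev : ∀ᶠ s in 𝓝[<] L, |f s - lm f L| < ν / 8 := by
      have := Metric.tendsto_nhds.1 (hf.lm_tendsto L) (ν / 8) (by linarith)
      simpa [Real.dist_eq] using this
    rcases mem_nhdsLT_iff_exists_Ioo_subset.1 hev with ⟨u, hu, hsub'⟩
    refine ⟨L - u, sub_pos.2 hu, fun s h1 h2 => ?_⟩
    exact hsub' (⟨by linarith, h2⟩ : s ∈ Ioo u L)
  have hright : ∃ γ₂ > 0, ∀ s, L ≤ s → s < L + γ₂ → |f s - f L| < ν / 8 := by
    rcases lt_or_ge L 1 with hL1 | hL1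
    · have hev : ∀ᶠ s in 𝓝[>] L, |f s - f L| < ν / 8 := by
        have := Metric.tendsto_nhds.1 (hf.rightCont L ⟨hLI.1, hL1⟩) (ν / 8) (by linarith)
        simpa [Real.dist_eq] using this
      rcases mem_nhdsGT_iff_exists_Ioo_subset.1 hev with ⟨u, hu, hsub'⟩
      refine ⟨u - L, sub_pos.2 hu, fun s h1 h2 => ?_⟩
      rcases eq_or_lt_of_le h1 with heq | h1'
      · rw [← heq]; simpa using (by linarith : (0:ℝ) < ν / 8)
      · exact hsub' (⟨h1', by linarith⟩ : s ∈ Ioo L u)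
    · have hL1' : L = 1 := le_antisymm hLI.2 hL1
      refine ⟨1, one_pos, fun s h1 _ => ?_⟩
      have hfs : f s = 0 := by
        rcases eq_or_lt_of_le h1 with heq | h1'
        · rw [← heq, hL1']; exact hf.one
        · exact hf.zero_of_gt_one (by rw [hL1'] at h1'; exact h1')
      rw [hfs, hL1', hf.one]; simpa using (by linarith : (0:ℝ) < ν / 8)
  obtain ⟨γ₁, hγ₁, hLleft⟩ := hleft
  obtain ⟨γ₂, hγ₂, hLright⟩ := hright
  set γ := min γ₁ γ₂ with hγdef
  have hγ : 0 < γ := lt_min hγ₁ hγ₂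
  have hLleft' : ∀ s, L - γ < s → s < L → |f s - lm f L| < ν / 8 := by
    intro s h1 h2
    exact hLleft s (by have := min_le_left γ₁ γ₂; linarith) h2
  have hLright' : ∀ s, L ≤ s → s < L + γ → |f s - f L| < ν / 8 := by
    intro s h1 h2
    exact hLright s h1 (by have := min_le_right γ₁ γ₂; linarith)
  have hev1 : ∀ᶠ n in atTop, |tn (φ n) - L| < γ / 2 := by
    have := Metric.tendsto_nhds.1 hφt (γ / 2) (by linarith)
    simpa [Real.dist_eq] using this
  have hev2 : ∀ᶠ n : ℕ in atTop, (1:ℝ) / ((φ n : ℝ) + 1) ≤ ν / 4 := by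
    have h1 : Tendsto (fun n : ℕ => (1:ℝ) / ((φ n : ℝ) + 1)) atTop (𝓝 0) :=
      tendsto_one_div_add_atTop_nhds_zero_nat.comp hφ.tendsto_atTop
    exact h1.eventually (eventually_le_nhds (by linarith))
  have hev3 : ∀ᶠ n : ℕ in atTop, Sθ f (1 / ((φ n : ℝ) + 1)) (L - γ / 2) ≤ ν / 4 := by
    have h1 : Tendsto (fun n : ℕ => Sθ f (1 / ((φ n : ℝ) + 1)) (L - γ / 2)) atTop (𝓝 0) :=
      (hf.tendsto_S (L - γ / 2)).comp hφ.tendsto_atTop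
    exact h1.eventually (eventually_le_nhds (by linarith))
  obtain ⟨n, h1, h2, h3⟩ := (hev1.and (hev2.and hev3)).exists
  obtain ⟨h2, h3⟩ := And.intro h2 h3
  have hθpos : (0:ℝ) < 1 / ((φ n : ℝ) + 1) := by positivity
  have hest := hf.Sθ_est (θ := 1 / ((φ n : ℝ) + 1)) (t := tn (φ n)) (L := L) (γ := γ)
    (ν := ν) hγ hθpos.le hν.le hLleft' hLright' h1
  have hgt := htnS (φ n)
  have hend : Sθ f (1 / ((φ n : ℝ) + 1)) (tn (φ n)) ≤ ν := by
    calc Sθ f (1 / ((φ n : ℝ) + 1)) (tn (φ n))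
        ≤ Sθ f (1 / ((φ n : ℝ) + 1)) (L - γ / 2) + 1 / ((φ n : ℝ) + 1) + ν / 2 := hest
    _ ≤ ν / 4 + ν / 4 + ν / 2 := by linarith
    _ = ν := by ring
  linarith

theorem statement14 (f : ℝ → ℝ) (hf : IsExcursion f) (ε : ℝ) (hε : 0 < ε) :
    ((∀ t ∈ Icc (0:ℝ) 1, jump f t ≠ ε) →
      ∀ ν > 0, ∃ η > 0, ∀ g : ℝ → ℝ, IsExcursion g →
        (∀ t ∈ Icc (0:ℝ) 1, |f t - g t| < η) →
        ∀ t ∈ Icc (0:ℝ) 1, |Jeps f ε t - Jeps g ε t| ≤ ν) ∧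
    (∀ ν > 0, ∃ ε₀ > 0, ∀ ε' : ℝ, 0 < ε' → ε' ≤ ε₀ →
      ∀ t ∈ Icc (0:ℝ) 1, |Jop f t - Jeps f ε' t| ≤ ν) := by
  exact ⟨fun hne ν hν => partA hf hε hne ν hν, hf.partB⟩
end
end

section
/- Let (X,d) be a compact geodesic metric space. The following are equivalent: (i) X is a vernation tree; (ii) for all x,y ∈ X with x ≠ y there exist u,v ∈ X∖{x,y} such that x and y lie in different connected components of X∖{u,v}; (iii) for all x,y ∈ X with x ≠ y there exist u,v ∈ X∖{x,y} such that x and y lie in different connected components of X∖{u,v} and 2·min(d(x,u), d(x,v), d(y,u), d(y,v)) ≥ d(x,y). -/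
open Set

noncomputable section

/-- A geodesic metric space: any two points are joined by a geodesic. -/
def IsGeodesicSpace (X : Type*) [MetricSpace X] : Prop :=
  ∀ x y : X, ∃ γ : ℝ → X, γ 0 = x ∧ γ 1 = y ∧
    ∀ s ∈ Icc (0:ℝ) 1, ∀ t ∈ Icc (0:ℝ) 1, dist (γ s) (γ t) = |s - t| * dist x y

/-- A loop on `X` based at `x`: a continuous map on `[0,1]`, injective on `[0,1)`,
with `γ 0 = γ 1 = x`. -/
def IsLoop {X : Type*} [MetricSpace X] (γ : ℝ → X) (x : X) : Prop :=
  ContinuousOn γ (Icc 0 1) ∧ InjOn γ (Ico 0 1) ∧ γ 0 = x ∧ γ 1 = x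

/-- A vernation tree: a geodesic space in which two loops based at the same point
have equal images or images meeting only at the base point. -/
def IsVernationTree (X : Type*) [MetricSpace X] : Prop :=
  IsGeodesicSpace X ∧
    ∀ (x : X) (γ₁ γ₂ : ℝ → X), IsLoop γ₁ x → IsLoop γ₂ x →
      γ₁ '' Icc 0 1 = γ₂ '' Icc 0 1 ∨ γ₁ '' Icc 0 1 ∩ γ₂ '' Icc 0 1 = {x}


section Aux

variable {X : Type*} [MetricSpace X]

/-! ### Generic topology helpers -/

lemma continuousOn_union_closed {Y : Type*} [TopologicalSpace Y] {f : ℝ → Y} {s t : Set ℝ}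
    (hs : IsClosed s) (ht : IsClosed t) (hfs : ContinuousOn f s) (hft : ContinuousOn f t) :
    ContinuousOn f (s ∪ t) := by
  intro x hx
  have hmem : ∀ {u : Set ℝ}, IsClosed u → ContinuousOn f u → x ∉ u →
      ContinuousWithinAt f u x := by
    intro u hu _ hxu
    apply continuousWithinAt_of_notMem_closure
    rwa [hu.closure_eq]
  rcases hx with hx | hx
  · by_cases hxt : x ∈ t
    · exact (hfs x hx).union (hft x hxt)
    · exact (hfs x hx).union (hmem ht hft hxt)
  · by_cases hxs : x ∈ s
    · exact (hfs x hxs).union (hft x hx)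
    · exact (hmem hs hfs hxs).union (hft x hx)

lemma glue_continuousOn {Y : Type*} [TopologicalSpace Y] {f g : ℝ → Y} {l c r : ℝ}
    (hl : l ≤ c) (hr : c ≤ r) (hf : ContinuousOn f (Icc l c)) (hg : ContinuousOn g (Icc c r))
    (hfg : f c = g c) :
    ContinuousOn (fun t => if t ≤ c then f t else g t) (Icc l r) := by
  have h1 : ContinuousOn (fun t => if t ≤ c then f t else g t) (Icc l c) := by
    apply hf.congr
    intro t ht
    simp [ht.2]
  have h2 : ContinuousOn (fun t => if t ≤ c then f t else g t) (Icc c r) := by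
    apply hg.congr
    intro t ht
    by_cases h : t ≤ c
    · have : t = c := le_antisymm h ht.1
      simp [h, this, hfg]
    · simp [h]
  have := continuousOn_union_closed isClosed_Icc isClosed_Icc h1 h2
  rwa [Icc_union_Icc_eq_Icc hl hr] at this

/-! ### Geodesic segments -/

/-- A geodesic parametrized on `[0,1]` from `x` to `y`. -/
def IsGeoSeg (γ : ℝ → X) (x y : X) : Prop :=
  γ 0 = x ∧ γ 1 = y ∧
    ∀ s ∈ Icc (0:ℝ) 1, ∀ t ∈ Icc (0:ℝ) 1, dist (γ s) (γ t) = |s - t| * dist x y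

lemma IsGeodesicSpace.geoSeg (hgeo : IsGeodesicSpace X) (x y : X) :
    ∃ γ : ℝ → X, IsGeoSeg γ x y := hgeo x y

lemma IsGeoSeg.continuousOn {γ : ℝ → X} {x y : X} (h : IsGeoSeg γ x y) :
    ContinuousOn γ (Icc 0 1) := by
  rw [Metric.continuousOn_iff]
  intro b hb ε hε
  refine ⟨ε / (dist x y + 1), by positivity, fun a ha hab => ?_⟩
  rw [h.2.2 a ha b hb]
  have h1 : |a - b| < ε / (dist x y + 1) := by rwa [Real.dist_eq] at hab
  have h2 : (0:ℝ) ≤ dist x y := dist_nonneg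
  have h3 : (0:ℝ) ≤ |a - b| := abs_nonneg _
  nlinarith [(div_mul_cancel₀ ε (by positivity : dist x y + (1:ℝ) ≠ 0))]

lemma IsGeoSeg.injOn {γ : ℝ → X} {x y : X} (h : IsGeoSeg γ x y) (hxy : x ≠ y) :
    InjOn γ (Icc 0 1) := by
  intro s hs t ht hst
  have := h.2.2 s hs t ht
  rw [hst, dist_self] at this
  have hd : 0 < dist x y := dist_pos.mpr hxy
  have : |s - t| = 0 := by
    rcases mul_eq_zero.mp this.symm with h' | h'
    · exact h'
    · exact absurd h' hd.ne'
  have := abs_eq_zero.mp this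
  linarith

lemma IsGeoSeg.dist_left {γ : ℝ → X} {x y : X} (h : IsGeoSeg γ x y) {t : ℝ}
    (ht : t ∈ Icc (0:ℝ) 1) : dist x (γ t) = t * dist x y := by
  have := h.2.2 0 (by constructor <;> norm_num) t ht
  rw [h.1] at this
  rwa [show |0 - t| = t by rw [abs_sub_comm, sub_zero, abs_of_nonneg ht.1]] at this

lemma IsGeoSeg.dist_right {γ : ℝ → X} {x y : X} (h : IsGeoSeg γ x y) {t : ℝ}
    (ht : t ∈ Icc (0:ℝ) 1) : dist y (γ t) = (1 - t) * dist x y := by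
  have := h.2.2 1 (by constructor <;> norm_num) t ht
  rw [h.2.1] at this
  rwa [show |1 - t| = 1 - t by rw [abs_of_nonneg (by linarith [ht.2])]] at this

lemma IsGeoSeg.symm {γ : ℝ → X} {x y : X} (h : IsGeoSeg γ x y) :
    IsGeoSeg (fun t => γ (1 - t)) y x := by
  refine ⟨by simpa using h.2.1, by simpa using h.1, fun s hs t ht => ?_⟩
  have h1 : (1 - s) ∈ Icc (0:ℝ) 1 := ⟨by linarith [hs.2], by linarith [hs.1]⟩
  have h2 : (1 - t) ∈ Icc (0:ℝ) 1 := ⟨by linarith [ht.2], by linarith [ht.1]⟩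
  rw [h.2.2 _ h1 _ h2, dist_comm x y]
  congr 1
  rw [show (1 - s) - (1 - t) = t - s by ring, abs_sub_comm]

end Aux


section Aux2

variable {X : Type*} [MetricSpace X]

/-! ### Affine reparametrization of a piece of a curve -/

/-- The restriction of `f` to the segment from `c` to `d`, reparametrized on `[0,1]`. -/
def segMap (f : ℝ → X) (c d : ℝ) : ℝ → X := fun t => f (c + t * (d - c))

lemma segMap_zero (f : ℝ → X) (c d : ℝ) : segMap f c d 0 = f c := by simp [segMap]

lemma segMap_one (f : ℝ → X) (c d : ℝ) : segMap f c d 1 = f d := by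
  show f (c + 1 * (d - c)) = f d
  congr 1; ring

lemma segMap_mapsTo {c d t : ℝ} (ht : t ∈ Icc (0:ℝ) 1) : c + t * (d - c) ∈ uIcc c d := by
  rcases le_total c d with h | h
  · rw [uIcc_of_le h]
    constructor <;> nlinarith [ht.1, ht.2]
  · rw [uIcc_of_ge h]
    constructor <;> nlinarith [ht.1, ht.2]

lemma segMap_continuousOn {f : ℝ → X} {c d : ℝ} (hf : ContinuousOn f (Icc 0 1))
    (hsub : uIcc c d ⊆ Icc 0 1) : ContinuousOn (segMap f c d) (Icc 0 1) := by
  apply hf.comp ((continuous_const.add (continuous_id.mul continuous_const)).continuousOn)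
  intro t ht
  exact hsub (segMap_mapsTo ht)

lemma segMap_injOn {f : ℝ → X} {c d : ℝ} (hf : InjOn f (Icc 0 1))
    (hsub : uIcc c d ⊆ Icc 0 1) (hcd : c ≠ d) : InjOn (segMap f c d) (Icc 0 1) := by
  intro s hs t ht hst
  have h1 := hf (hsub (segMap_mapsTo hs)) (hsub (segMap_mapsTo ht)) hst
  have h2 : d - c ≠ 0 := sub_ne_zero.mpr (Ne.symm hcd)
  have : s * (d - c) = t * (d - c) := by linarith [h1]
  exact mul_right_cancel₀ h2 this

lemma segMap_image {f : ℝ → X} {c d : ℝ} (hcd : c ≠ d) :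
    segMap f c d '' Icc 0 1 = f '' uIcc c d := by
  apply Subset.antisymm
  · rintro _ ⟨t, ht, rfl⟩
    exact ⟨c + t * (d - c), segMap_mapsTo ht, rfl⟩
  · rintro _ ⟨w, hw, rfl⟩
    have h2 : d - c ≠ 0 := sub_ne_zero.mpr (Ne.symm hcd)
    refine ⟨(w - c) / (d - c), ?_, ?_⟩
    · rcases le_total c d with h | h
      · rw [uIcc_of_le h] at hw
        have hdc : 0 < d - c := by
          rcases lt_or_eq_of_le h with h' | h'
          · linarith
          · exact absurd h' hcd
        constructor
        · exact div_nonneg (by linarith [hw.1]) hdc.le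
        · rw [div_le_one hdc]; linarith [hw.2]
      · rw [uIcc_of_ge h] at hw
        have hdc : d - c < 0 := by
          rcases lt_or_eq_of_le h with h' | h'
          · linarith
          · exact absurd h'.symm hcd
        constructor
        · exact div_nonneg_iff.mpr (Or.inr ⟨by linarith [hw.2], hdc.le⟩)
        · rw [div_le_one_of_neg hdc]; linarith [hw.1]
    · show f _ = f w
      congr 1
      field_simp; ring

/-! ### Concatenation of curves -/

/-- Concatenation of two curves, each parametrized on `[0,1]`. -/
def pcat (δ₁ δ₂ : ℝ → X) : ℝ → X := fun t => if t ≤ 1/2 then δ₁ (2*t) else δ₂ (2*t - 1)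

lemma pcat_zero (δ₁ δ₂ : ℝ → X) : pcat δ₁ δ₂ 0 = δ₁ 0 := by norm_num [pcat]

lemma pcat_one (δ₁ δ₂ : ℝ → X) : pcat δ₁ δ₂ 1 = δ₂ 1 := by norm_num [pcat]

lemma pcat_continuousOn {δ₁ δ₂ : ℝ → X} (h₁ : ContinuousOn δ₁ (Icc 0 1))
    (h₂ : ContinuousOn δ₂ (Icc 0 1)) (he : δ₁ 1 = δ₂ 0) :
    ContinuousOn (pcat δ₁ δ₂) (Icc 0 1) := by
  have hf : ContinuousOn (fun t : ℝ => δ₁ (2*t)) (Icc 0 (1/2)) := by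
    apply h₁.comp ((continuous_const.mul continuous_id).continuousOn)
    intro t ht
    show (2*t : ℝ) ∈ Icc 0 1
    exact ⟨by linarith [ht.1], by linarith [ht.2]⟩
  have hg : ContinuousOn (fun t : ℝ => δ₂ (2*t - 1)) (Icc (1/2) 1) := by
    apply h₂.comp (((continuous_const.mul continuous_id).sub continuous_const).continuousOn)
    intro t ht
    show (2*t - 1 : ℝ) ∈ Icc 0 1
    exact ⟨by linarith [ht.1], by linarith [ht.2]⟩
  have := glue_continuousOn (by norm_num) (by norm_num) hf hg (by norm_num [he])
  exact this

lemma pcat_image {δ₁ δ₂ : ℝ → X} (he : δ₁ 1 = δ₂ 0) :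
    pcat δ₁ δ₂ '' Icc 0 1 = δ₁ '' Icc 0 1 ∪ δ₂ '' Icc 0 1 := by
  apply Subset.antisymm
  · rintro _ ⟨t, ht, rfl⟩
    by_cases h : t ≤ 1/2
    · left
      exact ⟨2*t, ⟨by linarith [ht.1], by linarith⟩, by simp only [pcat]; rw [if_pos h]⟩
    · right
      exact ⟨2*t - 1, ⟨by linarith, by linarith [ht.2]⟩, by simp only [pcat]; rw [if_neg h]⟩
  · rintro _ (⟨σ, hσ, rfl⟩ | ⟨σ, hσ, rfl⟩)
    · refine ⟨σ/2, ⟨by linarith [hσ.1], by linarith [hσ.2]⟩, ?_⟩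
      have h : σ/2 ≤ 1/2 := by linarith [hσ.2]
      simp only [pcat, if_pos h]
      congr 1; ring
    · by_cases h0 : σ = 0
      · subst h0
        refine ⟨1/2, ⟨by norm_num, by norm_num⟩, ?_⟩
        simp only [pcat, if_pos (le_refl (1/2 : ℝ))]
        rw [← he]; congr 1; norm_num
      · have hσ0 : 0 < σ := lt_of_le_of_ne hσ.1 (Ne.symm h0)
        refine ⟨(σ+1)/2, ⟨by linarith, by linarith [hσ.2]⟩, ?_⟩
        have h : ¬ ((σ+1)/2 ≤ 1/2) := by push_neg; linarith
        simp only [pcat, if_neg h]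
        congr 1; ring

lemma pcat_injOn_Icc {δ₁ δ₂ : ℝ → X} (i₁ : InjOn δ₁ (Icc 0 1)) (i₂ : InjOn δ₂ (Icc 0 1))
    (hcross : ∀ s ∈ Icc (0:ℝ) 1, ∀ σ ∈ Icc (0:ℝ) 1, δ₁ s = δ₂ σ → s = 1 ∧ σ = 0) :
    InjOn (pcat δ₁ δ₂) (Icc 0 1) := by
  intro s hs t ht hst
  simp only [pcat] at hst
  by_cases h1 : s ≤ 1/2 <;> by_cases h2 : t ≤ 1/2
  · rw [if_pos h1, if_pos h2] at hst
    have := i₁ ⟨by linarith [hs.1], by linarith⟩ ⟨by linarith [ht.1], by linarith⟩ hst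
    linarith
  · rw [if_pos h1, if_neg h2] at hst
    obtain ⟨hA, hB⟩ := hcross (2*s) ⟨by linarith [hs.1], by linarith⟩ (2*t - 1)
      ⟨by linarith, by linarith [ht.2]⟩ hst
    push_neg at h2; linarith
  · rw [if_neg h1, if_pos h2] at hst
    obtain ⟨hA, hB⟩ := hcross (2*t) ⟨by linarith [ht.1], by linarith⟩ (2*s - 1)
      ⟨by linarith, by linarith [hs.2]⟩ hst.symm
    push_neg at h1; linarith
  · rw [if_neg h1, if_neg h2] at hst
    have := i₂ ⟨by linarith, by linarith [hs.2]⟩ ⟨by linarith, by linarith [ht.2]⟩ hst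
    linarith

lemma pcat_injOn_Ico {δ₁ δ₂ : ℝ → X} (i₁ : InjOn δ₁ (Icc 0 1)) (i₂ : InjOn δ₂ (Icc 0 1))
    (hcross : ∀ s ∈ Icc (0:ℝ) 1, ∀ σ ∈ Icc (0:ℝ) 1, δ₁ s = δ₂ σ →
      (s = 1 ∧ σ = 0) ∨ (s = 0 ∧ σ = 1)) :
    InjOn (pcat δ₁ δ₂) (Ico 0 1) := by
  intro s hs t ht hst
  simp only [pcat] at hst
  by_cases h1 : s ≤ 1/2 <;> by_cases h2 : t ≤ 1/2
  · rw [if_pos h1, if_pos h2] at hst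
    have := i₁ ⟨by linarith [hs.1], by linarith⟩ ⟨by linarith [ht.1], by linarith⟩ hst
    linarith
  · rw [if_pos h1, if_neg h2] at hst
    rcases hcross (2*s) ⟨by linarith [hs.1], by linarith⟩ (2*t - 1)
      ⟨by linarith, by linarith [ht.2.le]⟩ hst with ⟨hA, hB⟩ | ⟨hA, hB⟩
    · push_neg at h2; linarith
    · linarith [ht.2]
  · rw [if_neg h1, if_pos h2] at hst
    rcases hcross (2*t) ⟨by linarith [ht.1], by linarith⟩ (2*s - 1)
      ⟨by linarith, by linarith [hs.2.le]⟩ hst.symm with ⟨hA, hB⟩ | ⟨hA, hB⟩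
    · push_neg at h1; linarith
    · linarith [hs.2]
  · rw [if_neg h1, if_neg h2] at hst
    have := i₂ ⟨by linarith, by linarith [hs.2.le]⟩ ⟨by linarith, by linarith [ht.2.le]⟩ hst
    linarith

end Aux2


section Aux3

variable {X : Type*} [MetricSpace X]

/-- An injective curve from `x` to `y` inside `U`. -/
def ArcIn (U : Set X) (δ : ℝ → X) (x y : X) : Prop :=
  ContinuousOn δ (Icc 0 1) ∧ InjOn δ (Icc 0 1) ∧ δ 0 = x ∧ δ 1 = y ∧ δ '' Icc 0 1 ⊆ U

/-- A geodesic segment from `x` to `y` inside `U`. -/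
def SegIn (U : Set X) (x y : X) : Prop := ∃ γ : ℝ → X, IsGeoSeg γ x y ∧ γ '' Icc 0 1 ⊆ U

/-- A broken geodesic from `x` to `y` inside `U`. -/
def ChainIn (U : Set X) (x y : X) : Prop :=
  ∃ (n : ℕ) (p : ℕ → X), p 0 = x ∧ p n = y ∧ ∀ i, i < n → SegIn U (p i) (p (i + 1))

lemma segIn_of_ball (hgeo : IsGeodesicSpace X) {U : Set X} {x y : X} {r : ℝ}
    (hball : Metric.ball x r ⊆ U) (hy : y ∈ Metric.ball x r) : SegIn U x y := by
  obtain ⟨γ, hγ⟩ := hgeo.geoSeg x y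
  refine ⟨γ, hγ, ?_⟩
  rintro _ ⟨t, ht, rfl⟩
  apply hball
  rw [Metric.mem_ball, dist_comm, hγ.dist_left ht]
  have hxy : dist x y < r := by rwa [Metric.mem_ball, dist_comm] at hy
  have h0 : (0:ℝ) ≤ dist x y := dist_nonneg
  nlinarith [ht.1, ht.2]

lemma SegIn.symm {U : Set X} {x y : X} (h : SegIn U x y) : SegIn U y x := by
  obtain ⟨γ, hγ, hU⟩ := h
  refine ⟨fun t => γ (1 - t), hγ.symm, ?_⟩
  rintro _ ⟨t, ht, rfl⟩
  exact hU ⟨1 - t, ⟨by linarith [ht.2], by linarith [ht.1]⟩, rfl⟩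

lemma chainIn_refl (U : Set X) (x : X) : ChainIn U x x :=
  ⟨0, fun _ => x, rfl, rfl, fun i hi => absurd hi (Nat.not_lt_zero i)⟩

lemma ChainIn.snoc {U : Set X} {x y z : X} (h : ChainIn U x y) (hseg : SegIn U y z) :
    ChainIn U x z := by
  obtain ⟨n, p, h0, hn, hstep⟩ := h
  refine ⟨n + 1, fun i => if i ≤ n then p i else z, by simp [h0], by simp, ?_⟩
  intro i hi
  by_cases hin : i < n
  · have h1 : i ≤ n := hin.le
    have h2 : i + 1 ≤ n := hin
    simpa [h1, h2] using hstep i hin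
  · have hieq : i = n := by omega
    subst hieq
    have h2 : ¬ (i + 1 ≤ i) := by omega
    simpa [h2, hn] using hseg

lemma chainIn_of_connected (hgeo : IsGeodesicSpace X) {U : Set X} (hU : IsOpen U) {x y : X}
    (hx : x ∈ U) (hy : y ∈ connectedComponentIn U x) : ChainIn U x y := by
  by_contra hcon
  set V : Set X := {w | w ∈ U ∧ ChainIn U x w} with hV
  set W : Set X := {w | w ∈ U ∧ ¬ ChainIn U x w} with hW
  have hVopen : IsOpen V := by
    rw [Metric.isOpen_iff]
    rintro w ⟨hwU, hwc⟩
    obtain ⟨r, hr, hball⟩ := Metric.isOpen_iff.mp hU w hwU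
    refine ⟨r, hr, fun w' hw' => ⟨hball hw', hwc.snoc (segIn_of_ball hgeo hball hw')⟩⟩
  have hWopen : IsOpen W := by
    rw [Metric.isOpen_iff]
    rintro w ⟨hwU, hwc⟩
    obtain ⟨r, hr, hball⟩ := Metric.isOpen_iff.mp hU w hwU
    refine ⟨r, hr, fun w' hw' => ⟨hball hw', fun hc => hwc ?_⟩⟩
    exact hc.snoc (segIn_of_ball hgeo hball hw').symm
  have hS : IsPreconnected (connectedComponentIn U x) := isPreconnected_connectedComponentIn
  have hsub : connectedComponentIn U x ⊆ V ∪ W := by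
    intro w hw
    have hwU : w ∈ U := connectedComponentIn_subset U x hw
    by_cases h : ChainIn U x w
    · exact Or.inl ⟨hwU, h⟩
    · exact Or.inr ⟨hwU, h⟩
  have hxV : x ∈ connectedComponentIn U x ∩ V :=
    ⟨mem_connectedComponentIn hx, hx, chainIn_refl U x⟩
  have hyW : y ∈ connectedComponentIn U x ∩ W :=
    ⟨hy, connectedComponentIn_subset U x hy, hcon⟩
  obtain ⟨w, _, hwV, hwW⟩ := hS V W hVopen hWopen hsub ⟨x, hxV⟩ ⟨y, hyW⟩
  exact hwW.2 hwV.2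

lemma lastHit {γ : ℝ → X} (hγ : ContinuousOn γ (Icc 0 1)) {C : Set X} (hC : IsClosed C)
    (h0 : γ 0 ∈ C) : ∃ t₀, t₀ ∈ Icc (0:ℝ) 1 ∧ γ t₀ ∈ C ∧
      ∀ t, t₀ < t → t ≤ 1 → γ t ∉ C := by
  set K : Set ℝ := Icc 0 1 ∩ γ ⁻¹' C with hK
  have hKclosed : IsClosed K := hγ.preimage_isClosed_of_isClosed isClosed_Icc hC
  have hKne : K.Nonempty := ⟨0, ⟨le_refl 0, zero_le_one⟩, h0⟩
  have hKbdd : BddAbove K := BddAbove.mono inter_subset_left bddAbove_Icc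
  have hmem : sSup K ∈ K := hKclosed.csSup_mem hKne hKbdd
  refine ⟨sSup K, hmem.1, hmem.2, fun t ht ht1 hc => ?_⟩
  have htK : t ∈ K := ⟨⟨le_trans hmem.1.1 ht.le, ht1⟩, hc⟩
  exact absurd (le_csSup hKbdd htK) (not_le.mpr ht)

lemma arc_extend {U : Set X} {x w z : X} (h : x = w ∨ ∃ δ, ArcIn U δ x w)
    (hseg : SegIn U w z) : x = z ∨ ∃ δ, ArcIn U δ x z := by
  obtain ⟨γ, hγ, hγU⟩ := hseg
  by_cases hwz : w = z
  · subst hwz; exact h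
  have hγc := hγ.continuousOn
  have hγi := hγ.injOn hwz
  rcases h with rfl | ⟨A, hAc, hAi, hA0, hA1, hAU⟩
  · exact Or.inr ⟨γ, hγc, hγi, hγ.1, hγ.2.1, hγU⟩
  · have hAcomp : IsCompact (A '' Icc 0 1) := isCompact_Icc.image_of_continuousOn hAc
    have hAclosed : IsClosed (A '' Icc 0 1) := hAcomp.isClosed
    have hγ0A : γ 0 ∈ A '' Icc 0 1 := by
      rw [hγ.1, ← hA1]
      exact ⟨1, ⟨zero_le_one, le_refl 1⟩, rfl⟩
    obtain ⟨t₀, ht₀, ht₀A, hlast⟩ := lastHit hγc hAclosed hγ0A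
    obtain ⟨σ, hσ, hσA⟩ := ht₀A
    by_cases ht1 : t₀ = 1
    · -- z is on the arc A; truncate A
      by_cases hσ0 : σ = 0
      · left
        rw [← hA0, ← hσ0, hσA, ht1, hγ.2.1]
      · right
        have hsub : uIcc 0 σ ⊆ Icc 0 1 := by
          rw [uIcc_of_le hσ.1]
          exact Icc_subset_Icc (le_refl 0) hσ.2
        refine ⟨segMap A 0 σ, segMap_continuousOn hAc hsub,
          segMap_injOn hAi hsub (Ne.symm hσ0), by rw [segMap_zero, hA0], ?_, ?_⟩
        · rw [segMap_one, hσA, ht1, hγ.2.1]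
        · rw [segMap_image (Ne.symm hσ0)]
          exact subset_trans (image_mono (f := A) hsub) hAU
    have ht₀lt : t₀ < 1 := lt_of_le_of_ne ht₀.2 ht1
    by_cases hσ0 : σ = 0
    · -- γ t₀ = x ; take the tail of γ
      right
      have hx : x = γ t₀ := by rw [← hσA, hσ0, hA0]
      have hsub : uIcc t₀ 1 ⊆ Icc 0 1 := by
        rw [uIcc_of_le ht₀.2]
        exact Icc_subset_Icc ht₀.1 (le_refl 1)
      refine ⟨segMap γ t₀ 1, segMap_continuousOn hγc hsub,
        segMap_injOn hγi hsub ht1, by rw [segMap_zero, ← hx], ?_, ?_⟩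
      · rw [segMap_one, hγ.2.1]
      · rw [segMap_image ht1]
        exact subset_trans (image_mono (f := γ) hsub) hγU
    · right
      have hσpos : 0 < σ := lt_of_le_of_ne hσ.1 (Ne.symm hσ0)
      have hsubA : uIcc 0 σ ⊆ Icc 0 1 := by
        rw [uIcc_of_le hσ.1]
        exact Icc_subset_Icc (le_refl 0) hσ.2
      have hsubγ : uIcc t₀ 1 ⊆ Icc 0 1 := by
        rw [uIcc_of_le ht₀.2]
        exact Icc_subset_Icc ht₀.1 (le_refl 1)
      set δ₁ := segMap A 0 σ with hδ₁
      set δ₂ := segMap γ t₀ 1 with hδ₂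
      have he : δ₁ 1 = δ₂ 0 := by rw [hδ₁, hδ₂, segMap_one, segMap_zero, hσA]
      have hi₁ : InjOn δ₁ (Icc 0 1) := segMap_injOn hAi hsubA (Ne.symm hσ0)
      have hi₂ : InjOn δ₂ (Icc 0 1) := segMap_injOn hγi hsubγ ht1
      have hcross : ∀ s ∈ Icc (0:ℝ) 1, ∀ σ' ∈ Icc (0:ℝ) 1, δ₁ s = δ₂ σ' →
          s = 1 ∧ σ' = 0 := by
        intro s hs σ' hσ' heq
        have harg1 : (0 : ℝ) + s * (σ - 0) ∈ Icc (0:ℝ) 1 := hsubA (segMap_mapsTo hs)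
        have harg2 : t₀ + σ' * (1 - t₀) ∈ Icc (0:ℝ) 1 := hsubγ (segMap_mapsTo hσ')
        have hmem : γ (t₀ + σ' * (1 - t₀)) ∈ A '' Icc 0 1 := by
          have hmem' : δ₂ σ' ∈ A '' Icc 0 1 := by
            rw [← heq]
            exact ⟨0 + s * (σ - 0), harg1, rfl⟩
          exact hmem'
        have hle : t₀ + σ' * (1 - t₀) ≤ t₀ := by
          by_contra hgt
          push_neg at hgt
          exact hlast _ hgt harg2.2 hmem
        have hσ'0 : σ' = 0 := by
          have h1 : 0 ≤ σ' * (1 - t₀) := mul_nonneg hσ'.1 (by linarith)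
          have h2 : σ' * (1 - t₀) = 0 := by linarith
          rcases mul_eq_zero.mp h2 with h' | h'
          · exact h'
          · exfalso; exact ht1 (by linarith)
        refine ⟨?_, hσ'0⟩
        have heq2 : A (0 + s * (σ - 0)) = A σ := by
          have h' : δ₁ s = δ₂ 0 := by rw [heq, hσ'0]
          have h'' : δ₂ 0 = γ t₀ := by
            show γ (t₀ + 0 * (1 - t₀)) = γ t₀
            congr 1; ring
          show δ₁ s = A σ
          rw [h', h'', ← hσA]
        have := hAi harg1 hσ heq2
        have hseq : s * σ = σ := by linarith [this]
        have : s = 1 := by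
          have := mul_right_cancel₀ hσ0 (by linarith [hseq] : s * σ = 1 * σ)
          exact this
        exact this
      refine ⟨pcat δ₁ δ₂, pcat_continuousOn (segMap_continuousOn hAc hsubA)
        (segMap_continuousOn hγc hsubγ) he, pcat_injOn_Icc hi₁ hi₂ hcross, ?_, ?_, ?_⟩
      · rw [pcat_zero, hδ₁, segMap_zero, hA0]
      · rw [pcat_one, hδ₂, segMap_one, hγ.2.1]
      · rw [pcat_image he]
        apply union_subset
        · rw [hδ₁, segMap_image (Ne.symm hσ0)]
          exact subset_trans (image_mono (f := A) hsubA) hAU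
        · rw [hδ₂, segMap_image ht1]
          exact subset_trans (image_mono (f := γ) hsubγ) hγU

lemma exists_arcIn (hgeo : IsGeodesicSpace X) {U : Set X} (hU : IsOpen U) {x y : X}
    (hx : x ∈ U) (hy : y ∈ connectedComponentIn U x) (hxy : x ≠ y) :
    ∃ δ, ArcIn U δ x y := by
  obtain ⟨n, p, h0, hn, hstep⟩ := chainIn_of_connected hgeo hU hx hy
  have key : ∀ k, k ≤ n → x = p k ∨ ∃ δ, ArcIn U δ x (p k) := by
    intro k
    induction k with
    | zero => intro _; exact Or.inl h0.symm
    | succ m ih =>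
      intro hm
      exact arc_extend (ih (by omega)) (hstep m (by omega))
  rcases key n (le_refl n) with h | h
  · rw [hn] at h; exact absurd h hxy
  · rwa [hn] at h

/-- First exit-and-reentry structure of a curve around a point not in a closed set. -/
lemma crossing {γ : ℝ → X} (hγ : ContinuousOn γ (Icc 0 1)) {C : Set X} (hC : IsClosed C)
    (h0 : γ 0 ∈ C) (h1 : γ 1 ∈ C) {c : ℝ} (hc : c ∈ Ioo (0:ℝ) 1) (hmc : γ c ∉ C) :
    ∃ a b, 0 ≤ a ∧ a < c ∧ c < b ∧ b ≤ 1 ∧ γ a ∈ C ∧ γ b ∈ C ∧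
      ∀ t ∈ Ioo a b, γ t ∉ C := by
  set K : Set ℝ := Icc 0 1 ∩ γ ⁻¹' C with hK
  have hKclosed : IsClosed K := hγ.preimage_isClosed_of_isClosed isClosed_Icc hC
  have hcK : c ∉ K := fun h => hmc h.2
  -- sup of K below c
  set K₁ := K ∩ Icc 0 c with hK₁
  have hK₁closed : IsClosed K₁ := hKclosed.inter isClosed_Icc
  have hK₁ne : K₁.Nonempty := ⟨0, ⟨⟨le_refl 0, zero_le_one⟩, h0⟩, le_refl 0, hc.1.le⟩
  have hK₁bdd : BddAbove K₁ := BddAbove.mono inter_subset_right bddAbove_Icc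
  have haK : sSup K₁ ∈ K₁ := hK₁closed.csSup_mem hK₁ne hK₁bdd
  set a := sSup K₁ with ha
  -- inf of K above c
  set K₂ := K ∩ Icc c 1 with hK₂
  have hK₂closed : IsClosed K₂ := hKclosed.inter isClosed_Icc
  have hK₂ne : K₂.Nonempty := ⟨1, ⟨⟨zero_le_one, le_refl 1⟩, h1⟩, hc.2.le, le_refl 1⟩
  have hK₂bdd : BddBelow K₂ := BddBelow.mono inter_subset_right bddBelow_Icc
  have hbK : sInf K₂ ∈ K₂ := hK₂closed.csInf_mem hK₂ne hK₂bdd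
  set b := sInf K₂ with hb
  have hac : a < c := lt_of_le_of_ne haK.2.2 (fun h => hcK (h ▸ haK.1))
  have hcb : c < b := lt_of_le_of_ne hbK.2.1 (fun h => hcK (h ▸ hbK.1))
  refine ⟨a, b, haK.2.1, hac, hcb, hbK.2.2, haK.1.2, hbK.1.2, ?_⟩
  intro t ht htC
  have htIcc : t ∈ Icc (0:ℝ) 1 := ⟨le_trans haK.2.1 ht.1.le, le_trans ht.2.le hbK.2.2⟩
  have htK : t ∈ K := ⟨htIcc, htC⟩
  rcases le_total t c with h | h
  · exact absurd (le_csSup hK₁bdd ⟨htK, htIcc.1, h⟩) (not_le.mpr ht.1)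
  · exact absurd (csInf_le hK₂bdd ⟨htK, h, htIcc.2⟩) (not_le.mpr ht.2)

end Aux3


section Aux4

variable {X : Type*} [MetricSpace X]

/-- From a geodesic `g` from `x` to `y` and an arc `α` from `x` to `y` avoiding the midpoint
`g (1/2)`, produce a simple loop `J` based at the midpoint, made of a piece of `g`
around the midpoint and a piece of `α`. -/
lemma circle_lemma {g α : ℝ → X} {x y : X} (hg : IsGeoSeg g x y) (hxy : x ≠ y)
    (hαc : ContinuousOn α (Icc 0 1)) (hαi : InjOn α (Icc 0 1)) (hα0 : α 0 = x) (hα1 : α 1 = y)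
    (hm : g (1/2) ∉ α '' Icc 0 1) :
    ∃ a b a' b' J, 0 ≤ a ∧ a < 1/2 ∧ 1/2 < b ∧ b ≤ 1 ∧
      a' ∈ Icc (0:ℝ) 1 ∧ b' ∈ Icc (0:ℝ) 1 ∧ α a' = g a ∧ α b' = g b ∧
      IsLoop J (g (1/2)) ∧ J '' Icc 0 1 = g '' Icc a b ∪ α '' uIcc b' a' := by
  have gc := hg.continuousOn
  have gInj := hg.injOn hxy
  have hAcomp : IsCompact (α '' Icc 0 1) := isCompact_Icc.image_of_continuousOn hαc
  have hAclosed : IsClosed (α '' Icc 0 1) := hAcomp.isClosed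
  have h0 : g 0 ∈ α '' Icc 0 1 := ⟨0, ⟨le_refl 0, zero_le_one⟩, by rw [hα0, hg.1]⟩
  have h1 : g 1 ∈ α '' Icc 0 1 := ⟨1, ⟨zero_le_one, le_refl 1⟩, by rw [hα1, hg.2.1]⟩
  obtain ⟨a, b, ha0, hac, hcb, hb1, hgaC, hgbC, hIoo⟩ :=
    crossing gc hAclosed h0 h1 (⟨by norm_num, by norm_num⟩ : (1/2:ℝ) ∈ Ioo 0 1) hm
  obtain ⟨a', ha', hαa'⟩ := hgaC
  obtain ⟨b', hb', hαb'⟩ := hgbC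
  have haI : a ∈ Icc (0:ℝ) 1 := ⟨ha0, by linarith⟩
  have hbI : b ∈ Icc (0:ℝ) 1 := ⟨by linarith, hb1⟩
  have hab : a ≠ b := by linarith
  have ha'b' : a' ≠ b' := by
    intro h
    apply hab
    apply gInj haI hbI
    rw [← hαa', ← hαb', h]
  have h₁sub : uIcc (1/2 : ℝ) b ⊆ Icc 0 1 := by
    rw [uIcc_of_le hcb.le]
    exact Icc_subset_Icc (by norm_num) hb1
  have hαsub : uIcc b' a' ⊆ Icc (0:ℝ) 1 := by
    rw [← uIcc_of_le (zero_le_one (α := ℝ))]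
    exact uIcc_subset_uIcc (by rw [uIcc_of_le zero_le_one]; exact hb')
      (by rw [uIcc_of_le zero_le_one]; exact ha')
  have h₂sub : uIcc a (1/2 : ℝ) ⊆ Icc 0 1 := by
    rw [uIcc_of_le hac.le]
    exact Icc_subset_Icc ha0 (by norm_num)
  have hδg1c := segMap_continuousOn gc h₁sub
  have hδg1i := segMap_injOn gInj h₁sub (ne_of_lt hcb)
  have hδαc := segMap_continuousOn hαc hαsub
  have hδαi := segMap_injOn hαi hαsub (Ne.symm ha'b')
  have hδg2c := segMap_continuousOn gc h₂sub
  have hδg2i := segMap_injOn gInj h₂sub (ne_of_lt hac)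
  have he₁ : segMap g (1/2) b 1 = segMap α b' a' 0 := by
    rw [segMap_one, segMap_zero, hαb']
  have hC₁c := pcat_continuousOn hδg1c hδαc he₁
  have hC₁cross : ∀ s ∈ Icc (0:ℝ) 1, ∀ σ ∈ Icc (0:ℝ) 1,
      segMap g (1/2) b s = segMap α b' a' σ → s = 1 ∧ σ = 0 := by
    intro s hs σ hσ heq
    have hτmem : (1/2 : ℝ) + s * (b - 1/2) ∈ Icc (1/2 : ℝ) b := by
      rw [← uIcc_of_le hcb.le]; exact segMap_mapsTo hs
    have hτ'mem : b' + σ * (a' - b') ∈ uIcc b' a' := segMap_mapsTo hσ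
    have heq' : g (1/2 + s * (b - 1/2)) = α (b' + σ * (a' - b')) := heq
    have hgmem : g (1/2 + s * (b - 1/2)) ∈ α '' Icc 0 1 :=
      ⟨b' + σ * (a' - b'), hαsub hτ'mem, heq'.symm⟩
    have hτb : 1/2 + s * (b - 1/2) = b := by
      by_contra hne
      apply hIoo _ _ hgmem
      constructor
      · linarith [hτmem.1]
      · exact lt_of_le_of_ne hτmem.2 hne
    have hs1 : s = 1 := by
      have hb2 : b - 1/2 ≠ 0 := by linarith
      have : s * (b - 1/2) = 1 * (b - 1/2) := by linarith
      exact mul_right_cancel₀ hb2 this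
    refine ⟨hs1, ?_⟩
    have : α (b' + σ * (a' - b')) = α b' := by
      rw [← heq', hτb, hαb']
    have hτ'b : b' + σ * (a' - b') = b' := hαi (hαsub hτ'mem) hb' this
    have ha'b2 : a' - b' ≠ 0 := sub_ne_zero.mpr ha'b'
    have : σ * (a' - b') = 0 := by linarith
    rcases mul_eq_zero.mp this with h' | h'
    · exact h'
    · exact absurd h' ha'b2
  have hC₁i := pcat_injOn_Icc hδg1i hδαi hC₁cross
  have hC₁img : pcat (segMap g (1/2) b) (segMap α b' a') '' Icc 0 1 =
      g '' Icc (1/2) b ∪ α '' uIcc b' a' := by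
    rw [pcat_image he₁, segMap_image (ne_of_lt hcb), segMap_image (Ne.symm ha'b'),
      uIcc_of_le hcb.le]
  have hC₁0 : pcat (segMap g (1/2) b) (segMap α b' a') 0 = g (1/2) := by
    rw [pcat_zero, segMap_zero]
  have hC₁1 : pcat (segMap g (1/2) b) (segMap α b' a') 1 = g a := by
    rw [pcat_one, segMap_one, hαa']
  have he₂ : pcat (segMap g (1/2) b) (segMap α b' a') 1 = segMap g a (1/2) 0 := by
    rw [hC₁1, segMap_zero]
  have hJcross : ∀ s ∈ Icc (0:ℝ) 1, ∀ σ ∈ Icc (0:ℝ) 1,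
      pcat (segMap g (1/2) b) (segMap α b' a') s = segMap g a (1/2) σ →
      (s = 1 ∧ σ = 0) ∨ (s = 0 ∧ σ = 1) := by
    intro s hs σ hσ heq
    have hρmem : a + σ * (1/2 - a) ∈ Icc a (1/2 : ℝ) := by
      rw [← uIcc_of_le hac.le]; exact segMap_mapsTo hσ
    have heq' : pcat (segMap g (1/2) b) (segMap α b' a') s = g (a + σ * (1/2 - a)) := heq
    have hval : pcat (segMap g (1/2) b) (segMap α b' a') s ∈
        g '' Icc (1/2) b ∪ α '' uIcc b' a' := by
      rw [← hC₁img]; exact ⟨s, hs, rfl⟩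
    have hhalfa : (1/2 : ℝ) - a ≠ 0 := by linarith
    rcases hval with ⟨τ, hτ, hτval⟩ | ⟨τ', hτ', hτ'val⟩
    · -- the value is on the geodesic piece: forces it to be the midpoint
      right
      have hτI : τ ∈ Icc (0:ℝ) 1 := ⟨by linarith [hτ.1], le_trans hτ.2 hb1⟩
      have hρI : (a + σ * (1/2 - a)) ∈ Icc (0:ℝ) 1 := ⟨by linarith [hρmem.1], by linarith [hρmem.2]⟩
      have hτρ : τ = a + σ * (1/2 - a) := gInj hτI hρI (by rw [hτval, heq'])
      have hρhalf : a + σ * (1/2 - a) = 1/2 := le_antisymm hρmem.2 (hτρ ▸ hτ.1)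
      have hσ1 : σ = 1 := by
        have : σ * (1/2 - a) = 1 * (1/2 - a) := by linarith
        exact mul_right_cancel₀ hhalfa this
      refine ⟨?_, hσ1⟩
      apply hC₁i hs ⟨le_refl 0, zero_le_one⟩
      rw [heq', hρhalf, hC₁0]
    · -- the value is on the α piece: forces it to be `g a`
      left
      have hgmem : g (a + σ * (1/2 - a)) ∈ α '' Icc 0 1 := by
        rw [← heq', ← hτ'val]
        exact ⟨τ', hαsub hτ', rfl⟩
      have hρa : a + σ * (1/2 - a) = a := by
        by_contra hne
        apply hIoo _ _ hgmem
        constructor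
        · exact lt_of_le_of_ne hρmem.1 (Ne.symm hne)
        · linarith [hρmem.2]
      have hσ0 : σ = 0 := by
        have : σ * (1/2 - a) = 0 := by linarith
        rcases mul_eq_zero.mp this with h' | h'
        · exact h'
        · exact absurd h' hhalfa
      refine ⟨?_, hσ0⟩
      apply hC₁i hs ⟨zero_le_one, le_refl 1⟩
      rw [heq', hρa, hC₁1]
  refine ⟨a, b, a', b', pcat (pcat (segMap g (1/2) b) (segMap α b' a')) (segMap g a (1/2)),
    ha0, hac, hcb, hb1, ha', hb', hαa', hαb', ?_, ?_⟩
  · refine ⟨pcat_continuousOn hC₁c hδg2c he₂, pcat_injOn_Ico hC₁i hδg2i hJcross, ?_, ?_⟩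
    · rw [pcat_zero, hC₁0]
    · rw [pcat_one, segMap_one]
  · rw [pcat_image he₂, hC₁img, segMap_image (ne_of_lt hac), uIcc_of_le hac.le,
      union_right_comm, union_comm (g '' Icc (1/2) b) (g '' Icc a (1/2)), ← image_union,
      Icc_union_Icc_eq_Icc hac.le hcb.le]

end Aux4


section Aux5

variable {X : Type*} [MetricSpace X]

lemma vern_to_sep3 (hgeo : IsGeodesicSpace X) (hv : IsVernationTree X) :
    ∀ x y : X, x ≠ y → ∃ u v : X, u ≠ x ∧ u ≠ y ∧ v ≠ x ∧ v ≠ y ∧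
      y ∉ connectedComponentIn ({u, v} : Set X)ᶜ x ∧
      dist x y ≤ 2 * min (min (dist x u) (dist x v)) (min (dist y u) (dist y v)) := by
  intro x y hxy
  have hd : 0 < dist x y := dist_pos.mpr hxy
  obtain ⟨g, hg⟩ := hgeo.geoSeg x y
  have hhalfI : (1/2 : ℝ) ∈ Icc (0:ℝ) 1 := ⟨by norm_num, by norm_num⟩
  have hmx : dist x (g (1/2)) = (1/2) * dist x y := hg.dist_left hhalfI
  have hmy : dist y (g (1/2)) = (1/2) * dist x y := by
    rw [hg.dist_right hhalfI]; norm_num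
  have hmxne : g (1/2) ≠ x := by
    intro h
    rw [h, dist_self] at hmx
    nlinarith
  have hmyne : g (1/2) ≠ y := by
    intro h
    rw [h, dist_self] at hmy
    nlinarith
  have gInj := hg.injOn hxy
  by_cases hcase : y ∈ connectedComponentIn ({g (1/2)}ᶜ : Set X) x
  swap
  · -- the midpoint alone separates x from y
    refine ⟨g (1/2), g (1/2), hmxne, hmyne, hmxne, hmyne, ?_, ?_⟩
    · rwa [pair_eq_singleton]
    · rw [hmx, hmy]
      simp only [min_self]
      linarith
  · -- the midpoint does not separate: build a circle through the midpoint
    have hU : IsOpen ({g (1/2)}ᶜ : Set X) := isClosed_singleton.isOpen_compl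
    have hxU : x ∈ ({g (1/2)}ᶜ : Set X) := by
      simp only [mem_compl_iff, mem_singleton_iff]
      exact fun h => hmxne h.symm
    obtain ⟨α, hαc, hαi, hα0, hα1, hαU⟩ := exists_arcIn hgeo hU hxU hcase hxy
    have hmα : g (1/2) ∉ α '' Icc 0 1 := fun h => (hαU h) rfl
    obtain ⟨a, b, a', b', J, ha0, hac, hcb, hb1, ha'I, hb'I, hαa', hαb', hJloop, hJimg⟩ :=
      circle_lemma hg hxy hαc hαi hα0 hα1 hmα
    have haI : a ∈ Icc (0:ℝ) 1 := ⟨ha0, by linarith⟩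
    have hbI : b ∈ Icc (0:ℝ) 1 := ⟨by linarith, hb1⟩
    have hαsub : uIcc b' a' ⊆ Icc (0:ℝ) 1 := by
      rw [← uIcc_of_le (zero_le_one (α := ℝ))]
      exact uIcc_subset_uIcc (by rw [uIcc_of_le zero_le_one]; exact hb'I)
        (by rw [uIcc_of_le zero_le_one]; exact ha'I)
    have hBpre : IsPreconnected (α '' uIcc b' a') :=
      isPreconnected_uIcc.image α (hαc.mono hαsub)
    have hpa : g a ∈ α '' uIcc b' a' := ⟨a', right_mem_uIcc, hαa'⟩
    have hpb : g b ∈ α '' uIcc b' a' := ⟨b', left_mem_uIcc, hαb'⟩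
    have hf : ContinuousOn (fun z => dist x z - dist y z) (α '' uIcc b' a') :=
      ((continuous_const.dist continuous_id).sub
        (continuous_const.dist continuous_id)).continuousOn
    have h_fa : dist x (g a) - dist y (g a) ≤ 0 := by
      rw [hg.dist_left haI, hg.dist_right haI]
      nlinarith
    have h_fb : (0:ℝ) ≤ dist x (g b) - dist y (g b) := by
      rw [hg.dist_left hbI, hg.dist_right hbI]
      nlinarith
    obtain ⟨v, hvB, hfv⟩ := hBpre.intermediate_value hpa hpb hf ⟨h_fa, h_fb⟩
    have hr : dist x v = dist y v := by
      have : dist x v - dist y v = 0 := hfv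
      linarith
    have h2r : dist x y ≤ 2 * dist x v := by
      have := dist_triangle x v y
      rw [dist_comm v y] at this
      linarith [hr]
    have hvx : v ≠ x := by
      intro h
      rw [h, dist_self] at hr
      rw [h, dist_self] at h2r
      linarith
    have hvy : v ≠ y := by
      intro h
      rw [h, dist_self] at hr
      rw [hr] at h2r
      linarith
    have hvα : v ∈ α '' Icc 0 1 := image_mono (f := α) hαsub hvB
    have hvg : ∀ t ∈ Icc (0:ℝ) 1, g t ≠ v := by
      intro t ht hgt
      have h1 : dist x v = t * dist x y := by rw [← hgt]; exact hg.dist_left ht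
      have h2 : dist y v = (1 - t) * dist x y := by rw [← hgt]; exact hg.dist_right ht
      have ht2 : t = 1/2 := by
        rw [h1, h2] at hr
        nlinarith
      rw [ht2] at hgt
      exact hmα (hgt ▸ hvα)
    -- `{midpoint, v}` separates x from y
    have hsep : y ∉ connectedComponentIn (({g (1/2), v} : Set X)ᶜ) x := by
      intro hcon
      have hU' : IsOpen (({g (1/2), v} : Set X)ᶜ) :=
        (((Set.finite_singleton v).insert (g (1/2))).isClosed).isOpen_compl
      have hxU' : x ∈ (({g (1/2), v} : Set X)ᶜ) := by
        simp only [mem_compl_iff, mem_insert_iff, mem_singleton_iff]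
        push_neg
        exact ⟨fun h => hmxne h.symm, fun h => hvx h.symm⟩
      obtain ⟨δ, hδc, hδi, hδ0, hδ1, hδU⟩ := exists_arcIn hgeo hU' hxU' hcon hxy
      have hmδ : g (1/2) ∉ δ '' Icc 0 1 := fun h => (hδU h) (mem_insert _ _)
      have hvδ : v ∉ δ '' Icc 0 1 := fun h => (hδU h) (mem_insert_iff.mpr (Or.inr rfl))
      obtain ⟨a₂, b₂, a₂', b₂', J', ha₂0, ha₂c, hcb₂, hb₂1, ha₂'I, hb₂'I, hδa₂', hδb₂',
        hJ'loop, hJ'img⟩ := circle_lemma hg hxy hδc hδi hδ0 hδ1 hmδ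
      have hδsub : uIcc b₂' a₂' ⊆ Icc (0:ℝ) 1 := by
        rw [← uIcc_of_le (zero_le_one (α := ℝ))]
        exact uIcc_subset_uIcc (by rw [uIcc_of_le zero_le_one]; exact hb₂'I)
          (by rw [uIcc_of_le zero_le_one]; exact ha₂'I)
      rcases hv.2 (g (1/2)) J J' hJloop hJ'loop with himgeq | hint
      · -- equal images: but v is on J and not on J'
        have hvJ : v ∈ J '' Icc 0 1 := by
          rw [hJimg]; exact Or.inr hvB
        rw [himgeq, hJ'img] at hvJ
        rcases hvJ with ⟨τ, hτ, hτval⟩ | hvδ'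
        · exact hvg τ ⟨by linarith [hτ.1], by linarith [hτ.2]⟩ hτval
        · exact hvδ (image_mono (f := δ) hδsub hvδ')
      · -- images meet only at the midpoint: but they share a piece of the geodesic
        have ht1 : max a a₂ < 1/2 := max_lt hac ha₂c
        have htJ : g (max a a₂) ∈ J '' Icc 0 1 := by
          rw [hJimg]
          exact Or.inl ⟨max a a₂, ⟨le_max_left a a₂, by linarith⟩, rfl⟩
        have htJ' : g (max a a₂) ∈ J' '' Icc 0 1 := by
          rw [hJ'img]
          exact Or.inl ⟨max a a₂, ⟨le_max_right a a₂, by linarith⟩, rfl⟩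
        have : g (max a a₂) ∈ ({g (1/2)} : Set X) := by
          rw [← hint]; exact ⟨htJ, htJ'⟩
        have := gInj ⟨le_trans ha₂0 (le_max_right a a₂), by linarith⟩ hhalfI
          (mem_singleton_iff.mp this)
        linarith
    refine ⟨g (1/2), v, hmxne, hmyne, hvx, hvy, hsep, ?_⟩
    rw [hmx, hmy, ← hr, min_self]
    rcases min_cases (1/2 * dist x y) (dist x v) with ⟨h, _⟩ | ⟨h, _⟩ <;> rw [h] <;> linarith

end Aux5


section Aux6

variable {X : Type*} [MetricSpace X]

lemma pigeon3 {P Q S : Set X} {u v a' b' : X} (hPQ : P ∩ Q ⊆ {a', b'})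
    (hPS : P ∩ S ⊆ {a', b'}) (hQS : Q ∩ S ⊆ {a', b'})
    (hu : u ∉ ({a', b'} : Set X)) (hv : v ∉ ({a', b'} : Set X)) :
    (u ∉ P ∧ v ∉ P) ∨ (u ∉ Q ∧ v ∉ Q) ∨ (u ∉ S ∧ v ∉ S) := by
  have n1 : ¬(u ∈ P ∧ u ∈ Q) := fun h => hu (hPQ h)
  have n2 : ¬(u ∈ P ∧ u ∈ S) := fun h => hu (hPS h)
  have n3 : ¬(u ∈ Q ∧ u ∈ S) := fun h => hu (hQS h)
  have n4 : ¬(v ∈ P ∧ v ∈ Q) := fun h => hv (hPQ h)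
  have n5 : ¬(v ∈ P ∧ v ∈ S) := fun h => hv (hPS h)
  have n6 : ¬(v ∈ Q ∧ v ∈ S) := fun h => hv (hQS h)
  tauto

lemma theta_inner {x : X} {γ₁ : ℝ → X}
    (hsep : ∀ p q : X, p ≠ q → ∃ u v : X, u ≠ p ∧ u ≠ q ∧ v ≠ p ∧ v ≠ q ∧
      q ∉ connectedComponentIn ({u, v} : Set X)ᶜ p)
    (h₁ : IsLoop γ₁ x)
    {s₁ s₂ : ℝ} (hs₁ : s₁ ∈ Ico (0:ℝ) 1) (hs₂ : s₂ ∈ Ico (0:ℝ) 1) (h12 : s₁ < s₂)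
    {S : Set X} (hSpre : IsPreconnected S) (hS1 : γ₁ s₁ ∈ S) (hS2 : γ₁ s₂ ∈ S)
    (hne : γ₁ s₁ ≠ γ₁ s₂) (hSC : S ∩ γ₁ '' Icc 0 1 ⊆ {γ₁ s₁, γ₁ s₂}) : False := by
  obtain ⟨hγc, hγi, hγ0, them⟩ := h₁
  set P := γ₁ '' Icc s₁ s₂ with hP
  set Q := γ₁ '' Icc s₂ 1 ∪ γ₁ '' Icc 0 s₁ with hQ
  have hPpre : IsPreconnected P :=
    isPreconnected_Icc.image γ₁ (hγc.mono (Icc_subset_Icc hs₁.1 hs₂.2.le))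
  have hQpre : IsPreconnected Q := by
    apply IsPreconnected.union x
    · exact ⟨1, ⟨hs₂.2.le, le_refl 1⟩, them⟩
    · exact ⟨0, ⟨le_refl 0, hs₁.1⟩, hγ0⟩
    · exact isPreconnected_Icc.image γ₁ (hγc.mono (Icc_subset_Icc hs₂.1 (le_refl 1)))
    · exact isPreconnected_Icc.image γ₁ (hγc.mono (Icc_subset_Icc (le_refl 0) hs₁.2.le))
  have hP1 : γ₁ s₁ ∈ P := ⟨s₁, ⟨le_refl s₁, h12.le⟩, rfl⟩
  have hP2 : γ₁ s₂ ∈ P := ⟨s₂, ⟨h12.le, le_refl s₂⟩, rfl⟩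
  have hQ1 : γ₁ s₁ ∈ Q := Or.inr ⟨s₁, ⟨hs₁.1, le_refl s₁⟩, rfl⟩
  have hQ2 : γ₁ s₂ ∈ Q := Or.inl ⟨s₂, ⟨le_refl s₂, hs₂.2.le⟩, rfl⟩
  have hPC : P ⊆ γ₁ '' Icc 0 1 := image_mono (f := γ₁) (Icc_subset_Icc hs₁.1 hs₂.2.le)
  have hQC : Q ⊆ γ₁ '' Icc 0 1 :=
    union_subset (image_mono (f := γ₁) (Icc_subset_Icc hs₂.1 (le_refl 1)))
      (image_mono (f := γ₁) (Icc_subset_Icc (le_refl 0) hs₁.2.le))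
  have hPQ : P ∩ Q ⊆ {γ₁ s₁, γ₁ s₂} := by
    rintro w ⟨⟨σ, hσ, rfl⟩, hwQ⟩
    have hσIco : σ ∈ Ico (0:ℝ) 1 := ⟨le_trans hs₁.1 hσ.1, lt_of_le_of_lt hσ.2 hs₂.2⟩
    rcases hwQ with ⟨τ, hτ, hval⟩ | ⟨τ, hτ, hval⟩
    · by_cases hτ1 : τ = 1
      · have hx : γ₁ σ = γ₁ 0 := by rw [← hval, hτ1, them, ← hγ0]
        have hσ0 : σ = 0 := hγi hσIco ⟨le_refl 0, zero_lt_one⟩ hx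
        have : σ = s₁ := by
          have := hσ.1
          rw [hσ0] at this ⊢
          linarith [hs₁.1]
        rw [this]; exact mem_insert _ _
      · have hτIco : τ ∈ Ico (0:ℝ) 1 :=
          ⟨le_trans hs₂.1 hτ.1, lt_of_le_of_ne hτ.2 hτ1⟩
        have := hγi hτIco hσIco hval
        have hσs₂ : σ = s₂ := le_antisymm hσ.2 (this ▸ hτ.1)
        rw [hσs₂]; exact mem_insert_iff.mpr (Or.inr rfl)
    · have hτIco : τ ∈ Ico (0:ℝ) 1 := ⟨hτ.1, lt_of_le_of_lt hτ.2 hs₁.2⟩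
      have := hγi hτIco hσIco hval
      have hσs₁ : σ = s₁ := le_antisymm (this ▸ hτ.2) hσ.1
      rw [hσs₁]; exact mem_insert _ _
  have hPS : P ∩ S ⊆ {γ₁ s₁, γ₁ s₂} := fun w hw => hSC ⟨hw.2, hPC hw.1⟩
  have hQS : Q ∩ S ⊆ {γ₁ s₁, γ₁ s₂} := fun w hw => hSC ⟨hw.2, hQC hw.1⟩
  obtain ⟨u, v, hu1, hu2, hv1, hv2, hcc⟩ := hsep (γ₁ s₁) (γ₁ s₂) hne
  have hu : u ∉ ({γ₁ s₁, γ₁ s₂} : Set X) := by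
    simp only [mem_insert_iff, mem_singleton_iff]
    push_neg
    exact ⟨hu1, hu2⟩
  have hv : v ∉ ({γ₁ s₁, γ₁ s₂} : Set X) := by
    simp only [mem_insert_iff, mem_singleton_iff]
    push_neg
    exact ⟨hv1, hv2⟩
  have hcompl : ∀ {A : Set X}, u ∉ A → v ∉ A → A ⊆ ({u, v} : Set X)ᶜ := by
    intro A huA hvA w hw
    simp only [mem_compl_iff, mem_insert_iff, mem_singleton_iff]
    push_neg
    exact ⟨fun h => huA (h ▸ hw), fun h => hvA (h ▸ hw)⟩
  rcases pigeon3 hPQ hPS hQS hu hv with ⟨huA, hvA⟩ | ⟨huA, hvA⟩ | ⟨huA, hvA⟩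
  · exact hcc ((hPpre.subset_connectedComponentIn hP1 (hcompl huA hvA)) hP2)
  · exact hcc ((hQpre.subset_connectedComponentIn hQ1 (hcompl huA hvA)) hQ2)
  · exact hcc ((hSpre.subset_connectedComponentIn hS1 (hcompl huA hvA)) hS2)

lemma theta_contra {x y z : X} {γ₁ γ₂ : ℝ → X}
    (hsep : ∀ p q : X, p ≠ q → ∃ u v : X, u ≠ p ∧ u ≠ q ∧ v ≠ p ∧ v ≠ q ∧
      q ∉ connectedComponentIn ({u, v} : Set X)ᶜ p)
    (h₁ : IsLoop γ₁ x) (h₂ : IsLoop γ₂ x)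
    (hy1 : y ∈ γ₁ '' Icc 0 1) (hy2 : y ∈ γ₂ '' Icc 0 1) (hyx : y ≠ x)
    (hz2 : z ∈ γ₂ '' Icc 0 1) (hz1 : z ∉ γ₁ '' Icc 0 1) : False := by
  have hC₁closed : IsClosed (γ₁ '' Icc 0 1) :=
    (isCompact_Icc.image_of_continuousOn h₁.1).isClosed
  have hxC₁ : x ∈ γ₁ '' Icc 0 1 := ⟨0, ⟨le_refl 0, zero_le_one⟩, h₁.2.2.1⟩
  obtain ⟨s₀, hs₀I, hs₀⟩ := hz2
  have hzx : z ≠ x := fun h => hz1 (h ▸ hxC₁)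
  have hs₀Ioo : s₀ ∈ Ioo (0:ℝ) 1 := by
    constructor
    · rcases lt_or_eq_of_le hs₀I.1 with h | h
      · exact h
      · exfalso; apply hzx; rw [← hs₀, ← h, h₂.2.2.1]
    · rcases lt_or_eq_of_le hs₀I.2 with h | h
      · exact h
      · exfalso; apply hzx; rw [← hs₀, h, h₂.2.2.2]
  obtain ⟨t₀, ht₀I, ht₀⟩ := hy2
  have ht₀Ioo : t₀ ∈ Ioo (0:ℝ) 1 := by
    constructor
    · rcases lt_or_eq_of_le ht₀I.1 with h | h
      · exact h
      · exfalso; apply hyx; rw [← ht₀, ← h, h₂.2.2.1]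
    · rcases lt_or_eq_of_le ht₀I.2 with h | h
      · exact h
      · exfalso; apply hyx; rw [← ht₀, h, h₂.2.2.2]
  have h0C : γ₂ 0 ∈ γ₁ '' Icc 0 1 := by rw [h₂.2.2.1]; exact hxC₁
  have h1C : γ₂ 1 ∈ γ₁ '' Icc 0 1 := by rw [h₂.2.2.2]; exact hxC₁
  obtain ⟨a, b, ha0, has₀, hs₀b, hb1, haC, hbC, hIoo⟩ :=
    crossing h₂.1 hC₁closed h0C h1C hs₀Ioo (by rw [hs₀]; exact hz1)
  have ht₀ab : t₀ ≤ a ∨ b ≤ t₀ := by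
    by_contra h
    push_neg at h
    exact hIoo t₀ ⟨h.1, h.2⟩ (by rw [ht₀]; exact hy1)
  have hne_ab : γ₂ a ≠ γ₂ b := by
    intro heq
    rcases lt_or_eq_of_le hb1 with hblt | hbeq
    · have := h₂.2.1 ⟨ha0, by linarith⟩ ⟨by linarith, hblt⟩ heq
      linarith
    · have ha_pos : 0 < a := by
        rcases ht₀ab with h | h
        · linarith [ht₀Ioo.1]
        · linarith [ht₀Ioo.2, hbeq ▸ h]
      have hgb : γ₂ b = γ₂ 0 := by rw [hbeq, h₂.2.2.2, ← h₂.2.2.1]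
      rw [hgb] at heq
      have := h₂.2.1 ⟨ha0, by linarith⟩ ⟨le_refl 0, zero_lt_one⟩ heq
      linarith
  have hIco : ∀ w, w ∈ γ₁ '' Icc 0 1 → ∃ s, s ∈ Ico (0:ℝ) 1 ∧ γ₁ s = w := by
    rintro w ⟨s, hs, rfl⟩
    by_cases h : s = 1
    · refine ⟨0, ⟨le_refl 0, zero_lt_one⟩, ?_⟩
      rw [h, h₁.2.2.2, ← h₁.2.2.1]
    · exact ⟨s, ⟨hs.1, lt_of_le_of_ne hs.2 h⟩, rfl⟩
  obtain ⟨s₁, hs₁Ico, hs₁eq⟩ := hIco _ haC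
  obtain ⟨s₂, hs₂Ico, hs₂eq⟩ := hIco _ hbC
  have hs₁₂ : s₁ ≠ s₂ := fun h => hne_ab (by rw [← hs₁eq, ← hs₂eq, h])
  have hSpre : IsPreconnected (γ₂ '' Icc a b) :=
    isPreconnected_Icc.image γ₂ (h₂.1.mono (Icc_subset_Icc ha0 hb1))
  have hSa : γ₂ a ∈ γ₂ '' Icc a b := ⟨a, ⟨le_refl a, by linarith⟩, rfl⟩
  have hSb : γ₂ b ∈ γ₂ '' Icc a b := ⟨b, ⟨by linarith, le_refl b⟩, rfl⟩
  have hSC : γ₂ '' Icc a b ∩ γ₁ '' Icc 0 1 ⊆ {γ₂ a, γ₂ b} := by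
    rintro w ⟨⟨τ, hτ, rfl⟩, hwC⟩
    rcases lt_or_eq_of_le hτ.1 with h' | h'
    · rcases lt_or_eq_of_le hτ.2 with h'' | h''
      · exact absurd hwC (hIoo τ ⟨h', h''⟩)
      · rw [h'']; exact mem_insert_iff.mpr (Or.inr rfl)
    · rw [← h']; exact mem_insert _ _
  rcases lt_or_gt_of_ne hs₁₂ with h | h
  · refine theta_inner hsep h₁ hs₁Ico hs₂Ico h hSpre (hs₁eq ▸ hSa) (hs₂eq ▸ hSb) ?_ ?_
    · rw [hs₁eq, hs₂eq]; exact hne_ab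
    · rw [hs₁eq, hs₂eq]; exact hSC
  · refine theta_inner hsep h₁ hs₂Ico hs₁Ico h hSpre (hs₂eq ▸ hSb) (hs₁eq ▸ hSa) ?_ ?_
    · rw [hs₁eq, hs₂eq]; exact hne_ab.symm
    · rw [hs₁eq, hs₂eq, pair_comm]; exact hSC

lemma sep_to_vern (hgeo : IsGeodesicSpace X)
    (hsep : ∀ p q : X, p ≠ q → ∃ u v : X, u ≠ p ∧ u ≠ q ∧ v ≠ p ∧ v ≠ q ∧
      q ∉ connectedComponentIn ({u, v} : Set X)ᶜ p) : IsVernationTree X := by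
  refine ⟨hgeo, ?_⟩
  intro x γ₁ γ₂ h₁ h₂
  by_contra hcon
  push_neg at hcon
  obtain ⟨hne, hint⟩ := hcon
  have hx1 : x ∈ γ₁ '' Icc 0 1 := ⟨0, ⟨le_refl 0, zero_le_one⟩, h₁.2.2.1⟩
  have hx2 : x ∈ γ₂ '' Icc 0 1 := ⟨0, ⟨le_refl 0, zero_le_one⟩, h₂.2.2.1⟩
  have hy : ∃ y, y ∈ γ₁ '' Icc 0 1 ∩ γ₂ '' Icc 0 1 ∧ y ≠ x := by
    by_contra h
    push_neg at h
    apply hint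
    apply Subset.antisymm
    · intro w hw
      exact h w hw
    · intro w hw
      rw [mem_singleton_iff] at hw
      rw [hw]
      exact ⟨hx1, hx2⟩
  obtain ⟨y, ⟨hy1, hy2⟩, hyx⟩ := hy
  by_cases hzc : γ₂ '' Icc 0 1 ⊆ γ₁ '' Icc 0 1
  · have h' : ¬ (γ₁ '' Icc 0 1 ⊆ γ₂ '' Icc 0 1) := fun h => hne (Subset.antisymm h hzc)
    obtain ⟨z, hz1, hz2⟩ := not_subset.mp h'
    exact theta_contra hsep h₂ h₁ hy2 hy1 hyx hz1 hz2
  · obtain ⟨z, hz2, hz1⟩ := not_subset.mp hzc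
    exact theta_contra hsep h₁ h₂ hy1 hy2 hyx hz2 hz1

end Aux6

theorem statement18 (X : Type*) [MetricSpace X] [CompactSpace X]
    (hgeo : IsGeodesicSpace X) :
    (IsVernationTree X ↔
      ∀ x y : X, x ≠ y → ∃ u v : X, u ≠ x ∧ u ≠ y ∧ v ≠ x ∧ v ≠ y ∧
        y ∉ connectedComponentIn ({u, v} : Set X)ᶜ x) ∧
    (IsVernationTree X ↔
      ∀ x y : X, x ≠ y → ∃ u v : X, u ≠ x ∧ u ≠ y ∧ v ≠ x ∧ v ≠ y ∧
        y ∉ connectedComponentIn ({u, v} : Set X)ᶜ x ∧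
        dist x y ≤ 2 * min (min (dist x u) (dist x v)) (min (dist y u) (dist y v))) := by
  constructor
  · constructor
    · intro hv x y hxy
      obtain ⟨u, v, h1, h2, h3, h4, h5, _⟩ := vern_to_sep3 hgeo hv x y hxy
      exact ⟨u, v, h1, h2, h3, h4, h5⟩
    · intro hsep
      exact sep_to_vern hgeo hsep
  · constructor
    · intro hv
      exact vern_to_sep3 hgeo hv
    · intro hsep
      apply sep_to_vern hgeo
      intro p q hpq
      obtain ⟨u, v, h1, h2, h3, h4, h5, _⟩ := hsep p q hpq
      exact ⟨u, v, h1, h2, h3, h4, h5⟩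
end
end
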